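/- arXiv:2008.08109 — 5 statements merged into one kernel-verified Lean document; each statement's English description precedes it below -/
import Mathlib

section
/- Let W : [0,1]×[0,1] → [0,1] be a measurable symmetric graphon kernel, S a finite state set, and Q a rate matrix function. Suppose u : [0,∞)×[0,1] → ℝ^S is such that u(t,·) is continuous for every t ≥ 0, t ↦ u(t,x) is differentiable for every x, and ∂_t u(t,x) = Q((𝕎 u(t,·))(x)) u(t,x) for all t ≥ 0 and x ∈ [0,1]. If u(0,x) ∈ Δ for all x ∈ [0,1], then u(t,x) ∈ Δ for all t ≥ 0 and all x ∈ [0,1]. -/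
open MeasureTheory Set

/-- The graphon integral operator applied componentwise to a vector-valued function. -/
noncomputable def graphonOpV {S : Type} [Fintype S] (W : ℝ → ℝ → ℝ)
    (f : ℝ → S → ℝ) (x : ℝ) : S → ℝ :=
  fun s => ∫ y in Icc (0:ℝ) 1, W x y * f y s

/-- The ℓ¹ norm on ℝ^S. -/
noncomputable def l1Norm {S : Type} [Fintype S] (v : S → ℝ) : ℝ := ∑ s, |v s|

/-- The operator norm on S×S matrices induced by the ℓ¹ norm. -/
noncomputable def matL1Norm {S : Type} [Fintype S] (A : Matrix S S ℝ) : ℝ :=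
  sSup { r | ∃ v : S → ℝ, l1Norm v = 1 ∧ r = l1Norm (A.mulVec v) }

/-- The probability simplex Δ in ℝ^S. -/
def probSimplex (S : Type) [Fintype S] : Set (S → ℝ) :=
  {v | (∀ s, 0 ≤ v s) ∧ ∑ s, v s = 1}

/-- A rate matrix function with Lipschitz constant `L`. -/
def IsRateMatrixFun {S : Type} [Fintype S] (Q : (S → ℝ) → Matrix S S ℝ) (L : ℝ) : Prop :=
  (∀ φ : S → ℝ, ∀ s s' : S, s ≠ s' → 0 ≤ Q φ s s') ∧
  (∀ φ : S → ℝ, ∀ s' : S, ∑ s, Q φ s s' = 0) ∧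
  (∀ φ ψ : S → ℝ, matL1Norm (Q φ - Q ψ) ≤ L * l1Norm (fun s => φ s - ψ s))

/-- ℓ¹ contraction for `I + h A` when `A` has nonneg off-diagonal entries
and zero column sums, and `h` is small. -/
lemma l1_contract_aux {S : Type} [Fintype S] [DecidableEq S] (A : Matrix S S ℝ)
    (hoff : ∀ s s', s ≠ s' → 0 ≤ A s s') (hcol : ∀ s', ∑ s, A s s' = 0)
    (v : S → ℝ) (h : ℝ) (hh0 : 0 ≤ h) (hh : ∀ s, h * |A s s| ≤ 1) :
    ∑ s, |v s + h * A.mulVec v s| ≤ ∑ s, |v s| := by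
  set M : Matrix S S ℝ := fun s s' => (if s = s' then 1 else 0) + h * A s s' with hM
  have hMnn : ∀ s s', 0 ≤ M s s' := by
    intro s s'
    by_cases hss : s = s'
    · subst hss
      have h1 : -(h * |A s s|) ≤ h * A s s := by
        have := neg_abs_le (A s s)
        nlinarith
      simp only [hM, eq_self_iff_true, if_true]
      have := hh s
      linarith
    · simp only [hM, if_neg hss]
      have := hoff s s' hss
      positivity
  have hrow : ∀ s, v s + h * A.mulVec v s = ∑ s', M s s' * v s' := by
    intro s
    simp [hM, add_mul, ite_mul, one_mul, zero_mul, Finset.sum_add_distrib,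
      Finset.sum_ite_eq, Finset.sum_ite_eq', Matrix.mulVec, dotProduct,
      Finset.mul_sum, mul_assoc]
  have hcolM : ∀ s', ∑ s, M s s' = 1 := by
    intro s'
    simp [hM, Finset.sum_add_distrib, ← Finset.mul_sum, hcol s', mul_zero, add_zero,
      Finset.sum_ite_eq, Finset.sum_ite_eq']
  calc ∑ s, |v s + h * A.mulVec v s| = ∑ s, |∑ s', M s s' * v s'| := by
        simp only [hrow]
    _ ≤ ∑ s, ∑ s', M s s' * |v s'| := by
        refine Finset.sum_le_sum fun s _ => ?_
        refine (Finset.abs_sum_le_sum_abs _ _).trans (le_of_eq ?_)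
        refine Finset.sum_congr rfl fun s' _ => ?_
        rw [abs_mul, abs_of_nonneg (hMnn s s')]
    _ = ∑ s', (∑ s, M s s') * |v s'| := by
        rw [Finset.sum_comm]
        simp [Finset.sum_mul]
    _ = ∑ s, |v s| := by simp [hcolM]

/-- for a measurable symmetric graphon kernel and a rate matrix function,
any solution of the graphon mean-field equation starting in the simplex Δ stays in Δ. -/
theorem stmt1 {S : Type} [Fintype S] (W : ℝ → ℝ → ℝ) (L_Q : ℝ)
    (Q : (S → ℝ) → Matrix S S ℝ)
    (hWmeas : Measurable (fun p : ℝ × ℝ => W p.1 p.2))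
    (hWsymm : ∀ x ∈ Icc (0:ℝ) 1, ∀ y ∈ Icc (0:ℝ) 1, W x y = W y x)
    (hW01 : ∀ x ∈ Icc (0:ℝ) 1, ∀ y ∈ Icc (0:ℝ) 1, W x y ∈ Icc (0:ℝ) 1)
    (hQ : IsRateMatrixFun Q L_Q)
    (u : ℝ → ℝ → S → ℝ)
    (hucont : ∀ t : ℝ, 0 ≤ t → ContinuousOn (u t) (Icc (0:ℝ) 1))
    (hudiff : ∀ x ∈ Icc (0:ℝ) 1, ∀ t : ℝ, 0 ≤ t → DifferentiableAt ℝ (fun τ => u τ x) t)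
    (hueq : ∀ t : ℝ, 0 ≤ t → ∀ x ∈ Icc (0:ℝ) 1,
      HasDerivAt (fun τ => u τ x) ((Q (graphonOpV W (u t) x)).mulVec (u t x)) t)
    (hu0 : ∀ x ∈ Icc (0:ℝ) 1, u 0 x ∈ probSimplex S) :
    ∀ t : ℝ, 0 ≤ t → ∀ x ∈ Icc (0:ℝ) 1, u t x ∈ probSimplex S := by
  classical
  obtain ⟨hQoff, hQcol, -⟩ := hQ
  intro t ht x hx
  set v : ℝ → S → ℝ := fun τ => u τ x with hv
  set A : ℝ → Matrix S S ℝ := fun τ => Q (graphonOpV W (u τ) x) with hA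
  have hderiv : ∀ τ, 0 ≤ τ → HasDerivAt v ((A τ).mulVec (v τ)) τ := fun τ hτ =>
    hueq τ hτ x hx
  have hderivs : ∀ τ, 0 ≤ τ → ∀ s, HasDerivAt (fun z => v z s) ((A τ).mulVec (v τ) s) τ :=
    fun τ hτ s => hasDerivAt_pi.1 (hderiv τ hτ) s
  -- the sum of the components of the vector field vanishes
  have hsumderiv : ∀ τ, ∑ s, (A τ).mulVec (v τ) s = 0 := by
    intro τ
    simp only [Matrix.mulVec, dotProduct]
    rw [Finset.sum_comm]
    refine Finset.sum_eq_zero fun s' _ => ?_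
    rw [← Finset.sum_mul, hQcol, zero_mul]
  -- Step 1: the sum of the components is constant
  have hg : ∀ τ ∈ Icc 0 t, ∑ s, v τ s = ∑ s, v 0 s := by
    refine constant_of_has_deriv_right_zero ?_ ?_
    · intro τ hτ
      exact (HasDerivAt.fun_sum fun s _ => hderivs τ hτ.1 s).continuousAt.continuousWithinAt
    · intro τ hτ
      have h1 := HasDerivAt.fun_sum (u := Finset.univ) fun s _ => hderivs τ hτ.1 s
      rw [hsumderiv τ] at h1
      exact h1.hasDerivWithinAt
  -- Step 2: the ℓ¹ norm is nonincreasing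
  have hN : ∀ τ ∈ Icc 0 t, ∑ s, |v τ s| ≤ ∑ s, |v 0 s| := by
    refine image_le_of_liminf_slope_right_le_deriv_boundary (B := fun _ => ∑ s, |v 0 s|)
      (B' := fun _ => 0) ?_ le_rfl continuousOn_const
      (fun τ _ => hasDerivWithinAt_const _ _ _) ?_
    · -- continuity of the ℓ¹ norm along the trajectory
      intro τ hτ
      have hca : ContinuousAt (fun z => ∑ s, |v z s|) τ :=
        tendsto_finset_sum Finset.univ
          fun s _ => ((hderivs τ hτ.1 s).continuousAt.abs : ContinuousAt _ τ)
      exact hca.continuousWithinAt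
    · -- the right liminf of the slopes is ≤ 0 < r
      intro τ hτ r hr
      set w : S → ℝ := (A τ).mulVec (v τ) with hw
      set h₀ : ℝ := (1 + ∑ s, |A τ s s|)⁻¹ with hh₀
      have hpos : 0 < 1 + ∑ s, |A τ s s| := by positivity
      have hh₀pos : 0 < h₀ := inv_pos.2 hpos
      -- eventual bound on the slope of N by the ℓ¹ distance of the slopes to the derivative
      have hslope : ∀ᶠ z in nhdsWithin τ (Ioi τ),
          slope (fun z => ∑ s, |v z s|) τ z ≤ ∑ s, |slope (fun z => v z s) τ z - w s| := by
        filter_upwards [Ioc_mem_nhdsGT_of_mem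
          (Set.left_mem_Ico.2 (lt_add_of_pos_right τ hh₀pos))] with z hz
        obtain ⟨hz1, hz2⟩ := hz
        have hzpos : 0 < z - τ := sub_pos.2 hz1
        have hcontr : ∑ s, |v τ s + (z - τ) * w s| ≤ ∑ s, |v τ s| := by
          refine l1_contract_aux (A τ) (fun s s' hss => hQoff _ s s' hss)
            (fun s' => hQcol _ s') (v τ) (z - τ) hzpos.le ?_
          intro s
          have h1 : z - τ ≤ h₀ := by linarith
          have h2 : |A τ s s| ≤ 1 + ∑ s', |A τ s' s'| := by
            have h3 : |A τ s s| ≤ ∑ s', |A τ s' s'| :=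
              Finset.single_le_sum (f := fun s' => |A τ s' s'|)
                (fun s' _ => abs_nonneg _) (Finset.mem_univ s)
            linarith
          calc (z - τ) * |A τ s s| ≤ h₀ * |A τ s s| :=
                mul_le_mul_of_nonneg_right h1 (abs_nonneg _)
            _ ≤ h₀ * (1 + ∑ s', |A τ s' s'|) := mul_le_mul_of_nonneg_left h2 hh₀pos.le
            _ = 1 := inv_mul_cancel₀ hpos.ne'
        have key : ∑ s, |v z s| ≤ ∑ s, |v τ s| + ∑ s, |v z s - v τ s - (z - τ) * w s| := by
          have e1 : ∀ s : S, |v z s| ≤ |v τ s + (z - τ) * w s|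
              + |v z s - v τ s - (z - τ) * w s| := by
            intro s
            have h4 := abs_add_le (v τ s + (z - τ) * w s) (v z s - v τ s - (z - τ) * w s)
            have h5 : v τ s + (z - τ) * w s + (v z s - v τ s - (z - τ) * w s) = v z s := by
              ring
            rw [h5] at h4
            exact h4
          calc ∑ s, |v z s|
              ≤ ∑ s, (|v τ s + (z - τ) * w s| + |v z s - v τ s - (z - τ) * w s|) :=
                Finset.sum_le_sum fun s _ => e1 s
            _ = (∑ s, |v τ s + (z - τ) * w s|) + ∑ s, |v z s - v τ s - (z - τ) * w s| :=
                Finset.sum_add_distrib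
            _ ≤ _ := add_le_add_left hcontr _
        rw [slope_def_field, div_le_iff₀ hzpos]
        have e3 : (∑ s, |slope (fun z => v z s) τ z - w s|) * (z - τ)
            = ∑ s, |v z s - v τ s - (z - τ) * w s| := by
          rw [Finset.sum_mul]
          refine Finset.sum_congr rfl fun s _ => ?_
          rw [slope_def_field]
          rw [show (v z s - v τ s) / (z - τ) - w s
              = (v z s - v τ s - (z - τ) * w s) / (z - τ) by field_simp]
          rw [abs_div, abs_of_pos hzpos, div_mul_cancel₀ _ hzpos.ne']
        rw [e3]
        linarith
      -- the bound tends to 0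
      have htend : Filter.Tendsto (fun z => ∑ s, |slope (fun z => v z s) τ z - w s|)
          (nhdsWithin τ (Ioi τ)) (nhds 0) := by
        have h0 : (0 : ℝ) = ∑ s : S, (0 : ℝ) := by simp
        rw [h0]
        refine tendsto_finset_sum Finset.univ fun s _ => ?_
        have hts : Filter.Tendsto (slope (fun z => v z s) τ) (nhdsWithin τ (Ioi τ))
            (nhds (w s)) := by
          refine Filter.Tendsto.mono_left
            (hasDerivAt_iff_tendsto_slope.1 (hderivs τ hτ.1 s)) ?_
          exact nhdsWithin_mono τ fun z hz => ne_of_gt hz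
        have h7 : Filter.Tendsto (fun z => |slope (fun z => v z s) τ z - w s|)
            (nhdsWithin τ (Ioi τ)) (nhds |w s - w s|) :=
          (hts.sub tendsto_const_nhds).abs
        simpa using h7
      have hev : ∀ᶠ z in nhdsWithin τ (Ioi τ),
          (∑ s, |slope (fun z => v z s) τ z - w s|) < r := htend (Iio_mem_nhds hr)
      exact ((hslope.and hev).mono fun z hz => lt_of_le_of_lt hz.1 hz.2).frequently
  -- conclude
  have hmem := hu0 x hx
  obtain ⟨h0nn, h0sum⟩ := hmem
  have h0abs : ∑ s, |v 0 s| = 1 := by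
    rw [← h0sum]
    exact Finset.sum_congr rfl fun s _ => abs_of_nonneg (h0nn s)
  have hsum1 : ∑ s, v t s = 1 := by
    rw [hg t ⟨ht, le_rfl⟩]
    exact h0sum
  have habs1 : ∑ s, |v t s| ≤ 1 := h0abs ▸ hN t ⟨ht, le_rfl⟩
  have hzero : ∑ s, (|v t s| - v t s) = 0 := by
    have hle : ∑ s, (|v t s| - v t s) ≤ 0 := by
      rw [Finset.sum_sub_distrib, hsum1]
      linarith
    have hge : 0 ≤ ∑ s, (|v t s| - v t s) :=
      Finset.sum_nonneg fun s _ => sub_nonneg.2 (le_abs_self _)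
    linarith
  refine ⟨fun s => ?_, hsum1⟩
  have h6 := (Finset.sum_eq_zero_iff_of_nonneg
    (fun s _ => sub_nonneg.2 (le_abs_self (v t s)))).1 hzero s (Finset.mem_univ s)
  show 0 ≤ v t s
  have habs : |v t s| = v t s := by linarith
  rw [← habs]
  exact abs_nonneg _
end

section
/- Let S be a finite set and let A : [0,∞) → ℝ^{S×S} be a continuous matrix-valued function such that for every t ≥ 0 the off-diagonal entries satisfy A(t)_{ss'} ≥ 0 for all s ≠ s' and every column sums to zero, ∑_{s∈S} A(t)_{ss'} = 0 for all s'. If p : [0,∞) → ℝ^S is differentiable with p'(t) = A(t) p(t) for all t ≥ 0 and p(0) ∈ Δ, then p(t) ∈ Δ for all t ≥ 0. -/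
open MeasureTheory Set

set_option maxHeartbeats 1000000 in
/-- for a continuous time-dependent rate matrix `A(t)` (nonnegative
off-diagonal entries, columns summing to zero), any solution of the Kolmogorov forward
equation `p' = A(t) p` starting in the simplex Δ stays in Δ. -/
theorem stmt2 {S : Type} [Fintype S] (A : ℝ → Matrix S S ℝ)
    (hAcont : ContinuousOn (fun t => A t) (Ici (0:ℝ)))
    (hAoffdiag : ∀ t : ℝ, 0 ≤ t → ∀ s s' : S, s ≠ s' → 0 ≤ A t s s')
    (hAcolsum : ∀ t : ℝ, 0 ≤ t → ∀ s' : S, ∑ s, A t s s' = 0)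
    (p : ℝ → S → ℝ)
    (hp : ∀ t : ℝ, 0 ≤ t → HasDerivAt p ((A t).mulVec (p t)) t)
    (hp0 : p 0 ∈ probSimplex S) :
    ∀ t : ℝ, 0 ≤ t → p t ∈ probSimplex S := by
  have hpcomp : ∀ (s : S) (t : ℝ), 0 ≤ t →
      HasDerivAt (fun t => p t s) ((A t).mulVec (p t) s) t := by
    intro s t ht
    exact (ContinuousLinearMap.proj (R := ℝ) (φ := fun _ : S => ℝ) s).hasFDerivAt.comp_hasDerivAt
      t (hp t ht)
  intro T hT
  constructor
  · -- nonnegativity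
    intro s₀
    -- a bound on the row sums of A on [0, T]
    have hrowcont : ContinuousOn (fun t => ∑ s, |∑ s', A t s s'|) (Icc (0:ℝ) T) := by
      apply ContinuousOn.mono _ (Icc_subset_Ici_self)
      apply continuousOn_finset_sum
      intro s _
      apply ContinuousOn.abs
      apply continuousOn_finset_sum
      intro s' _
      exact ((continuous_apply s').comp (continuous_apply s)).comp_continuousOn hAcont
    obtain ⟨x, hx, hmax⟩ := isCompact_Icc.exists_isMaxOn (nonempty_Icc.mpr hT) hrowcont
    set C : ℝ := (∑ s, |∑ s', A x s s'|) + 1 with hCdef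
    have hC : ∀ t ∈ Icc (0:ℝ) T, ∀ s : S, ∑ s', A t s s' < C := by
      intro t ht s
      have h1 : ∑ s', A t s s' ≤ |∑ s', A t s s'| := le_abs_self _
      have h2 : |∑ s', A t s s'| ≤ ∑ u, |∑ s', A t u s'| :=
        Finset.single_le_sum (f := fun u => |∑ s', A t u s'|)
          (fun u _ => abs_nonneg _) (Finset.mem_univ s)
      have h3 := hmax ht
      simp only [mem_setOf_eq] at h3
      have : (∑ u, |∑ s', A t u s'|) ≤ ∑ u, |∑ s', A x u s'| := h3
      linarith
    -- the key positivity claim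
    have key : ∀ ε : ℝ, 0 < ε → ∀ t ∈ Icc (0:ℝ) T, ∀ s : S,
        0 < p t s + ε * Real.exp (C * t) := by
      intro ε hε
      by_contra hcon
      push_neg at hcon
      obtain ⟨t₁, ht₁, s₁, hs₁⟩ := hcon
      set E : Set ℝ := ⋃ s : S, (Icc (0:ℝ) T ∩
        (fun t => p t s + ε * Real.exp (C * t)) ⁻¹' Iic 0) with hEdef
      have hfcont : ∀ s : S, ContinuousOn (fun t => p t s + ε * Real.exp (C * t))
          (Icc (0:ℝ) T) := by
        intro s
        apply ContinuousOn.add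
        · intro t ht
          exact (hpcomp s t ht.1).continuousAt.continuousWithinAt
        · exact (continuous_const.mul (Real.continuous_exp.comp
            (continuous_const.mul continuous_id))).continuousOn
      have hEclosed : IsClosed E :=
        isClosed_iUnion_of_finite fun s =>
          (hfcont s).preimage_isClosed_of_isClosed isClosed_Icc isClosed_Iic
      have hEne : E.Nonempty := ⟨t₁, mem_iUnion.mpr ⟨s₁, ht₁, hs₁⟩⟩
      have hEbdd : BddBelow E := ⟨0, fun y hy => by
        obtain ⟨s, hs⟩ := mem_iUnion.mp hy; exact hs.1.1⟩
      have hEsub : E ⊆ Icc 0 T := fun y hy => (mem_iUnion.mp hy).choose_spec.1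
      set t₀ : ℝ := sInf E with ht₀def
      have ht₀E : t₀ ∈ E := hEclosed.csInf_mem hEne hEbdd
      obtain ⟨s₀', ht₀Icc', hs₀'⟩ : ∃ s : S, t₀ ∈ Icc (0:ℝ) T ∧
          p t₀ s + ε * Real.exp (C * t₀) ≤ 0 := by
        obtain ⟨s, hs⟩ := mem_iUnion.mp ht₀E
        exact ⟨s, hs.1, hs.2⟩
      have ht₀Icc : t₀ ∈ Icc (0:ℝ) T := ht₀Icc'
      have ht₀pos : 0 < t₀ := by
        rcases lt_or_eq_of_le ht₀Icc.1 with h | h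
        · exact h
        · exfalso
          have := hp0.1 s₀'
          rw [← h] at hs₀'
          simp only [mul_zero, Real.exp_zero, mul_one] at hs₀'
          linarith
      have hpre : ∀ t : ℝ, 0 ≤ t → t < t₀ → ∀ s : S,
          0 < p t s + ε * Real.exp (C * t) := by
        intro t ht htlt s
        by_contra h
        push_neg at h
        have htE : t ∈ E := mem_iUnion.mpr ⟨s, ⟨ht, le_trans htlt.le ht₀Icc.2⟩, h⟩
        exact absurd (csInf_le hEbdd htE) (not_le.mpr htlt)
      have hnonneg : ∀ s : S, 0 ≤ p t₀ s + ε * Real.exp (C * t₀) := by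
        intro s
        have htend : Filter.Tendsto (fun t => p t s + ε * Real.exp (C * t))
            (nhdsWithin t₀ (Iio t₀)) (nhds (p t₀ s + ε * Real.exp (C * t₀))) := by
          apply Filter.Tendsto.mono_left _ nhdsWithin_le_nhds
          exact ((hpcomp s t₀ ht₀Icc.1).continuousAt.add
            ((continuous_const.mul (Real.continuous_exp.comp
              (continuous_const.mul continuous_id))).continuousAt)).tendsto
        refine ge_of_tendsto htend ?_
        filter_upwards [Ioo_mem_nhdsLT_of_mem (⟨ht₀pos, le_refl t₀⟩ : t₀ ∈ Ioc 0 t₀)]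
          with t ht
        exact (hpre t ht.1.le ht.2 s).le
      have hs₀eq : p t₀ s₀' + ε * Real.exp (C * t₀) = 0 :=
        le_antisymm hs₀' (hnonneg s₀')
      -- the derivative at t₀
      set e : ℝ := Real.exp (C * t₀) with hedef
      have hepos : 0 < e := Real.exp_pos _
      set D : ℝ := (A t₀).mulVec (p t₀) s₀' + ε * (e * C) with hDdef
      have hderiv : HasDerivAt (fun t => p t s₀' + ε * Real.exp (C * t)) D t₀ := by
        have h1 : HasDerivAt (fun t : ℝ => C * t) C t₀ := by
          simpa using (hasDerivAt_id t₀).const_mul C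
        have h2 : HasDerivAt (fun t => Real.exp (C * t)) (e * C) t₀ := h1.exp
        exact (hpcomp s₀' t₀ ht₀Icc.1).add (h2.const_mul ε)
      have hDpos : 0 < D := by
        have hrow : ∑ s', A t₀ s₀' s' < C := hC t₀ ht₀Icc s₀'
        have hS1 : 0 ≤ ∑ s', A t₀ s₀' s' * (p t₀ s' + ε * e) := by
          apply Finset.sum_nonneg
          intro s' _
          rcases eq_or_ne s₀' s' with h | h
          · rw [← h, hs₀eq, mul_zero]
          · exact mul_nonneg (hAoffdiag t₀ ht₀Icc.1 s₀' s' h) (hnonneg s')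
        have hexpand : (A t₀).mulVec (p t₀) s₀' =
            (∑ s', A t₀ s₀' s' * (p t₀ s' + ε * e)) - (ε * e) * ∑ s', A t₀ s₀' s' := by
          have hterm : ∀ s' : S, A t₀ s₀' s' * (p t₀ s' + ε * e) =
              A t₀ s₀' s' * p t₀ s' + (ε * e) * A t₀ s₀' s' := fun s' => by ring
          simp only [hterm, Finset.sum_add_distrib, ← Finset.mul_sum, Matrix.mulVec,
            dotProduct]
          ring
        rw [hDdef, hexpand]
        nlinarith [mul_pos (mul_pos hε hepos) (sub_pos.mpr hrow)]
      -- contradiction via the left slope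
      have hslope : Filter.Tendsto (slope (fun t => p t s₀' + ε * Real.exp (C * t)) t₀)
          (nhdsWithin t₀ (Iio t₀ \ {t₀})) (nhds D) :=
        hasDerivWithinAt_iff_tendsto_slope.mp (hderiv.hasDerivWithinAt (s := Iio t₀))
      have hID : Iio t₀ \ {t₀} = Iio t₀ := by
        ext y; simp (config := {contextual := true}) [lt_irrefl, ne_of_lt]
      rw [hID] at hslope
      have hDle : D ≤ 0 := by
        refine le_of_tendsto hslope ?_
        filter_upwards [Ioo_mem_nhdsLT_of_mem (⟨ht₀pos, le_refl t₀⟩ : t₀ ∈ Ioc 0 t₀)]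
          with t ht
        have hft : 0 < p t s₀' + ε * Real.exp (C * t) := hpre t ht.1.le ht.2 s₀'
        have : slope (fun t => p t s₀' + ε * Real.exp (C * t)) t₀ t =
            (p t s₀' + ε * Real.exp (C * t)) / (t - t₀) := by
          rw [slope_def_field, show p t₀ s₀' + ε * Real.exp (C * t₀) = 0 from hs₀eq,
            sub_zero]
        rw [this]
        apply div_nonpos_of_nonneg_of_nonpos hft.le
        linarith [ht.2]
      linarith
    -- conclude nonnegativity at T
    by_contra hneg
    push_neg at hneg
    have hεpos : 0 < -(p T s₀) / Real.exp (C * T) :=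
      div_pos (by linarith) (Real.exp_pos _)
    have := key _ hεpos T ⟨hT, le_refl T⟩ s₀
    rw [div_mul_cancel₀ _ (ne_of_gt (Real.exp_pos (C * T)))] at this
    linarith
  · -- the sum is conserved
    have hg : ∀ t : ℝ, 0 ≤ t → HasDerivAt (fun t => ∑ s, p t s) 0 t := by
      intro t ht
      have h1 : HasDerivAt (fun t => ∑ s, p t s) (∑ s, (A t).mulVec (p t) s) t :=
        HasDerivAt.fun_sum (fun s _ => hpcomp s t ht)
      have h2 : ∑ s, (A t).mulVec (p t) s = 0 := by
        simp only [Matrix.mulVec, dotProduct]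
        rw [Finset.sum_comm]
        apply Finset.sum_eq_zero
        intro s' _
        rw [← Finset.sum_mul, hAcolsum t ht s', zero_mul]
      rwa [h2] at h1
    have hineq := Convex.norm_image_sub_le_of_norm_hasDerivWithin_le
      (f := fun t => ∑ s, p t s) (f' := fun _ => (0:ℝ)) (C := 0)
      (fun x hx => (hg x hx).hasDerivWithinAt)
      (fun x _ => by simp) (convex_Ici 0) (self_mem_Ici) hT
    rw [zero_mul] at hineq
    have heq : ∑ s, p T s = ∑ s, p 0 s := by
      have := norm_sub_eq_zero_iff.mp (le_antisymm hineq (norm_nonneg _))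
      exact this
    rw [heq]
    exact hp0.2
end

section
/- Let S be a finite state set, Q a rate matrix function, M a positive integer, and let w_{kl} ∈ [0,1] for 1 ≤ k,l ≤ M satisfy w_{kl} = w_{lk}. Then for all initial conditions v_1(0),…,v_M(0) ∈ Δ, the system of ODEs d/dt v_k(t) = Q( (1/M) ∑_{l=1}^M w_{kl} v_l(t) ) v_k(t), k = 1,…,M, has a unique global solution on [0,∞), and this solution satisfies v_k(t) ∈ Δ for all t ≥ 0 and all k. -/
open MeasureTheory Set
open Topology Filter

/-- `v` solves the discretized mean-field ODE system
`d/dt v_k(t) = Q((1/M) ∑_l w_{kl} v_l(t)) v_k(t)` with initial condition `v₀`. -/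
def IsDiscreteMFSolution {S : Type} [Fintype S] {M : ℕ}
    (Q : (S → ℝ) → Matrix S S ℝ) (w : Fin M → Fin M → ℝ)
    (v₀ : Fin M → S → ℝ) (v : ℝ → Fin M → S → ℝ) : Prop :=
  v 0 = v₀ ∧
  ∀ t : ℝ, 0 ≤ t → ∀ k : Fin M,
    HasDerivAt (fun τ => v τ k)
      ((Q (fun s => (1 / (M:ℝ)) * ∑ l, w k l * v t l s)).mulVec (v t k)) t


set_option linter.unusedSectionVars false
set_option maxHeartbeats 1000000

section helpers
variable {S : Type} [Fintype S]

lemma l1Norm_nonneg (v : S → ℝ) : 0 ≤ l1Norm v :=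
  Finset.sum_nonneg fun _ _ => abs_nonneg _

lemma abs_le_l1Norm (v : S → ℝ) (s : S) : |v s| ≤ l1Norm v := by
  unfold l1Norm
  exact Finset.single_le_sum (f := fun s => |v s|) (fun _ _ => abs_nonneg _) (Finset.mem_univ s)

lemma l1Norm_le_card_mul_norm (v : S → ℝ) :
    l1Norm v ≤ (Fintype.card S : ℝ) * ‖v‖ := by
  calc l1Norm v ≤ ∑ _s : S, ‖v‖ := Finset.sum_le_sum fun s _ => by
        rw [← Real.norm_eq_abs]; exact norm_le_pi_norm v s
    _ = (Fintype.card S : ℝ) * ‖v‖ := by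
        simp [Finset.sum_const, nsmul_eq_mul, Finset.card_univ]

/-- crude total bound -/
lemma l1Norm_mulVec_le (A : Matrix S S ℝ) (x : S → ℝ) :
    l1Norm (A.mulVec x) ≤ (∑ s' : S, ∑ s : S, |A s s'|) * l1Norm x := by
  have h1 : l1Norm (A.mulVec x) ≤ ∑ s' : S, (∑ s : S, |A s s'|) * |x s'| := by
    unfold l1Norm
    calc ∑ s, |A.mulVec x s| ≤ ∑ s : S, ∑ s' : S, |A s s'| * |x s'| := by
          apply Finset.sum_le_sum
          intro s _
          rw [Matrix.mulVec, dotProduct]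
          refine (Finset.abs_sum_le_sum_abs _ _).trans ?_
          apply Finset.sum_le_sum; intro s' _; rw [abs_mul]
      _ = ∑ s' : S, (∑ s : S, |A s s'|) * |x s'| := by
          rw [Finset.sum_comm]; simp [Finset.sum_mul]
  refine h1.trans ?_
  calc ∑ s' : S, (∑ s : S, |A s s'|) * |x s'|
      ≤ ∑ s' : S, (∑ t' : S, ∑ s : S, |A s t'|) * |x s'| := by
        apply Finset.sum_le_sum; intro s' _
        apply mul_le_mul_of_nonneg_right _ (abs_nonneg _)
        exact Finset.single_le_sum (f := fun t' => ∑ s, |A s t'|)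
          (fun _ _ => Finset.sum_nonneg fun _ _ => abs_nonneg _) (Finset.mem_univ s')
    _ = (∑ s' : S, ∑ s : S, |A s s'|) * l1Norm x := by
        rw [l1Norm, Finset.mul_sum]

lemma bddAbove_matset (A : Matrix S S ℝ) :
    BddAbove { r | ∃ v : S → ℝ, l1Norm v = 1 ∧ r = l1Norm (A.mulVec v) } := by
  refine ⟨∑ s' : S, ∑ s : S, |A s s'|, ?_⟩
  rintro r ⟨v, hv, rfl⟩
  have := l1Norm_mulVec_le A v
  rwa [hv, mul_one] at this

lemma entry_abs_le_matL1Norm [DecidableEq S] (A : Matrix S S ℝ) (s s' : S) :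
    |A s s'| ≤ matL1Norm A := by
  have hmem : l1Norm (A.mulVec (Pi.single s' 1)) ∈
      { r | ∃ v : S → ℝ, l1Norm v = 1 ∧ r = l1Norm (A.mulVec v) } := by
    refine ⟨Pi.single s' 1, ?_, rfl⟩
    unfold l1Norm
    rw [Finset.sum_eq_single s']
    · simp
    · intro b _ hb; simp [Pi.single_apply, hb]
    · intro h; exact absurd (Finset.mem_univ s') h
  have h2 : |A s s'| ≤ l1Norm (A.mulVec (Pi.single s' 1)) := by
    have : A.mulVec (Pi.single s' 1) s = A s s' := by
      rw [Matrix.mulVec, dotProduct, Finset.sum_eq_single s']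
      · simp
      · intro b _ hb; simp [Pi.single_apply, hb]
      · intro h; exact absurd (Finset.mem_univ s') h
    rw [← this]; exact abs_le_l1Norm _ s
  exact h2.trans (le_csSup (bddAbove_matset A) hmem)

end helpers


section fieldlayer
variable {S : Type} [Fintype S] {M : ℕ}

/-- clamp each coordinate to `[-1,1]` -/
noncomputable def clampv (x : S → ℝ) : S → ℝ := fun s => max (-1) (min 1 (x s))

lemma abs_clampv_le (x : S → ℝ) (s : S) : |clampv x s| ≤ 1 := by
  unfold clampv
  rw [abs_le]
  exact ⟨le_max_left _ _, max_le (by norm_num) (min_le_left _ _)⟩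

lemma clampv_lip (x y : S → ℝ) (s : S) : |clampv x s - clampv y s| ≤ |x s - y s| := by
  unfold clampv
  calc |max (-1) (min 1 (x s)) - max (-1) (min 1 (y s))|
      ≤ max |(-1 : ℝ) - (-1)| |min 1 (x s) - min 1 (y s)| := abs_max_sub_max_le_max _ _ _ _
    _ = |min 1 (x s) - min 1 (y s)| := by
        rw [sub_self, abs_zero, max_eq_right (abs_nonneg _)]
    _ ≤ max |(1:ℝ) - 1| |x s - y s| := abs_min_sub_min_le_max _ _ _ _
    _ = |x s - y s| := by rw [sub_self, abs_zero, max_eq_right (abs_nonneg _)]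

lemma clampv_eq_self {x : S → ℝ} (h0 : ∀ s, 0 ≤ x s) (h1 : ∀ s, x s ≤ 1) :
    clampv x = x := by
  funext s
  unfold clampv
  rw [min_eq_right (h1 s), max_eq_right ((neg_nonpos.mpr zero_le_one).trans (h0 s))]

lemma clampv_ge_neg_part (x : S → ℝ) (s : S) : -(max 0 (-(x s))) ≤ clampv x s := by
  unfold clampv
  rcases le_or_gt 0 (x s) with h | h
  · rw [max_eq_left (neg_nonpos.mpr h), neg_zero]
    exact le_max_of_le_right (le_min zero_le_one h)
  · rw [max_eq_right (by linarith), neg_neg]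
    rw [min_eq_right (by linarith : x s ≤ 1)]
    exact le_max_right _ _

lemma clampv_nonpos {x : S → ℝ} {s : S} (h : x s ≤ 0) : clampv x s ≤ 0 :=
  max_le (by norm_num) ((min_le_right _ _).trans h)

end fieldlayer


section field2
variable {S : Type} [Fintype S] {M : ℕ}

lemma l1Norm_le_of_bound {φ : S → ℝ} {r : ℝ} (h : ∀ s, |φ s| ≤ r) :
    l1Norm φ ≤ (Fintype.card S : ℝ) * r := by
  unfold l1Norm
  calc ∑ s, |φ s| ≤ ∑ _s : S, r := Finset.sum_le_sum fun s _ => h s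
    _ = (Fintype.card S : ℝ) * r := by simp [Finset.sum_const, nsmul_eq_mul, Finset.card_univ]

noncomputable def phiMF (M : ℕ) (w : Fin M → Fin M → ℝ) (k : Fin M)
    (V : Fin M → S → ℝ) : S → ℝ :=
  fun s => (1/(M:ℝ)) * ∑ l, w k l * V l s

noncomputable def mfField (Q : (S → ℝ) → Matrix S S ℝ) (w : Fin M → Fin M → ℝ)
    (V : Fin M → S → ℝ) : Fin M → S → ℝ :=
  fun k => (Q (phiMF M w k V)).mulVec (V k)

noncomputable def qB {S : Type} [Fintype S] (Q : (S → ℝ) → Matrix S S ℝ) : ℝ :=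
  ∑ s' : S, ∑ s : S, |Q 0 s s'|

noncomputable def mfK {S : Type} [Fintype S] (Q : (S → ℝ) → Matrix S S ℝ) (L R : ℝ) : ℝ :=
  (Fintype.card S : ℝ) *
    (max L 0 * (Fintype.card S : ℝ) * R + (qB Q + max L 0 * (Fintype.card S : ℝ) * R))

lemma qB_nonneg (Q : (S → ℝ) → Matrix S S ℝ) : 0 ≤ qB Q :=
  Finset.sum_nonneg fun _ _ => Finset.sum_nonneg fun _ _ => abs_nonneg _

lemma mfK_nonneg (Q : (S → ℝ) → Matrix S S ℝ) (L : ℝ) {R : ℝ} (hR : 0 ≤ R) :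
    0 ≤ mfK Q L R := by
  have h1 : (0:ℝ) ≤ max L 0 := le_max_right _ _
  have h2 : (0:ℝ) ≤ (Fintype.card S : ℝ) := Nat.cast_nonneg _
  have := qB_nonneg Q
  unfold mfK; positivity

lemma phiMF_diff_bound (hM : 0 < M) {w : Fin M → Fin M → ℝ}
    (hw01 : ∀ k l, w k l ∈ Icc (0:ℝ) 1) {V W : Fin M → S → ℝ} {r : ℝ}
    (hVW : ∀ l s, |V l s - W l s| ≤ r) (k : Fin M) (s : S) :
    |phiMF M w k V s - phiMF M w k W s| ≤ r := by
  have hr : 0 ≤ r := (abs_nonneg _).trans (hVW ⟨0, hM⟩ s)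
  have hMpos : (0:ℝ) < M := Nat.cast_pos.mpr hM
  unfold phiMF
  rw [← mul_sub, ← Finset.sum_sub_distrib]
  rw [abs_mul]
  have h1 : |∑ l, (w k l * V l s - w k l * W l s)| ≤ (M:ℝ) * r := by
    refine (Finset.abs_sum_le_sum_abs _ _).trans ?_
    calc ∑ l, |w k l * V l s - w k l * W l s| ≤ ∑ _l : Fin M, r := by
          apply Finset.sum_le_sum
          intro l _
          rw [← mul_sub, abs_mul, abs_of_nonneg (hw01 k l).1]
          calc w k l * |V l s - W l s| ≤ 1 * r :=
                mul_le_mul (hw01 k l).2 (hVW l s) (abs_nonneg _) zero_le_one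
            _ = r := one_mul r
      _ = (M:ℝ) * r := by simp [Finset.sum_const, nsmul_eq_mul]
  calc |1/(M:ℝ)| * |∑ l, (w k l * V l s - w k l * W l s)|
      ≤ |1/(M:ℝ)| * ((M:ℝ) * r) := by
        exact mul_le_mul_of_nonneg_left h1 (abs_nonneg _)
    _ = r := by
        rw [abs_of_nonneg (by positivity : (0:ℝ) ≤ 1/(M:ℝ))]
        field_simp

lemma phiMF_zero (w : Fin M → Fin M → ℝ) (k : Fin M) :
    phiMF M w k (fun _ => (0 : S → ℝ)) = 0 := by
  funext s; unfold phiMF; simp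

lemma qEntry_diff_bound {Q : (S → ℝ) → Matrix S S ℝ} {L : ℝ}
    (hQ : IsRateMatrixFun Q L) (φ ψ : S → ℝ) (s s' : S) :
    |Q φ s s' - Q ψ s s'| ≤ max L 0 * l1Norm (fun u => φ u - ψ u) := by
  classical
  have h1 : |(Q φ - Q ψ) s s'| ≤ matL1Norm (Q φ - Q ψ) := entry_abs_le_matL1Norm _ s s'
  rw [Matrix.sub_apply] at h1
  refine h1.trans ((hQ.2.2 φ ψ).trans ?_)
  have : 0 ≤ l1Norm (fun u => φ u - ψ u) := Finset.sum_nonneg fun _ _ => abs_nonneg _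
  exact mul_le_mul_of_nonneg_right (le_max_left _ _) this

lemma qEntry_abs_bound {Q : (S → ℝ) → Matrix S S ℝ} {L : ℝ}
    (hQ : IsRateMatrixFun Q L) (φ : S → ℝ) (s s' : S) :
    |Q φ s s'| ≤ qB Q + max L 0 * l1Norm φ := by
  have h1 : |Q φ s s'| ≤ |Q 0 s s'| + |Q φ s s' - Q 0 s s'| := by
    calc |Q φ s s'| = |Q 0 s s' + (Q φ s s' - Q 0 s s')| := by ring_nf
      _ ≤ _ := abs_add_le _ _
  refine h1.trans (add_le_add ?_ ?_)
  · calc |Q 0 s s'| ≤ ∑ t : S, |Q 0 t s'| :=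
        Finset.single_le_sum (f := fun t => |Q 0 t s'|) (fun _ _ => abs_nonneg _)
          (Finset.mem_univ s)
      _ ≤ qB Q := Finset.single_le_sum (f := fun t' => ∑ t : S, |Q 0 t t'|)
          (fun _ _ => Finset.sum_nonneg fun _ _ => abs_nonneg _) (Finset.mem_univ s')
  · have := qEntry_diff_bound hQ φ 0 s s'
    simpa using this

lemma phiMF_abs_bound (hM : 0 < M) {w : Fin M → Fin M → ℝ}
    (hw01 : ∀ k l, w k l ∈ Icc (0:ℝ) 1) {V : Fin M → S → ℝ} {R : ℝ}
    (hV : ∀ l s, |V l s| ≤ R) (k : Fin M) (s : S) :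
    |phiMF M w k V s| ≤ R := by
  have h := phiMF_diff_bound (W := fun _ => (0 : S → ℝ)) hM hw01 (by simpa using hV) k s
  rwa [phiMF_zero, Pi.zero_apply, sub_zero] at h

/-- The central Lipschitz-type estimate for the mean-field vector field. -/
lemma mfField_diff_bound {Q : (S → ℝ) → Matrix S S ℝ} {L : ℝ}
    (hQ : IsRateMatrixFun Q L) (hM : 0 < M) {w : Fin M → Fin M → ℝ}
    (hw01 : ∀ k l, w k l ∈ Icc (0:ℝ) 1) {R r : ℝ} (hR : 0 ≤ R)
    {V W : Fin M → S → ℝ} (hV : ∀ l s, |V l s| ≤ R) (hW : ∀ l s, |W l s| ≤ R)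
    (hVW : ∀ l s, |V l s - W l s| ≤ r) (k : Fin M) (s : S) :
    |mfField Q w V k s - mfField Q w W k s| ≤ mfK Q L R * r := by
  have hr : 0 ≤ r := (abs_nonneg _).trans (hVW ⟨0, hM⟩ s)
  set cS := (Fintype.card S : ℝ) with hcS
  have hcS0 : 0 ≤ cS := Nat.cast_nonneg _
  set L' := max L 0 with hL'
  have hL'0 : (0:ℝ) ≤ L' := le_max_right _ _
  set A := Q (phiMF M w k V) with hA
  set B := Q (phiMF M w k W) with hB
  have hAB : ∀ t t' : S, |A t t' - B t t'| ≤ L' * (cS * r) := by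
    intro t t'
    refine (qEntry_diff_bound hQ _ _ t t').trans ?_
    rw [hL', hcS]
    refine mul_le_mul_of_nonneg_left ?_ (le_max_right _ _)
    exact l1Norm_le_of_bound fun u => phiMF_diff_bound hM hw01 hVW k u
  have hBb : ∀ t t' : S, |B t t'| ≤ qB Q + L' * (cS * R) := by
    intro t t'
    refine (qEntry_abs_bound hQ _ t t').trans ?_
    rw [hL', hcS]
    refine add_le_add_right (mul_le_mul_of_nonneg_left ?_ (le_max_right _ _)) _
    exact l1Norm_le_of_bound fun u => phiMF_abs_bound hM hw01 hW k u
  have key : mfField Q w V k s - mfField Q w W k s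
      = ∑ t' : S, (A s t' * V k t' - B s t' * W k t') := by
    rw [show mfField Q w V k s = ∑ t' : S, A s t' * V k t' from rfl,
        show mfField Q w W k s = ∑ t' : S, B s t' * W k t' from rfl,
        ← Finset.sum_sub_distrib]
  rw [key]
  refine (Finset.abs_sum_le_sum_abs _ _).trans ?_
  have per : ∀ t' : S, |A s t' * V k t' - B s t' * W k t'|
      ≤ L' * (cS * r) * R + (qB Q + L' * (cS * R)) * r := by
    intro t'
    calc |A s t' * V k t' - B s t' * W k t'|
        = |(A s t' - B s t') * V k t' + B s t' * (V k t' - W k t')| := by ring_nf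
      _ ≤ |(A s t' - B s t') * V k t'| + |B s t' * (V k t' - W k t')| := abs_add_le _ _
      _ = |A s t' - B s t'| * |V k t'| + |B s t'| * |V k t' - W k t'| := by
          rw [abs_mul, abs_mul]
      _ ≤ L' * (cS * r) * R + (qB Q + L' * (cS * R)) * r := by
          refine add_le_add
            (mul_le_mul (hAB s t') (hV k t') (abs_nonneg _)
              (mul_nonneg hL'0 (mul_nonneg hcS0 hr)))
            (mul_le_mul (hBb s t') (hVW k t') (abs_nonneg _)
              (add_nonneg (qB_nonneg Q) (mul_nonneg hL'0 (mul_nonneg hcS0 hR))))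
  calc ∑ t' : S, |A s t' * V k t' - B s t' * W k t'|
      ≤ ∑ _t' : S, (L' * (cS * r) * R + (qB Q + L' * (cS * R)) * r) :=
        Finset.sum_le_sum fun t' _ => per t'
    _ = cS * (L' * (cS * r) * R + (qB Q + L' * (cS * R)) * r) := by
        simp [Finset.sum_const, nsmul_eq_mul, hcS]
        ring
    _ = mfK Q L R * r := by unfold mfK; rw [← hcS, ← hL']; ring

end field2


section globalsol
variable {S : Type} [Fintype S] {M : ℕ}

noncomputable def mfFieldT (Q : (S → ℝ) → Matrix S S ℝ) (w : Fin M → Fin M → ℝ)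
    (V : Fin M → S → ℝ) : Fin M → S → ℝ :=
  mfField Q w (fun k => clampv (V k))

lemma abs_entry_le_norm (V : Fin M → S → ℝ) (l : Fin M) (s : S) : |V l s| ≤ ‖V‖ := by
  rw [← Real.norm_eq_abs]
  exact (norm_le_pi_norm (V l) s).trans (norm_le_pi_norm V l)

lemma pi_norm_le_of_entry_le {X Y : Type} [Fintype X] [Fintype Y] {f : X → Y → ℝ} {r : ℝ}
    (hr : 0 ≤ r) (h : ∀ x y, |f x y| ≤ r) : ‖f‖ ≤ r := by
  refine (pi_norm_le_iff_of_nonneg hr).2 fun x => (pi_norm_le_iff_of_nonneg hr).2 fun y => ?_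
  rw [Real.norm_eq_abs]; exact h x y

variable {Q : (S → ℝ) → Matrix S S ℝ} {L : ℝ} {w : Fin M → Fin M → ℝ}

lemma mfFieldT_dist_le (hQ : IsRateMatrixFun Q L) (hM : 0 < M)
    (hw01 : ∀ k l, w k l ∈ Icc (0:ℝ) 1) (V W : Fin M → S → ℝ) :
    ‖mfFieldT Q w V - mfFieldT Q w W‖ ≤ mfK Q L 1 * ‖V - W‖ := by
  have h0 : 0 ≤ mfK Q L 1 * ‖V - W‖ :=
    mul_nonneg (mfK_nonneg Q L zero_le_one) (norm_nonneg _)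
  refine pi_norm_le_of_entry_le h0 fun k s => ?_
  have hks : (mfFieldT Q w V - mfFieldT Q w W) k s
      = mfFieldT Q w V k s - mfFieldT Q w W k s := rfl
  rw [hks]
  refine mfField_diff_bound hQ hM hw01 zero_le_one
    (fun l u => abs_clampv_le _ _) (fun l u => abs_clampv_le _ _) ?_ k s
  intro l u
  refine (clampv_lip _ _ _).trans ?_
  have := abs_entry_le_norm (V - W) l u
  simpa using this

lemma mfFieldT_lipschitz (hQ : IsRateMatrixFun Q L) (hM : 0 < M)
    (hw01 : ∀ k l, w k l ∈ Icc (0:ℝ) 1) :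
    LipschitzWith (mfK Q L 1).toNNReal (mfFieldT Q w) := by
  refine LipschitzWith.of_dist_le_mul fun V W => ?_
  rw [dist_eq_norm, dist_eq_norm, Real.coe_toNNReal _ (mfK_nonneg Q L zero_le_one)]
  exact mfFieldT_dist_le hQ hM hw01 V W

lemma mfFieldT_norm_le (hQ : IsRateMatrixFun Q L) (hM : 0 < M)
    (hw01 : ∀ k l, w k l ∈ Icc (0:ℝ) 1) (V : Fin M → S → ℝ) :
    ‖mfFieldT Q w V‖ ≤ mfK Q L 1 := by
  refine pi_norm_le_of_entry_le (mfK_nonneg Q L zero_le_one) fun k s => ?_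
  have hzero : mfField Q w (fun _ => (0 : S → ℝ)) k s = 0 := by
    simp [mfField, Matrix.mulVec_zero]
  have := mfField_diff_bound hQ hM hw01 zero_le_one
    (V := fun k => clampv (V k)) (W := fun _ => (0 : S → ℝ)) (r := 1)
    (fun l u => abs_clampv_le _ _) (fun l u => by simp)
    (fun l u => by simpa using abs_clampv_le (V l) u) k s
  rw [mul_one] at this
  calc |mfFieldT Q w V k s|
      = |mfField Q w (fun k => clampv (V k)) k s - mfField Q w (fun _ => (0:S → ℝ)) k s| := by
        rw [hzero, sub_zero]; rfl
    _ ≤ mfK Q L 1 := this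

/-- Global-in-time solution for the truncated field. -/
lemma exists_global_truncated (hQ : IsRateMatrixFun Q L) (hM : 0 < M)
    (hw01 : ∀ k l, w k l ∈ Icc (0:ℝ) 1) (v₀ : Fin M → S → ℝ) :
    ∃ f : ℝ → (Fin M → S → ℝ), f 0 = v₀ ∧ ∀ t, HasDerivAt f (mfFieldT Q w (f t)) t := by
  classical
  set K1 := mfK Q L 1 with hK1def
  have hK1 : 0 ≤ K1 := mfK_nonneg Q L zero_le_one
  have hlip := mfFieldT_lipschitz hQ hM hw01
  have hPL : ∀ n : ℕ, ∃ g : ℝ → (Fin M → S → ℝ), g 0 = v₀ ∧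
      ∀ t ∈ Icc (-(n+1:ℝ)) (n+1),
        HasDerivWithinAt g (mfFieldT Q w (g t)) (Icc (-(n+1:ℝ)) (n+1)) t := by
    intro n
    have hn : (0:ℝ) ≤ n := Nat.cast_nonneg n
    have hpl : IsPicardLindelof (fun _ x => mfFieldT Q w x)
        (tmin := -(n+1:ℝ)) (tmax := n+1) ⟨0, by constructor <;> linarith⟩ v₀
        (K1*(n+1)).toNNReal 0 K1.toNNReal K1.toNNReal := by
      refine ⟨?_, ?_, ?_, ?_⟩
      · exact fun t _ => hlip.lipschitzOnWith
      · exact fun x _ => continuousOn_const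
      · exact fun t _ x _ => (mfFieldT_norm_le hQ hM hw01 x).trans (Real.le_coe_toNNReal _)
      · simp [Real.coe_toNNReal _ hK1, Real.coe_toNNReal _ (mul_nonneg hK1 (by linarith : (0:ℝ) ≤ n+1))]
    obtain ⟨α, hα0, hαd⟩ := hpl.exists_eq_forall_mem_Icc_hasDerivWithinAt₀
    exact ⟨α, hα0, hαd⟩
  choose gsol hg0 hgderiv using hPL
  have hagree : ∀ n m : ℕ, n ≤ m → EqOn (gsol n) (gsol m) (Icc (-(n+1:ℝ)) (n+1)) := by
    intro n m hnm
    have hnm' : ((n:ℝ)+1) ≤ (m:ℝ)+1 := by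
      have := (Nat.cast_le (α := ℝ)).mpr hnm; linarith
    have hsub : Icc (-(n+1:ℝ)) (n+1) ⊆ Icc (-(m+1:ℝ)) (m+1) :=
      Icc_subset_Icc (by linarith) hnm'
    have hn : (0:ℝ) ≤ n := Nat.cast_nonneg n
    have hIoo : ∀ t ∈ Ioo (-(n+1:ℝ)) (n+1), t ∈ Ioo (-(m+1:ℝ)) (m+1) := by
      intro t ht; exact ⟨by linarith [ht.1], by linarith [ht.2]⟩
    refine ODE_solution_unique_of_mem_Icc (v := fun _ x => mfFieldT Q w x)
      (s := fun _ => univ) (a := -(n+1:ℝ)) (b := (n:ℝ)+1) (t₀ := 0)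
      (fun t _ => hlip.lipschitzOnWith)
      ⟨by linarith, by linarith⟩ ?_ ?_ (fun _ _ => mem_univ _) ?_ ?_
      (fun _ _ => mem_univ _) ?_
    · exact fun t ht => ((hgderiv n) t ht).continuousWithinAt
    · exact fun t ht => ((hgderiv n) t (Ioo_subset_Icc_self ht)).hasDerivAt
        (Icc_mem_nhds ht.1 ht.2)
    · exact fun t ht => (((hgderiv m) t (hsub ht)).continuousWithinAt).mono hsub
    · intro t ht
      have ht' := hIoo t ht
      exact ((hgderiv m) t (Ioo_subset_Icc_self ht')).hasDerivAt (Icc_mem_nhds ht'.1 ht'.2)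
    · rw [hg0 n, hg0 m]
  set f : ℝ → (Fin M → S → ℝ) := fun t => gsol (Nat.ceil |t|) t with hfdef
  have hdom : ∀ t : ℝ, t ∈ Icc (-((Nat.ceil |t| : ℝ) + 1)) ((Nat.ceil |t| : ℝ) + 1) := by
    intro t
    have h1 : |t| ≤ (Nat.ceil |t| : ℝ) := Nat.le_ceil _
    have := abs_le.1 (h1.trans (by linarith : (⌈|t|⌉₊:ℝ) ≤ (⌈|t|⌉₊:ℝ)+1))
    exact ⟨this.1, this.2⟩
  have hglobeq : ∀ (n : ℕ) (t : ℝ), t ∈ Icc (-(n+1:ℝ)) (n+1) → f t = gsol n t := by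
    intro n t ht
    rcases le_total (Nat.ceil |t|) n with h | h
    · exact hagree _ n h (hdom t)
    · exact (hagree n _ h ht).symm
  refine ⟨f, ?_, ?_⟩
  · have h0 : (0:ℝ) ∈ Icc (-(0+1:ℝ)) (0+1) := by constructor <;> norm_num
    have := hglobeq 0 0 (by simpa using h0)
    rw [this, hg0 0]
  · intro t
    set n := Nat.ceil |t| with hn
    have htIoo : t ∈ Ioo (-(n+1:ℝ)) (n+1) := by
      have h1 : |t| ≤ (n:ℝ) := Nat.le_ceil _
      have := abs_lt.1 (lt_of_le_of_lt h1 (by linarith : ((n:ℕ):ℝ) < (n:ℝ)+1))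
      exact ⟨this.1, this.2⟩
    have hev : f =ᶠ[𝓝 t] gsol n :=
      Filter.eventuallyEq_of_mem (isOpen_Ioo.mem_nhds htIoo)
        (fun t' ht' => hglobeq n t' (Ioo_subset_Icc_self ht'))
    have hd : HasDerivAt (gsol n) (mfFieldT Q w (gsol n t)) t :=
      ((hgderiv n) t (Ioo_subset_Icc_self htIoo)).hasDerivAt (Icc_mem_nhds htIoo.1 htIoo.2)
    have heq : f t = gsol n t := hglobeq n t (Ioo_subset_Icc_self htIoo)
    rw [heq]
    exact hd.congr_of_eventuallyEq hev

end globalsol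


section invariance
variable {S : Type} [Fintype S] {M : ℕ} {Q : (S → ℝ) → Matrix S S ℝ} {L : ℝ}
  {w : Fin M → Fin M → ℝ}

lemma diag_nonpos (hQ : IsRateMatrixFun Q L) (φ : S → ℝ) (s : S) : Q φ s s ≤ 0 := by
  classical
  have hsum := hQ.2.1 φ s
  rw [← Finset.add_sum_erase _ _ (Finset.mem_univ s)] at hsum
  have hpos : 0 ≤ ∑ t ∈ Finset.univ.erase s, Q φ t s :=
    Finset.sum_nonneg fun t ht => hQ.1 φ t s (Finset.ne_of_mem_erase ht)
  linarith

lemma sum_mfFieldT_zero (hQ : IsRateMatrixFun Q L) (V : Fin M → S → ℝ) (k : Fin M) :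
    ∑ s, mfFieldT Q w V k s = 0 := by
  set A := Q (phiMF M w k fun l => clampv (V l)) with hA
  have hexp : ∀ s : S, mfFieldT Q w V k s = ∑ s' : S, A s s' * clampv (V k) s' := fun s => rfl
  calc ∑ s, mfFieldT Q w V k s = ∑ s : S, ∑ s' : S, A s s' * clampv (V k) s' :=
        Finset.sum_congr rfl fun s _ => hexp s
    _ = ∑ s' : S, ∑ s : S, A s s' * clampv (V k) s' := Finset.sum_comm
    _ = ∑ s' : S, (∑ s : S, A s s') * clampv (V k) s' := by
        refine Finset.sum_congr rfl fun s' _ => ?_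
        rw [Finset.sum_mul]
    _ = 0 := by
        refine Finset.sum_eq_zero fun s' _ => ?_
        rw [hQ.2.1 _ s', zero_mul]

/-- Forward invariance of the product simplex for the truncated system. -/
lemma invariance (hQ : IsRateMatrixFun Q L) (hM : 0 < M)
    (hw01 : ∀ k l, w k l ∈ Icc (0:ℝ) 1) {v₀ : Fin M → S → ℝ}
    (hv₀ : ∀ k, v₀ k ∈ probSimplex S) {f : ℝ → Fin M → S → ℝ} (hf0 : f 0 = v₀)
    (hfd : ∀ t, HasDerivAt f (mfFieldT Q w (f t)) t) :
    ∀ t, 0 ≤ t → ∀ k, f t k ∈ probSimplex S := by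
  classical
  -- component derivatives
  have hks : ∀ (t : ℝ) (k : Fin M) (s : S),
      HasDerivAt (fun τ => f τ k s) (mfFieldT Q w (f t) k s) t := by
    intro t k s
    exact hasDerivAt_pi.1 (hasDerivAt_pi.1 (hfd t) k) s
  have hcont : ∀ (k : Fin M) (s : S), Continuous (fun τ => f τ k s) := by
    intro k s
    rw [continuous_iff_continuousAt]
    exact fun τ => (hks τ k s).continuousAt
  -- sums are constant equal to 1
  have hsum1 : ∀ (t : ℝ) (k : Fin M), ∑ s, f t k s = 1 := by
    intro t k
    have hσ : ∀ τ : ℝ, HasDerivAt (fun τ' => ∑ s, f τ' k s) 0 τ := by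
      intro τ
      have := HasDerivAt.fun_sum (u := Finset.univ)
        (A := fun (s : S) τ' => f τ' k s) (A' := fun s => mfFieldT Q w (f τ) k s)
        (fun s _ => hks τ k s)
      rwa [sum_mfFieldT_zero hQ] at this
    have hconst : (∑ s, f t k s) = ∑ s, f 0 k s :=
      is_const_of_deriv_eq_zero (fun x => (hσ x).differentiableAt)
        (fun x => (hσ x).deriv) t 0
    rw [hconst, hf0]
    exact (hv₀ k).2
  -- constants
  set cS := (Fintype.card S : ℝ) with hcS
  set C0 := qB Q + max L 0 * (cS * 1) with hC0
  have hC0nn : 0 ≤ C0 := by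
    have := qB_nonneg Q
    have h2 : (0:ℝ) ≤ max L 0 := le_max_right _ _
    have h3 : (0:ℝ) ≤ cS := Nat.cast_nonneg _
    positivity
  have hentry : ∀ (t : ℝ) (k : Fin M) (s s' : S),
      |Q (phiMF M w k fun l => clampv (f t l)) s s'| ≤ C0 := by
    intro t k s s'
    refine (qEntry_abs_bound hQ _ s s').trans ?_
    rw [hC0]
    refine add_le_add_right (mul_le_mul_of_nonneg_left ?_ (le_max_right _ _)) _
    exact l1Norm_le_of_bound fun u =>
      phiMF_abs_bound hM hw01 (fun l u' => abs_clampv_le _ _) k u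
  set MS := ((M : ℝ) * cS) with hMS
  have hMSnn : 0 ≤ MS := mul_nonneg (Nat.cast_nonneg _) (Nat.cast_nonneg _)
  set K := MS * C0 with hK
  set N : ℝ → ℝ := fun t => ∑ k : Fin M, ∑ s : S, max 0 (-(f t k s)) with hN
  have hNnonneg : ∀ t, 0 ≤ N t := fun t =>
    Finset.sum_nonneg fun k _ => Finset.sum_nonneg fun s _ => le_max_left _ _
  have hN0 : N 0 = 0 := by
    rw [hN]
    refine Finset.sum_eq_zero fun k _ => Finset.sum_eq_zero fun s _ => ?_
    rw [hf0]
    exact max_eq_left (neg_nonpos.mpr ((hv₀ k).1 s))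
  have hNcont : Continuous N := by
    refine continuous_finset_sum _ fun k _ => continuous_finset_sum _ fun s _ => ?_
    exact continuous_const.max (hcont k s).neg
  -- key pointwise estimate
  have hkey : ∀ (t : ℝ) (k : Fin M) (s : S), f t k s ≤ 0 →
      -(mfFieldT Q w (f t) k s) ≤ C0 * N t := by
    intro t k s hts
    set A := Q (phiMF M w k fun l => clampv (f t l)) with hA
    have hexp : mfFieldT Q w (f t) k s = ∑ s' : S, A s s' * clampv (f t k) s' := rfl
    rw [hexp, ← Finset.add_sum_erase _ _ (Finset.mem_univ s)]
    have h1 : 0 ≤ A s s * clampv (f t k) s := by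
      have h1' := mul_nonneg (neg_nonneg.mpr (diag_nonpos hQ (phiMF M w k fun l => clampv (f t l)) s))
        (neg_nonneg.mpr (clampv_nonpos hts))
      rwa [neg_mul_neg] at h1'
    have h2 : ∀ s' ∈ Finset.univ.erase s,
        -(C0 * max 0 (-(f t k s'))) ≤ A s s' * clampv (f t k) s' := by
      intro s' hs'
      have hoff : 0 ≤ A s s' := hQ.1 _ s s' (Finset.ne_of_mem_erase hs').symm
      have hcl := clampv_ge_neg_part (f t k) s'
      calc -(C0 * max 0 (-(f t k s')))
          ≤ -(A s s' * max 0 (-(f t k s'))) := by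
            refine neg_le_neg ?_
            exact mul_le_mul_of_nonneg_right ((le_abs_self _).trans (hentry t k s s'))
              (le_max_left _ _)
        _ = A s s' * (-(max 0 (-(f t k s')))) := by ring
        _ ≤ A s s' * clampv (f t k) s' := mul_le_mul_of_nonneg_left hcl hoff
    have hsub : ∑ s' ∈ Finset.univ.erase s, max 0 (-(f t k s')) ≤ N t := by
      calc ∑ s' ∈ Finset.univ.erase s, max 0 (-(f t k s'))
          ≤ ∑ s' : S, max 0 (-(f t k s')) :=
            Finset.sum_le_sum_of_subset_of_nonneg (Finset.subset_univ _)
              (fun _ _ _ => le_max_left _ _)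
        _ ≤ N t := Finset.single_le_sum (f := fun k' => ∑ s', max 0 (-(f t k' s')))
            (fun _ _ => Finset.sum_nonneg fun _ _ => le_max_left _ _) (Finset.mem_univ k)
    have h3 : -(C0 * N t) ≤ ∑ s' ∈ Finset.univ.erase s, A s s' * clampv (f t k) s' := by
      calc -(C0 * N t) ≤ -(C0 * ∑ s' ∈ Finset.univ.erase s, max 0 (-(f t k s'))) :=
            neg_le_neg (mul_le_mul_of_nonneg_left hsub hC0nn)
        _ = ∑ s' ∈ Finset.univ.erase s, -(C0 * max 0 (-(f t k s'))) := by
            rw [Finset.mul_sum, ← Finset.sum_neg_distrib]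
        _ ≤ _ := Finset.sum_le_sum h2
    linarith [h1, h3]
  -- Dini-type estimate for N
  have hdini : ∀ (t : ℝ), ∀ r, K * N t < r →
      ∃ᶠ z in 𝓝[>] t, (z - t)⁻¹ * (N z - N t) < r := by
    intro t r hr
    set η := (r - K * N t) / (MS + 1) with hη
    have hηpos : 0 < η := div_pos (by linarith) (by linarith)
    have hbound : ∀ᶠ z in 𝓝[>] t, ∀ (k : Fin M) (s : S),
        max 0 (-(f z k s)) - max 0 (-(f t k s)) ≤ (z - t) * (C0 * N t + η) := by
      rw [eventually_all]
      intro k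
      rw [eventually_all]
      intro s
      have hC0N : 0 ≤ C0 * N t := mul_nonneg hC0nn (hNnonneg t)
      rcases le_or_gt (f t k s) 0 with hts | hts
      · have hg := hks t k s
        rw [hasDerivAt_iff_tendsto_slope] at hg
        have hev1 : ∀ᶠ z in 𝓝[≠] t,
            mfFieldT Q w (f t) k s - η < slope (fun τ => f τ k s) t z :=
          hg.eventually (eventually_gt_nhds (by linarith))
        have hev2 : ∀ᶠ z in 𝓝[>] t,
            mfFieldT Q w (f t) k s - η < slope (fun τ => f τ k s) t z :=
          hev1.filter_mono (nhdsWithin_mono t fun z hz => ne_of_gt hz)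
        filter_upwards [hev2, self_mem_nhdsWithin] with z hz hz'
        have hzt : (0:ℝ) < z - t := sub_pos.mpr hz'
        have hslope : slope (fun τ => f τ k s) t z = (f z k s - f t k s) / (z - t) :=
          slope_def_field _ t z
        have hlow : f t k s - f z k s ≤ (z - t) * (C0 * N t + η) := by
          have h5 : (mfFieldT Q w (f t) k s - η) * (z - t) < f z k s - f t k s := by
            rw [hslope] at hz
            calc (mfFieldT Q w (f t) k s - η) * (z - t)
                < ((f z k s - f t k s) / (z - t)) * (z - t) :=
                  mul_lt_mul_of_pos_right hz hzt
              _ = f z k s - f t k s := div_mul_cancel₀ _ (ne_of_gt hzt)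
          have h6 : -(mfFieldT Q w (f t) k s) ≤ C0 * N t := hkey t k s hts
          nlinarith [h5, h6, hzt]
        calc max 0 (-(f z k s)) - max 0 (-(f t k s))
            ≤ max ((0:ℝ) - 0) ((-(f z k s)) - (-(f t k s))) := max_sub_max_le_max _ _ _ _
          _ = max 0 (f t k s - f z k s) := by rw [sub_zero, neg_sub_neg]
          _ ≤ max 0 ((z - t) * (C0 * N t + η)) := max_le_max (le_refl 0) hlow
          _ = (z - t) * (C0 * N t + η) :=
              max_eq_right (mul_nonneg hzt.le (by linarith))
      · have hev : ∀ᶠ z in 𝓝 t, 0 < f z k s :=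
          (hks t k s).continuousAt.eventually (eventually_gt_nhds hts)
        filter_upwards [hev.filter_mono nhdsWithin_le_nhds, self_mem_nhdsWithin] with z hz hz'
        rw [max_eq_left (neg_nonpos.mpr hz.le), max_eq_left (neg_nonpos.mpr hts.le)]
        have hzt : (0:ℝ) ≤ z - t := (sub_pos.mpr hz').le
        have hnn : 0 ≤ (z - t) * (C0 * N t + η) :=
          mul_nonneg hzt (by linarith)
        linarith
    have heven : ∀ᶠ z in 𝓝[>] t, (z - t)⁻¹ * (N z - N t) < r := by
      filter_upwards [hbound, self_mem_nhdsWithin] with z hz1 hz2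
      have hzt : (0:ℝ) < z - t := sub_pos.mpr hz2
      have hNle : N z - N t ≤ MS * ((z - t) * (C0 * N t + η)) := by
        have hsplit : N z - N t
            = ∑ k : Fin M, ∑ s : S, (max 0 (-(f z k s)) - max 0 (-(f t k s))) := by
          rw [hN]
          rw [← Finset.sum_sub_distrib]
          exact Finset.sum_congr rfl fun k _ => (Finset.sum_sub_distrib _ _).symm
        rw [hsplit]
        calc ∑ k : Fin M, ∑ s : S, (max 0 (-(f z k s)) - max 0 (-(f t k s)))
            ≤ ∑ _k : Fin M, ∑ _s : S, (z - t) * (C0 * N t + η) :=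
              Finset.sum_le_sum fun k _ => Finset.sum_le_sum fun s _ => hz1 k s
          _ = MS * ((z - t) * (C0 * N t + η)) := by
              simp only [Finset.sum_const, nsmul_eq_mul, Finset.card_univ, Fintype.card_fin]
              rw [hMS, hcS]
              ring
      calc (z - t)⁻¹ * (N z - N t)
          ≤ (z - t)⁻¹ * (MS * ((z - t) * (C0 * N t + η))) :=
            mul_le_mul_of_nonneg_left hNle (inv_nonneg.mpr hzt.le)
        _ = MS * (C0 * N t + η) := by field_simp
        _ = K * N t + MS * η := by rw [hK]; ring
        _ < r := by
            have h7 : MS * η < (MS + 1) * η := by nlinarith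
            have h8 : (MS + 1) * η = r - K * N t := by
              rw [hη]
              field_simp
            linarith
    exact heven.frequently
  -- Gronwall
  have hNzero : ∀ t, 0 ≤ t → N t = 0 := by
    intro t ht
    have hmain := le_gronwallBound_of_liminf_deriv_right_le (f := N)
      (f' := fun τ => K * N τ) (δ := 0) (K := K) (ε := 0) (a := 0) (b := t)
      hNcont.continuousOn
      (fun τ _ r hr => hdini τ r hr)
      (le_of_eq hN0)
      (fun τ _ => by rw [add_zero])
    have h9 := hmain t ⟨ht, le_refl t⟩
    rw [sub_zero, gronwallBound_ε0_δ0] at h9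
    exact le_antisymm h9 (hNnonneg t)
  -- conclude
  intro t ht k
  have hterm : ∀ (k' : Fin M) (s : S), max 0 (-(f t k' s)) = 0 := by
    intro k' s
    have h1 := hNzero t ht
    have h3 : (∑ s', max 0 (-(f t k' s'))) = 0 := by
      have h2 : ∀ k'' ∈ Finset.univ, (0:ℝ) ≤ ∑ s', max 0 (-(f t k'' s')) :=
        fun _ _ => Finset.sum_nonneg fun _ _ => le_max_left _ _
      exact (Finset.sum_eq_zero_iff_of_nonneg h2).1 h1 k' (Finset.mem_univ k')
    exact (Finset.sum_eq_zero_iff_of_nonneg (fun _ _ => le_max_left _ _)).1 h3 s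
      (Finset.mem_univ s)
  refine ⟨fun s => ?_, hsum1 t k⟩
  have h10 := le_max_right (0:ℝ) (-(f t k s))
  rw [hterm k s] at h10
  linarith

end invariance


section uniqueness
variable {S : Type} [Fintype S] {M : ℕ} {Q : (S → ℝ) → Matrix S S ℝ} {L : ℝ}
  {w : Fin M → Fin M → ℝ}

lemma mfField_lipschitzOnWith (hQ : IsRateMatrixFun Q L) (hM : 0 < M)
    (hw01 : ∀ k l, w k l ∈ Icc (0:ℝ) 1) {R : ℝ} (hR : 0 ≤ R) :
    LipschitzOnWith (mfK Q L R).toNNReal (mfField Q w)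
      (Metric.closedBall (0 : Fin M → S → ℝ) R) := by
  rw [lipschitzOnWith_iff_dist_le_mul]
  intro V hV W hW
  rw [Real.coe_toNNReal _ (mfK_nonneg Q L hR), dist_eq_norm, dist_eq_norm]
  have hVb : ∀ (l : Fin M) (s : S), |V l s| ≤ R := by
    intro l s
    have h : ‖V‖ ≤ R := by rwa [Metric.mem_closedBall, dist_zero_right] at hV
    exact (abs_entry_le_norm V l s).trans h
  have hWb : ∀ (l : Fin M) (s : S), |W l s| ≤ R := by
    intro l s
    have h : ‖W‖ ≤ R := by rwa [Metric.mem_closedBall, dist_zero_right] at hW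
    exact (abs_entry_le_norm W l s).trans h
  have h0 : 0 ≤ mfK Q L R * ‖V - W‖ := mul_nonneg (mfK_nonneg Q L hR) (norm_nonneg _)
  refine pi_norm_le_of_entry_le h0 fun k s => ?_
  have hks : (mfField Q w V - mfField Q w W) k s = mfField Q w V k s - mfField Q w W k s := rfl
  rw [hks]
  refine mfField_diff_bound hQ hM hw01 hR hVb hWb ?_ k s
  intro l u
  have := abs_entry_le_norm (V - W) l u
  simpa using this

end uniqueness


/-- the discretized mean-field ODE system has a unique global solution on
`[0,∞)` for any initial condition in Δ, and the solution stays in Δ. -/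
theorem stmt3 {S : Type} [Fintype S] (M : ℕ) (hM : 0 < M) (L_Q : ℝ)
    (Q : (S → ℝ) → Matrix S S ℝ) (hQ : IsRateMatrixFun Q L_Q)
    (w : Fin M → Fin M → ℝ)
    (hw01 : ∀ k l, w k l ∈ Icc (0:ℝ) 1)
    (hwsymm : ∀ k l, w k l = w l k)
    (v₀ : Fin M → S → ℝ) (hv₀ : ∀ k, v₀ k ∈ probSimplex S) :
    (∃ v : ℝ → Fin M → S → ℝ, IsDiscreteMFSolution Q w v₀ v ∧
      ∀ t : ℝ, 0 ≤ t → ∀ k, v t k ∈ probSimplex S) ∧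
    (∀ v v' : ℝ → Fin M → S → ℝ, IsDiscreteMFSolution Q w v₀ v →
      IsDiscreteMFSolution Q w v₀ v' → ∀ t : ℝ, 0 ≤ t → v t = v' t) := by
  constructor
  · -- existence
    obtain ⟨f, hf0, hfd⟩ := exists_global_truncated hQ hM hw01 v₀
    have hinv := invariance hQ hM hw01 hv₀ hf0 hfd
    refine ⟨f, ⟨hf0, ?_⟩, fun t ht k => hinv t ht k⟩
    intro t ht k
    have hk : HasDerivAt (fun τ => f τ k) (mfFieldT Q w (f t) k) t :=
      hasDerivAt_pi.1 (hfd t) k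
    have hcl : (fun l => clampv (f t l)) = f t := by
      funext l
      apply clampv_eq_self (hinv t ht l).1
      intro s
      have hnn := (hinv t ht l).1
      calc f t l s ≤ ∑ s', f t l s' :=
            Finset.single_le_sum (f := fun s' => f t l s') (fun s' _ => hnn s')
              (Finset.mem_univ s)
        _ = 1 := (hinv t ht l).2
    have heq2 : mfFieldT Q w (f t) = mfField Q w (f t) := by
      rw [mfFieldT, hcl]
    rw [heq2] at hk
    exact hk
  · -- uniqueness
    intro v v' hv hv' t ht
    have hvec : ∀ τ, 0 ≤ τ → HasDerivAt v (mfField Q w (v τ)) τ := by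
      intro τ hτ
      exact hasDerivAt_pi.2 fun k => hv.2 τ hτ k
    have hvec' : ∀ τ, 0 ≤ τ → HasDerivAt v' (mfField Q w (v' τ)) τ := by
      intro τ hτ
      exact hasDerivAt_pi.2 fun k => hv'.2 τ hτ k
    have hcont1 : ContinuousOn v (Icc 0 t) := fun τ hτ =>
      ((hvec τ hτ.1).continuousAt).continuousWithinAt
    have hcont2 : ContinuousOn v' (Icc 0 t) := fun τ hτ =>
      ((hvec' τ hτ.1).continuousAt).continuousWithinAt
    obtain ⟨C1, hC1⟩ := (isCompact_Icc (a := (0:ℝ)) (b := t)).exists_bound_of_continuousOn hcont1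
    obtain ⟨C2, hC2⟩ := (isCompact_Icc (a := (0:ℝ)) (b := t)).exists_bound_of_continuousOn hcont2
    set R := max (max C1 C2) 0 with hRdef
    have hR : (0:ℝ) ≤ R := le_max_right _ _
    have hlip := mfField_lipschitzOnWith hQ hM hw01 (w := w) hR
    have hmemv : ∀ τ ∈ Icc (0:ℝ) t, v τ ∈ Metric.closedBall (0 : Fin M → S → ℝ) R := by
      intro τ hτ
      rw [Metric.mem_closedBall, dist_zero_right]
      exact (hC1 τ hτ).trans ((le_max_left C1 C2).trans (le_max_left _ _))
    have hmemv' : ∀ τ ∈ Icc (0:ℝ) t, v' τ ∈ Metric.closedBall (0 : Fin M → S → ℝ) R := by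
      intro τ hτ
      rw [Metric.mem_closedBall, dist_zero_right]
      exact (hC2 τ hτ).trans ((le_max_right C1 C2).trans (le_max_left _ _))
    have key := ODE_solution_unique_of_mem_Icc_right
      (v := fun _ x => mfField Q w x)
      (s := fun _ => Metric.closedBall (0 : Fin M → S → ℝ) R)
      (a := 0) (b := t) (fun τ _ => hlip)
      hcont1 (fun τ hτ => (hvec τ hτ.1).hasDerivWithinAt)
      (fun τ hτ => hmemv τ (Ico_subset_Icc_self hτ))
      hcont2 (fun τ hτ => (hvec' τ hτ.1).hasDerivWithinAt)
      (fun τ hτ => hmemv' τ (Ico_subset_Icc_self hτ))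
      (hv.1.trans hv'.1.symm)
    exact key ⟨ht, le_refl t⟩
end

section
/- Let W : [0,1]×[0,1] → [0,1] be a measurable symmetric connected graphon kernel, let β > 0, and suppose β · ‖𝕎‖_{op,2} ≤ 1. Then every solution u of the graphon SIS equation satisfies lim_{t→∞} u(t,x) = 0 for all x ∈ [0,1]. -/
open MeasureTheory Set Filter


/-- The L² operator norm of the integral operator with kernel `K` on L²[0,1]. -/
noncomputable def opNorm2 (K : ℝ → ℝ → ℝ) : ℝ :=
  sSup { r | ∃ f : ℝ → ℝ, Measurable f ∧ (∫ x in Icc (0:ℝ) 1, (f x) ^ 2) = 1 ∧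
    r = Real.sqrt (∫ x in Icc (0:ℝ) 1, (∫ y in Icc (0:ℝ) 1, K x y * f y) ^ 2) }

lemma sqrt_cs {α : Type*} [MeasurableSpace α] (μ : Measure α) {g h : α → ℝ}
    (hgm : AEStronglyMeasurable g μ) (hhm : AEStronglyMeasurable h μ)
    (hg0 : 0 ≤ᵐ[μ] g) (hh0 : 0 ≤ᵐ[μ] h)
    (hg2 : Integrable (fun x => g x ^ 2) μ) (hh2 : Integrable (fun x => h x ^ 2) μ) :
    ∫ x, g x * h x ∂μ ≤ Real.sqrt (∫ x, g x ^ 2 ∂μ) * Real.sqrt (∫ x, h x ^ 2 ∂μ) := by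
  set A := ∫ x, g x ^ 2 ∂μ with hA
  set B := ∫ x, h x ^ 2 ∂μ with hB
  have hA0 : 0 ≤ A := integral_nonneg fun x => sq_nonneg _
  have hB0 : 0 ≤ B := integral_nonneg fun x => sq_nonneg _
  have hgh_int : Integrable (fun x => g x * h x) μ := by
    refine Integrable.mono' ((hg2.add hh2).div_const 2) (hgm.mul hhm) ?_
    filter_upwards [hg0, hh0] with x hx hy
    simp only [Pi.add_apply, Pi.zero_apply] at *
    rw [Real.norm_eq_abs, abs_of_nonneg (mul_nonneg hx hy)]
    nlinarith [sq_nonneg (g x - h x)]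
  have key : ∀ c : ℝ, 0 < c → 2 * c * ∫ x, g x * h x ∂μ ≤ c ^ 2 * A + B := by
    intro c hc
    have hmono : ∫ x, 2 * c * (g x * h x) ∂μ ≤ ∫ x, c ^ 2 * g x ^ 2 + h x ^ 2 ∂μ := by
      refine integral_mono_ae (hgh_int.const_mul _) ((hg2.const_mul _).add hh2) ?_
      filter_upwards with x
      nlinarith [sq_nonneg (c * g x - h x)]
    rw [integral_const_mul] at hmono
    rwa [integral_add (hg2.const_mul _) hh2, integral_const_mul] at hmono
  have step : ∀ ε : ℝ, 0 < ε →
      ∫ x, g x * h x ∂μ ≤ Real.sqrt (A + ε) * Real.sqrt (B + ε) := by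
    intro ε hε
    have hAε : 0 < A + ε := by linarith
    have hBε : 0 < B + ε := by linarith
    set c := Real.sqrt (B + ε) / Real.sqrt (A + ε) with hc
    have hsA : 0 < Real.sqrt (A + ε) := Real.sqrt_pos.2 hAε
    have hsB : 0 < Real.sqrt (B + ε) := Real.sqrt_pos.2 hBε
    have hcpos : 0 < c := div_pos hsB hsA
    have h1 := key c hcpos
    have hc2 : c ^ 2 = (B + ε) / (A + ε) := by
      rw [hc, div_pow, Real.sq_sqrt hAε.le, Real.sq_sqrt hBε.le]
    have hcc : c * (Real.sqrt (A + ε) * Real.sqrt (B + ε)) = B + ε := by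
      rw [hc]
      field_simp
      linear_combination Real.mul_self_sqrt hBε.le
    have h2 : c ^ 2 * A + B ≤ 2 * (c * (Real.sqrt (A + ε) * Real.sqrt (B + ε))) := by
      rw [hcc, hc2]
      have : (B + ε) / (A + ε) * A ≤ B + ε := by
        rw [div_mul_eq_mul_div, div_le_iff₀ hAε]
        nlinarith
      linarith
    nlinarith
  have hlim : Tendsto (fun ε => Real.sqrt (A + ε) * Real.sqrt (B + ε)) (nhdsWithin 0 (Ioi 0))
      (nhds (Real.sqrt A * Real.sqrt B)) := by
    have h1 : Continuous (fun ε : ℝ => Real.sqrt (A + ε) * Real.sqrt (B + ε)) :=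
      ((Real.continuous_sqrt.comp (continuous_const.add continuous_id)).mul
        (Real.continuous_sqrt.comp (continuous_const.add continuous_id)))
    have h0 := h1.tendsto 0
    rw [add_zero, add_zero] at h0
    exact h0.mono_left nhdsWithin_le_nhds
  refine ge_of_tendsto hlim ?_
  filter_upwards [self_mem_nhdsWithin] with ε hε
  exact step ε hε


noncomputable abbrev μ01 : Measure ℝ := volume.restrict (Icc (0:ℝ) 1)

lemma intOn {g : ℝ → ℝ} {C : ℝ} (hg : AEStronglyMeasurable g μ01)
    (hb : ∀ x ∈ Icc (0:ℝ) 1, ‖g x‖ ≤ C) : Integrable g μ01 :=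
  Integrable.mono' (integrable_const C) hg
    ((ae_restrict_iff' measurableSet_Icc).2 (ae_of_all _ hb))

lemma vol01 : (volume (Icc (0:ℝ) 1)).toReal = 1 := by
  rw [Real.volume_Icc]; norm_num

lemma int_const01 (c : ℝ) : ∫ _ in Icc (0:ℝ) 1, c = c := by
  rw [setIntegral_const, measureReal_def, vol01, one_smul]

lemma setInt_le {g : ℝ → ℝ} {C : ℝ} (hg : Integrable g μ01)
    (hb : ∀ x ∈ Icc (0:ℝ) 1, g x ≤ C) : (∫ x in Icc (0:ℝ) 1, g x) ≤ C := by
  calc (∫ x in Icc (0:ℝ) 1, g x) ≤ ∫ _ in Icc (0:ℝ) 1, C :=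
        setIntegral_mono_on hg (integrable_const C) measurableSet_Icc hb
    _ = C := int_const01 C

lemma setInt_mono {g h : ℝ → ℝ} (hh : Integrable h μ01)
    (hg : AEStronglyMeasurable g μ01)
    (h0 : ∀ x ∈ Icc (0:ℝ) 1, 0 ≤ g x)
    (hb : ∀ x ∈ Icc (0:ℝ) 1, g x ≤ h x) :
    (∫ x in Icc (0:ℝ) 1, g x) ≤ ∫ x in Icc (0:ℝ) 1, h x := by
  refine integral_mono_of_nonneg ?_ hh ?_
  · exact (ae_restrict_iff' measurableSet_Icc).2 (ae_of_all _ h0)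
  · exact (ae_restrict_iff' measurableSet_Icc).2 (ae_of_all _ hb)

lemma setInt_nonneg {g : ℝ → ℝ} (hb : ∀ x ∈ Icc (0:ℝ) 1, 0 ≤ g x) :
    0 ≤ ∫ x in Icc (0:ℝ) 1, g x :=
  setIntegral_nonneg measurableSet_Icc hb

lemma abs_setInt_le {g : ℝ → ℝ} {C : ℝ} (hg : Integrable g μ01)
    (hb : ∀ x ∈ Icc (0:ℝ) 1, |g x| ≤ C) : |∫ x in Icc (0:ℝ) 1, g x| ≤ C := by
  calc |∫ x in Icc (0:ℝ) 1, g x| ≤ ∫ x in Icc (0:ℝ) 1, |g x| := by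
        simpa only [Real.norm_eq_abs] using norm_integral_le_integral_norm (μ := μ01) g
    _ ≤ C := setInt_le hg.abs hb


lemma opNorm_set_bddAbove (W : ℝ → ℝ → ℝ)
    (hW01 : ∀ x ∈ Icc (0:ℝ) 1, ∀ y ∈ Icc (0:ℝ) 1, W x y ∈ Icc (0:ℝ) 1) :
    BddAbove { r | ∃ f : ℝ → ℝ, Measurable f ∧ (∫ x in Icc (0:ℝ) 1, (f x) ^ 2) = 1 ∧
      r = Real.sqrt (∫ x in Icc (0:ℝ) 1, (∫ y in Icc (0:ℝ) 1, W x y * f y) ^ 2) } := by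
  refine ⟨1, ?_⟩
  rintro r ⟨f, hfm, hf2, rfl⟩
  have hf2int : Integrable (fun x => f x ^ 2) μ01 := by
    by_contra h
    rw [integral_undef h] at hf2
    norm_num at hf2
  have hfabs : Integrable (fun x => |f x|) μ01 := by
    refine Integrable.mono' (((integrable_const (1:ℝ)).add hf2int).div_const 2)
      (hfm.abs.aestronglyMeasurable) (ae_of_all _ fun x => ?_)
    simp only [Pi.add_apply, Pi.one_apply]
    rw [Real.norm_eq_abs, abs_abs]
    nlinarith [sq_nonneg (|f x| - 1), sq_abs (f x)]
  have habs1 : (∫ y in Icc (0:ℝ) 1, |f y|) ≤ 1 := by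
    have h := sqrt_cs (α := ℝ) μ01 (g := fun x => |f x|) (h := fun _ => (1:ℝ))
      hfm.abs.aestronglyMeasurable aestronglyMeasurable_const
      (ae_of_all _ fun x => abs_nonneg _) (ae_of_all _ fun _ => zero_le_one)
      (by simpa [sq_abs] using hf2int) (by simpa using (integrable_const (1:ℝ) : Integrable _ μ01))
    have e1 : (∫ x, |f x| * 1 ∂μ01) = ∫ y in Icc (0:ℝ) 1, |f y| := by simp
    have e2 : (∫ x, |f x| ^ 2 ∂μ01) = 1 := by
      rw [show (fun x => |f x| ^ 2) = fun x => f x ^ 2 from funext fun x => sq_abs _]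
      exact hf2
    have e3 : (∫ _ : ℝ, (1:ℝ) ^ 2 ∂μ01) = 1 := by simpa using int_const01 1
    rw [e1, e2, e3, Real.sqrt_one, mul_one] at h
    exact h
  have hpt : ∀ x ∈ Icc (0:ℝ) 1, |∫ y in Icc (0:ℝ) 1, W x y * f y| ≤ 1 := by
    intro x hx
    have h1 : |∫ y in Icc (0:ℝ) 1, W x y * f y| ≤ ∫ y in Icc (0:ℝ) 1, |W x y * f y| := by
      simpa only [Real.norm_eq_abs] using
        norm_integral_le_integral_norm (μ := μ01) (fun y => W x y * f y)
    have h2 : (∫ y in Icc (0:ℝ) 1, |W x y * f y|) ≤ ∫ y in Icc (0:ℝ) 1, |f y| := by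
      refine integral_mono_of_nonneg (ae_of_all _ fun y => abs_nonneg _) hfabs ?_
      refine (ae_restrict_iff' measurableSet_Icc).2 (ae_of_all _ fun y hy => ?_)
      show |W x y * f y| ≤ |f y|
      rw [abs_mul]
      have hW := hW01 x hx y hy
      calc |W x y| * |f y| ≤ 1 * |f y| := by
            apply mul_le_mul_of_nonneg_right _ (abs_nonneg _)
            rw [abs_le]; exact ⟨by linarith [hW.1], hW.2⟩
        _ = |f y| := one_mul _
    linarith
  have hsq : (∫ x in Icc (0:ℝ) 1, (∫ y in Icc (0:ℝ) 1, W x y * f y) ^ 2) ≤ 1 := by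
    by_cases hI : Integrable (fun x => (∫ y in Icc (0:ℝ) 1, W x y * f y) ^ 2) μ01
    · refine setInt_le hI fun x hx => ?_
      have := hpt x hx
      nlinarith [abs_nonneg (∫ y in Icc (0:ℝ) 1, W x y * f y),
        sq_abs (∫ y in Icc (0:ℝ) 1, W x y * f y)]
    · rw [integral_undef hI]; norm_num
  simpa using Real.sqrt_le_one.2 hsq

lemma antitoneOn_of_hasDerivAt_nonpos {f : ℝ → ℝ} {c : ℝ} (hc : 0 < c)
    (hder : ∀ t, 0 < t → ∃ v, HasDerivAt f v t ∧ (c ≤ t → v ≤ 0)) :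
    AntitoneOn f (Ici c) := by
  refine antitoneOn_of_deriv_nonpos (convex_Ici c) ?_ ?_ ?_
  · intro t ht
    obtain ⟨v, hv, -⟩ := hder t (lt_of_lt_of_le hc ht)
    exact hv.continuousAt.continuousWithinAt
  · intro t ht
    rw [interior_Ici] at ht
    obtain ⟨v, hv, -⟩ := hder t (hc.trans ht)
    exact hv.differentiableAt.differentiableWithinAt
  · intro t ht
    rw [interior_Ici] at ht
    obtain ⟨v, hv, hv0⟩ := hder t (hc.trans ht)
    rw [hv.deriv]
    exact hv0 ht.le

section main

variable (W : ℝ → ℝ → ℝ) (β : ℝ) (u : ℝ → ℝ → ℝ)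

noncomputable def Wuf (t x : ℝ) : ℝ := ∫ y in Icc (0:ℝ) 1, W x y * u t y
noncomputable def Dv (t x : ℝ) : ℝ := -(u t x) + β * (1 - u t x) * Wuf W u t x
noncomputable def Ef (t : ℝ) : ℝ := ∫ x in Icc (0:ℝ) 1, u t x
noncomputable def Qf (t : ℝ) : ℝ := ∫ x in Icc (0:ℝ) 1, u t x * Wuf W u t x
noncomputable def af (t : ℝ) : ℝ := ∫ x in Icc (0:ℝ) 1, u t x ^ 2 * Wuf W u t x
noncomputable def Mf (t : ℝ) : ℝ := ∫ x in Icc (0:ℝ) 1, u t x ^ 2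
noncomputable def Yf (t : ℝ) : ℝ := ∫ x in Icc (0:ℝ) 1, u t x ^ 3
noncomputable def Ga (T : ℝ) : ℝ := ∫ τ in (1:ℝ)..T, af W u τ
noncomputable def Gb (T : ℝ) : ℝ := ∫ τ in (1:ℝ)..T, Real.exp (3*τ) * af W u τ

variable {W β u}
variable (hWmeas : Measurable (fun p : ℝ × ℝ => W p.1 p.2))
  (hW01 : ∀ x ∈ Icc (0:ℝ) 1, ∀ y ∈ Icc (0:ℝ) 1, W x y ∈ Icc (0:ℝ) 1)
  (hbox : ∀ t : ℝ, 0 ≤ t → ∀ x ∈ Icc (0:ℝ) 1, u t x ∈ Icc (0:ℝ) 1)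
  (hmeas : ∀ t : ℝ, 0 ≤ t → Measurable (u t))
  (hβ : 0 < β)

section
include hWmeas hW01 hbox hmeas hβ

lemma wu_meas {t : ℝ} (ht : 0 ≤ t) : Measurable (Wuf W u t) := by
  have h : StronglyMeasurable (Function.uncurry (fun x y => W x y * u t y)) := by
    apply Measurable.stronglyMeasurable
    exact hWmeas.mul ((hmeas t ht).comp measurable_snd)
  exact (h.integral_prod_right (ν := μ01)).measurable
lemma uWy_int {t x : ℝ} (ht : 0 ≤ t) (hx : x ∈ Icc (0:ℝ) 1) :
    Integrable (fun y => W x y * u t y) μ01 := by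
  have hWx : Measurable (fun y => W x y) :=
    hWmeas.comp (measurable_const.prodMk measurable_id)
  refine intOn (C := 1) ((hWx.mul (hmeas t ht)).aestronglyMeasurable) fun y hy => ?_
  have h1 := hW01 x hx y hy
  have h2 := hbox t ht y hy
  rw [Real.norm_eq_abs, abs_mul]
  calc |W x y| * |u t y| ≤ 1 * 1 := by
        apply mul_le_mul _ _ (abs_nonneg _) zero_le_one <;>
          rw [abs_le] <;> constructor <;> linarith [h1.1, h1.2, h2.1, h2.2]
    _ = 1 := one_mul 1

lemma wu_mem {t x : ℝ} (ht : 0 ≤ t) (hx : x ∈ Icc (0:ℝ) 1) :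
    Wuf W u t x ∈ Icc (0:ℝ) 1 := by
  constructor
  · exact setInt_nonneg fun y hy =>
      mul_nonneg (hW01 x hx y hy).1 (hbox t ht y hy).1
  · refine setInt_le (uWy_int hWmeas hW01 hbox hmeas hβ ht hx) fun y hy => ?_
    have h1 := hW01 x hx y hy
    have h2 := hbox t ht y hy
    nlinarith [h1.1, h1.2, h2.1, h2.2]

lemma wu_le_Ef {t x : ℝ} (ht : 0 ≤ t) (hx : x ∈ Icc (0:ℝ) 1) :
    Wuf W u t x ≤ Ef u t := by
  refine setInt_mono (intOn (C := 1) (hmeas t ht).aestronglyMeasurable fun y hy => ?_)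
    ((uWy_int hWmeas hW01 hbox hmeas hβ ht hx).aestronglyMeasurable) ?_ ?_
  · rw [Real.norm_eq_abs, abs_le]
    have h2 := hbox t ht y hy
    exact ⟨by linarith [h2.1], h2.2⟩
  · exact fun y hy => mul_nonneg (hW01 x hx y hy).1 (hbox t ht y hy).1
  · intro y hy
    have h1 := hW01 x hx y hy
    have h2 := hbox t ht y hy
    nlinarith [h1.1, h1.2, h2.1, h2.2]

lemma d_bound {t x : ℝ} (ht : 0 ≤ t) (hx : x ∈ Icc (0:ℝ) 1) :
    |Dv W β u t x| ≤ 1 + β := by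
  have h1 := hbox t ht x hx
  have h2 := wu_mem hWmeas hW01 hbox hmeas hβ ht hx
  have hβ' : 0 ≤ β := le_of_lt hβ
  rw [Dv, abs_le]
  have hp : 0 ≤ (1 - u t x) * Wuf W u t x := mul_nonneg (by linarith [h1.2]) h2.1
  have hq : (1 - u t x) * Wuf W u t x ≤ 1 := by nlinarith [h1.1, h1.2, h2.1, h2.2]
  constructor <;>
    nlinarith [mul_le_mul_of_nonneg_left hq hβ', mul_nonneg hβ' hp, h1.1, h1.2]

end

variable (hderiv : ∀ t : ℝ, 0 ≤ t → ∀ x ∈ Icc (0:ℝ) 1,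
    HasDerivAt (fun τ => u τ x) (Dv W β u t x) t)

section
include hWmeas hW01 hbox hmeas hβ hderiv

lemma u_lip {x : ℝ} (hx : x ∈ Icc (0:ℝ) 1) {s t : ℝ} (hs : 0 ≤ s) (ht : 0 ≤ t) :
    |u t x - u s x| ≤ (1 + β) * |t - s| := by
  have := Convex.norm_image_sub_le_of_norm_hasDerivWithin_le
    (f := fun τ => u τ x) (f' := fun τ => Dv W β u τ x) (s := Ici (0:ℝ)) (C := 1 + β)
    (fun τ hτ => (hderiv τ hτ x hx).hasDerivWithinAt)
    (fun τ hτ => by rw [Real.norm_eq_abs]; exact d_bound hWmeas hW01 hbox hmeas hβ hτ hx)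
    (convex_Ici 0) hs ht
  simpa [Real.norm_eq_abs] using this

lemma d_meas {t : ℝ} (ht : 0 ≤ t) : Measurable (Dv W β u t) := by
  have h1 := hmeas t ht
  have h2 := wu_meas hWmeas hW01 hbox hmeas hβ ht
  exact (h1.neg).add (((measurable_const.sub h1).const_mul β).mul h2)

lemma wu_lip {x : ℝ} (hx : x ∈ Icc (0:ℝ) 1) {s t : ℝ} (hs : 0 ≤ s) (ht : 0 ≤ t) :
    |Wuf W u t x - Wuf W u s x| ≤ (1 + β) * |t - s| := by
  have hit := uWy_int hWmeas hW01 hbox hmeas hβ ht hx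
  have his := uWy_int hWmeas hW01 hbox hmeas hβ hs hx
  have heq : Wuf W u t x - Wuf W u s x
      = ∫ y in Icc (0:ℝ) 1, (W x y * u t y - W x y * u s y) :=
    (integral_sub hit his).symm
  rw [heq]
  refine abs_setInt_le (hit.sub his) fun y hy => ?_
  have h1 := hW01 x hx y hy
  have h2 := u_lip hWmeas hW01 hbox hmeas hβ hderiv hy hs ht
  calc |W x y * u t y - W x y * u s y| = |W x y| * |u t y - u s y| := by
        rw [← abs_mul]; ring_nf
    _ ≤ 1 * ((1 + β) * |t - s|) := by
        apply mul_le_mul _ h2 (abs_nonneg _) zero_le_one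
        rw [abs_le]; exact ⟨by linarith [h1.1], h1.2⟩
    _ = (1 + β) * |t - s| := one_mul _

lemma af_lip {s t : ℝ} (hs : 0 ≤ s) (ht : 0 ≤ t) :
    |(∫ x in Icc (0:ℝ) 1, u t x ^ 2 * Wuf W u t x)
      - ∫ x in Icc (0:ℝ) 1, u s x ^ 2 * Wuf W u s x| ≤ (3 * (1 + β)) * |t - s| := by
  have key : ∀ r, 0 ≤ r → Integrable (fun x => u r x ^ 2 * Wuf W u r x) μ01 := by
    intro r hr
    refine intOn (C := 1) (((hmeas r hr).pow_const 2).mul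
      (wu_meas hWmeas hW01 hbox hmeas hβ hr)).aestronglyMeasurable fun x hx => ?_
    have h1 := hbox r hr x hx
    have h2 := wu_mem hWmeas hW01 hbox hmeas hβ hr hx
    rw [Real.norm_eq_abs, abs_of_nonneg (mul_nonneg (sq_nonneg _) h2.1)]
    nlinarith [h1.1, h1.2, h2.1, h2.2]
  have heq : (∫ x in Icc (0:ℝ) 1, u t x ^ 2 * Wuf W u t x)
      - ∫ x in Icc (0:ℝ) 1, u s x ^ 2 * Wuf W u s x
      = ∫ x in Icc (0:ℝ) 1, (u t x ^ 2 * Wuf W u t x - u s x ^ 2 * Wuf W u s x) :=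
    (integral_sub (key t ht) (key s hs)).symm
  rw [heq]
  refine abs_setInt_le ((key t ht).sub (key s hs)) fun x hx => ?_
  have h1 := hbox t ht x hx
  have h2 := hbox s hs x hx
  have h3 := wu_mem hWmeas hW01 hbox hmeas hβ ht hx
  have h4 := wu_mem hWmeas hW01 hbox hmeas hβ hs hx
  have h5 := u_lip hWmeas hW01 hbox hmeas hβ hderiv hx hs ht
  have h6 := wu_lip hWmeas hW01 hbox hmeas hβ hderiv hx hs ht
  have e1 : u t x ^ 2 * Wuf W u t x - u s x ^ 2 * Wuf W u s x
      = (u t x - u s x) * ((u t x + u s x) * Wuf W u t x)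
        + u s x ^ 2 * (Wuf W u t x - Wuf W u s x) := by ring
  rw [e1]
  have b1 : |(u t x - u s x) * ((u t x + u s x) * Wuf W u t x)|
      ≤ (1 + β) * |t - s| * 2 := by
    rw [abs_mul]
    have : |(u t x + u s x) * Wuf W u t x| ≤ 2 := by
      rw [abs_mul]
      have ha : |u t x + u s x| ≤ 2 := by rw [abs_le]; constructor <;> linarith [h1.1, h1.2, h2.1, h2.2]
      have hb : |Wuf W u t x| ≤ 1 := by rw [abs_le]; exact ⟨by linarith [h3.1], h3.2⟩
      nlinarith [abs_nonneg (u t x + u s x)]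
    nlinarith [abs_nonneg (u t x - u s x), abs_nonneg ((u t x + u s x) * Wuf W u t x),
      mul_le_mul h5 this (abs_nonneg _) (by positivity)]
  have b2 : |u s x ^ 2 * (Wuf W u t x - Wuf W u s x)| ≤ (1 + β) * |t - s| := by
    rw [abs_mul]
    have ha : |u s x ^ 2| ≤ 1 := by
      rw [abs_le]; constructor <;> nlinarith [h2.1, h2.2]
    nlinarith [abs_nonneg (Wuf W u t x - Wuf W u s x), abs_nonneg (u s x ^ 2)]
  calc |(u t x - u s x) * ((u t x + u s x) * Wuf W u t x)
        + u s x ^ 2 * (Wuf W u t x - Wuf W u s x)|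
      ≤ |(u t x - u s x) * ((u t x + u s x) * Wuf W u t x)|
        + |u s x ^ 2 * (Wuf W u t x - Wuf W u s x)| := abs_add_le _ _
    _ ≤ (3 * (1 + β)) * |t - s| := by linarith

lemma pow_int_hasDeriv (n : ℕ) {t : ℝ} (ht : 0 < t) :
    HasDerivAt (fun τ => ∫ x in Icc (0:ℝ) 1, u τ x ^ n)
      (∫ x in Icc (0:ℝ) 1, (n : ℝ) * u t x ^ (n - 1) * Dv W β u t x) t := by
  have main := hasDerivAt_integral_of_dominated_loc_of_deriv_le (μ := μ01)
    (F := fun τ x => u τ x ^ n)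
    (F' := fun τ x => (n : ℝ) * u τ x ^ (n - 1) * Dv W β u τ x)
    (x₀ := t) (bound := fun _ => (n : ℝ) * (1 + β)) (s := Metric.ball t t) (Metric.ball_mem_nhds t ht)
    ?_ ?_ ?_ ?_ ?_ ?_
  · exact main.2
  · filter_upwards [eventually_gt_nhds ht] with τ hτ
    exact ((hmeas τ hτ.le).pow_const n).aestronglyMeasurable
  · refine intOn (C := 1) ((hmeas t ht.le).pow_const n).aestronglyMeasurable fun x hx => ?_
    have h1 := hbox t ht.le x hx
    rw [Real.norm_eq_abs, abs_of_nonneg (pow_nonneg h1.1 n)]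
    exact pow_le_one₀ h1.1 h1.2
  · exact ((((hmeas t ht.le).pow_const (n-1)).const_mul _).mul
      (d_meas hWmeas hW01 hbox hmeas hβ hderiv ht.le)).aestronglyMeasurable
  · refine (ae_restrict_iff' (measurableSet_Icc : MeasurableSet (Icc (0:ℝ) 1))).2 (ae_of_all _ ?_)
    intro x hx τ hτ
    have hτ0 : 0 ≤ τ := by
      have := Metric.mem_ball.1 hτ
      rw [Real.dist_eq, abs_lt] at this
      linarith [this.1]
    have h1 := hbox τ hτ0 x hx
    have h2 := d_bound hWmeas hW01 hbox hmeas hβ hτ0 hx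
    rw [Real.norm_eq_abs, abs_mul, abs_mul]
    have hn : |(n:ℝ)| = (n:ℝ) := abs_of_nonneg (Nat.cast_nonneg n)
    have hup : |u τ x ^ (n-1)| ≤ 1 := by
      rw [abs_of_nonneg (pow_nonneg h1.1 (n-1))]
      exact pow_le_one₀ h1.1 h1.2
    rw [hn]
    calc (n:ℝ) * |u τ x ^ (n-1)| * |Dv W β u τ x| ≤ (n:ℝ) * 1 * (1 + β) := by
          apply mul_le_mul _ h2 (abs_nonneg _) (by positivity)
          exact mul_le_mul_of_nonneg_left hup (Nat.cast_nonneg n)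
      _ = (n:ℝ) * (1 + β) := by ring
  · exact integrable_const _
  · refine (ae_restrict_iff' (measurableSet_Icc : MeasurableSet (Icc (0:ℝ) 1))).2 (ae_of_all _ ?_)
    intro x hx τ hτ
    have hτ0 : 0 ≤ τ := by
      have := Metric.mem_ball.1 hτ
      rw [Real.dist_eq, abs_lt] at this
      linarith [this.1]
    exact (hderiv τ hτ0 x hx).pow n

end


section
include hWmeas hW01 hbox hmeas hβ hderiv

lemma int_u {t : ℝ} (ht : 0 ≤ t) : Integrable (u t) μ01 := by
  refine intOn (C := 1) (hmeas t ht).aestronglyMeasurable fun x hx => ?_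
  have h := hbox t ht x hx
  rw [Real.norm_eq_abs, abs_le]; exact ⟨by linarith [h.1], h.2⟩

lemma int_upow {t : ℝ} (ht : 0 ≤ t) (n : ℕ) : Integrable (fun x => u t x ^ n) μ01 := by
  refine intOn (C := 1) ((hmeas t ht).pow_const n).aestronglyMeasurable fun x hx => ?_
  have h := hbox t ht x hx
  rw [Real.norm_eq_abs, abs_of_nonneg (pow_nonneg h.1 n)]
  exact pow_le_one₀ h.1 h.2

lemma int_upowWu {t : ℝ} (ht : 0 ≤ t) (n : ℕ) :
    Integrable (fun x => u t x ^ n * Wuf W u t x) μ01 := by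
  refine intOn (C := 1) (((hmeas t ht).pow_const n).mul
    (wu_meas hWmeas hW01 hbox hmeas hβ ht)).aestronglyMeasurable fun x hx => ?_
  have h := hbox t ht x hx
  have h2 := wu_mem hWmeas hW01 hbox hmeas hβ ht hx
  rw [Real.norm_eq_abs, abs_of_nonneg (mul_nonneg (pow_nonneg h.1 n) h2.1)]
  calc u t x ^ n * Wuf W u t x ≤ 1 * 1 :=
        mul_le_mul (pow_le_one₀ h.1 h.2) h2.2 h2.1 zero_le_one
    _ = 1 := one_mul 1

lemma int_uWu {t : ℝ} (ht : 0 ≤ t) :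
    Integrable (fun x => u t x * Wuf W u t x) μ01 := by
  have := int_upowWu hWmeas hW01 hbox hmeas hβ hderiv ht 1
  simpa using this

omit hWmeas hW01 hbox hmeas hβ hderiv in
lemma Mf_nonneg {t : ℝ} : 0 ≤ Mf u t := setInt_nonneg fun x _ => sq_nonneg _

lemma Mf_le_one {t : ℝ} (ht : 0 ≤ t) : Mf u t ≤ 1 := by
  refine setInt_le (int_upow hWmeas hW01 hbox hmeas hβ hderiv ht 2) fun x hx => ?_
  have h := hbox t ht x hx
  nlinarith [h.1, h.2]

omit hWmeas hW01 hmeas hβ hderiv in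
lemma Yf_nonneg {t : ℝ} (ht : 0 ≤ t) : 0 ≤ Yf u t :=
  setInt_nonneg fun x hx => pow_nonneg (hbox t ht x hx).1 3

lemma Yf_le_one {t : ℝ} (ht : 0 ≤ t) : Yf u t ≤ 1 := by
  refine setInt_le (int_upow hWmeas hW01 hbox hmeas hβ hderiv ht 3) fun x hx => ?_
  have h := hbox t ht x hx
  exact pow_le_one₀ h.1 h.2

omit hderiv in
lemma af_nonneg {t : ℝ} (ht : 0 ≤ t) : 0 ≤ af W u t :=
  setInt_nonneg fun x hx => mul_nonneg (sq_nonneg _)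
    (wu_mem hWmeas hW01 hbox hmeas hβ ht hx).1

-- the operator norm bound: β * Qf t ≤ Mf t
lemma Q_le (hsub : β * opNorm2 W ≤ 1) {t : ℝ} (ht : 0 ≤ t) :
    β * Qf W u t ≤ Mf u t := by
  have hm0 : 0 ≤ Mf u t := Mf_nonneg
  rcases eq_or_lt_of_le hm0 with hm | hm
  · -- M = 0 : u t = 0 a.e.
    have hint : Integrable (fun x => u t x ^ 2) μ01 :=
      int_upow hWmeas hW01 hbox hmeas hβ hderiv ht 2
    have hae : (fun x => u t x ^ 2) =ᵐ[μ01] 0 := by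
      refine (integral_eq_zero_iff_of_nonneg (fun x => sq_nonneg _) hint).1 hm.symm
    have hae' : u t =ᵐ[μ01] 0 := by
      filter_upwards [hae] with x hx
      have : u t x ^ 2 = 0 := hx
      exact (pow_eq_zero_iff two_ne_zero).1 this
    have hQ : Qf W u t = 0 := by
      rw [Qf]
      refine integral_eq_zero_of_ae ?_
      filter_upwards [hae'] with x hx
      have : u t x = 0 := hx
      simp [this]
    rw [hQ, ← hm, mul_zero]
  · -- M > 0
    set m := Mf u t with hmdef
    set c := (Real.sqrt m)⁻¹ with hcdef
    have hsm : 0 < Real.sqrt m := Real.sqrt_pos.2 hm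
    have hc : 0 < c := inv_pos.2 hsm
    have hc2 : c ^ 2 = m⁻¹ := by
      rw [hcdef, inv_pow, Real.sq_sqrt hm.le]
    have hf2 : (∫ x in Icc (0:ℝ) 1, (u t x * c) ^ 2) = 1 := by
      have e : (fun x => (u t x * c) ^ 2) = fun x => (u t x ^ 2) * c ^ 2 :=
        funext fun x => by ring
      rw [e, integral_mul_const, hc2]
      exact mul_inv_cancel₀ (ne_of_gt hm)
    have hWfc : ∀ x : ℝ, (∫ y in Icc (0:ℝ) 1, W x y * (u t y * c))
        = Wuf W u t x * c := by
      intro x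
      have e : (fun y => W x y * (u t y * c)) = fun y => (W x y * u t y) * c :=
        funext fun y => by ring
      rw [e, integral_mul_const, Wuf]
    have hmem : Real.sqrt (∫ x in Icc (0:ℝ) 1,
        (∫ y in Icc (0:ℝ) 1, W x y * (u t y * c)) ^ 2)
        ∈ { r | ∃ f : ℝ → ℝ, Measurable f ∧ (∫ x in Icc (0:ℝ) 1, (f x) ^ 2) = 1 ∧
          r = Real.sqrt (∫ x in Icc (0:ℝ) 1, (∫ y in Icc (0:ℝ) 1, W x y * f y) ^ 2) } :=
      ⟨fun y => u t y * c, (hmeas t ht).mul_const c, hf2, rfl⟩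
    have hle := le_csSup (opNorm_set_bddAbove W hW01) hmem
    rw [show sSup { r | ∃ f : ℝ → ℝ, Measurable f ∧ (∫ x in Icc (0:ℝ) 1, (f x) ^ 2) = 1 ∧
          r = Real.sqrt (∫ x in Icc (0:ℝ) 1, (∫ y in Icc (0:ℝ) 1, W x y * f y) ^ 2) }
        = opNorm2 W from rfl] at hle
    have hval : (∫ x in Icc (0:ℝ) 1, (∫ y in Icc (0:ℝ) 1, W x y * (u t y * c)) ^ 2)
        = (∫ x in Icc (0:ℝ) 1, (Wuf W u t x) ^ 2) * c ^ 2 := by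
      have e : (fun x => (∫ y in Icc (0:ℝ) 1, W x y * (u t y * c)) ^ 2)
          = fun x => ((Wuf W u t x) ^ 2) * c ^ 2 := by
        funext x; rw [hWfc x]; ring
      rw [e, integral_mul_const]
    have hWu2nn : 0 ≤ ∫ x in Icc (0:ℝ) 1, (Wuf W u t x) ^ 2 :=
      setInt_nonneg fun x _ => sq_nonneg _
    have hsqrtval : Real.sqrt (∫ x in Icc (0:ℝ) 1,
        (∫ y in Icc (0:ℝ) 1, W x y * (u t y * c)) ^ 2)
        = Real.sqrt (∫ x in Icc (0:ℝ) 1, (Wuf W u t x) ^ 2) * c := by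
      rw [hval, Real.sqrt_mul hWu2nn, Real.sqrt_sq hc.le]
    rw [hsqrtval] at hle
    -- so sqrt(∫ Wu²) ≤ opNorm2 W * sqrt m
    have hWuL2 : Real.sqrt (∫ x in Icc (0:ℝ) 1, (Wuf W u t x) ^ 2)
        ≤ opNorm2 W * Real.sqrt m := by
      have := mul_le_mul_of_nonneg_right hle hsm.le
      rwa [mul_assoc, hcdef, inv_mul_cancel₀ (ne_of_gt hsm), mul_one] at this
    -- Cauchy-Schwarz
    have hCS : Qf W u t ≤ Real.sqrt m * Real.sqrt (∫ x in Icc (0:ℝ) 1, (Wuf W u t x) ^ 2) := by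
      refine sqrt_cs μ01 (hmeas t ht).aestronglyMeasurable
        (wu_meas hWmeas hW01 hbox hmeas hβ ht).aestronglyMeasurable
        ((ae_restrict_iff' measurableSet_Icc).2 (ae_of_all _ fun x hx => (hbox t ht x hx).1))
        ((ae_restrict_iff' measurableSet_Icc).2 (ae_of_all _ fun x hx =>
          (wu_mem hWmeas hW01 hbox hmeas hβ ht hx).1))
        (int_upow hWmeas hW01 hbox hmeas hβ hderiv ht 2) ?_
      refine intOn (C := 1) ((wu_meas hWmeas hW01 hbox hmeas hβ ht).pow_const
        2).aestronglyMeasurable fun x hx => ?_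
      have h2 := wu_mem hWmeas hW01 hbox hmeas hβ ht hx
      rw [Real.norm_eq_abs, abs_of_nonneg (sq_nonneg _)]
      nlinarith [h2.1, h2.2]
    have hQm : Qf W u t ≤ opNorm2 W * m := by
      calc Qf W u t ≤ Real.sqrt m * Real.sqrt (∫ x in Icc (0:ℝ) 1, (Wuf W u t x) ^ 2) := hCS
        _ ≤ Real.sqrt m * (opNorm2 W * Real.sqrt m) :=
            mul_le_mul_of_nonneg_left hWuL2 hsm.le
        _ = opNorm2 W * (Real.sqrt m * Real.sqrt m) := by ring
        _ = opNorm2 W * m := by rw [Real.mul_self_sqrt hm.le]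
    calc β * Qf W u t ≤ β * (opNorm2 W * m) := mul_le_mul_of_nonneg_left hQm hβ.le
      _ = (β * opNorm2 W) * m := by ring
      _ ≤ 1 * m := mul_le_mul_of_nonneg_right hsub hm0
      _ = m := one_mul m

end


section
include hWmeas hW01 hbox hmeas hβ hderiv

lemma int_P {t : ℝ} (ht : 0 ≤ t) :
    Integrable (fun x => u t x ^ 2 * (1 - u t x) * Wuf W u t x) μ01 := by
  refine intOn (C := 1) ((((hmeas t ht).pow_const 2).mul
    (measurable_const.sub (hmeas t ht))).mul
    (wu_meas hWmeas hW01 hbox hmeas hβ ht)).aestronglyMeasurable fun x hx => ?_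
  have h := hbox t ht x hx
  have h2 := wu_mem hWmeas hW01 hbox hmeas hβ ht hx
  have hnn : 0 ≤ u t x ^ 2 * (1 - u t x) * Wuf W u t x :=
    mul_nonneg (mul_nonneg (sq_nonneg _) (by linarith [h.2])) h2.1
  rw [Real.norm_eq_abs, abs_of_nonneg hnn]
  have e2 : u t x ^ 2 * (1 - u t x) ≤ 1 := by nlinarith [h.1, h.2, sq_nonneg (u t x)]
  have e3 : 0 ≤ u t x ^ 2 * (1 - u t x) := mul_nonneg (sq_nonneg _) (by linarith [h.2])
  calc u t x ^ 2 * (1 - u t x) * Wuf W u t x ≤ 1 * 1 :=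
        mul_le_mul e2 h2.2 h2.1 zero_le_one
    _ = 1 := one_mul 1

lemma M_deriv (hsub : β * opNorm2 W ≤ 1) {t : ℝ} (ht : 0 < t) :
    ∃ v, HasDerivAt (Mf u) v t ∧ v ≤ -(2*β) * af W u t := by
  have h := pow_int_hasDeriv hWmeas hW01 hbox hmeas hβ hderiv 2 ht
  refine ⟨_, h, ?_⟩
  have e : (fun x => ((2:ℕ):ℝ) * u t x ^ (2-1) * Dv W β u t x)
      = fun x => (-2)*(u t x ^ 2) + ((2*β)*(u t x * Wuf W u t x)
          + (-(2*β))*(u t x ^ 2 * Wuf W u t x)) := by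
    funext x; rw [Dv]; push_cast; ring
  have h1 : Integrable (fun x => (-2:ℝ)*(u t x ^ 2)) μ01 :=
    (int_upow hWmeas hW01 hbox hmeas hβ hderiv ht.le 2).const_mul _
  have h2 : Integrable (fun x => (2*β)*(u t x * Wuf W u t x)) μ01 :=
    (int_uWu hWmeas hW01 hbox hmeas hβ hderiv ht.le).const_mul _
  have h3 : Integrable (fun x => (-(2*β))*(u t x ^ 2 * Wuf W u t x)) μ01 :=
    (int_upowWu hWmeas hW01 hbox hmeas hβ hderiv ht.le 2).const_mul _
  have h23 : Integrable (fun x => (2*β)*(u t x * Wuf W u t x)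
      + (-(2*β))*(u t x ^ 2 * Wuf W u t x)) μ01 := h2.add h3
  rw [e, integral_add h1 h23, integral_add h2 h3,
    integral_const_mul, integral_const_mul, integral_const_mul]
  have hQ := Q_le hWmeas hW01 hbox hmeas hβ hderiv hsub ht.le
  have hM : (∫ x in Icc (0:ℝ) 1, u t x ^ 2) = Mf u t := rfl
  have hQ' : (∫ x in Icc (0:ℝ) 1, u t x * Wuf W u t x) = Qf W u t := rfl
  have ha' : (∫ x in Icc (0:ℝ) 1, u t x ^ 2 * Wuf W u t x) = af W u t := rfl
  rw [hM, hQ', ha']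
  have hM0 := Mf_nonneg (u := u) (t := t)
  linarith

lemma Y_deriv {t : ℝ} (ht : 0 < t) :
    ∃ v, HasDerivAt (Yf u) v t ∧ v ≤ -3 * Yf u t + (3*β) * af W u t := by
  have h := pow_int_hasDeriv hWmeas hW01 hbox hmeas hβ hderiv 3 ht
  refine ⟨_, h, ?_⟩
  have e : (fun x => ((3:ℕ):ℝ) * u t x ^ (3-1) * Dv W β u t x)
      = fun x => (-3)*(u t x ^ 3) + (3*β)*(u t x ^ 2 * (1 - u t x) * Wuf W u t x) := by
    funext x; rw [Dv]; push_cast; ring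
  have h1 : Integrable (fun x => (-3:ℝ)*(u t x ^ 3)) μ01 :=
    (int_upow hWmeas hW01 hbox hmeas hβ hderiv ht.le 3).const_mul _
  have h2 : Integrable (fun x => (3*β)*(u t x ^ 2 * (1 - u t x) * Wuf W u t x)) μ01 :=
    (int_P hWmeas hW01 hbox hmeas hβ hderiv ht.le).const_mul _
  rw [e, integral_add h1 h2, integral_const_mul, integral_const_mul]
  have hY : (∫ x in Icc (0:ℝ) 1, u t x ^ 3) = Yf u t := rfl
  rw [hY]
  have hPa : (∫ x in Icc (0:ℝ) 1, u t x ^ 2 * (1 - u t x) * Wuf W u t x) ≤ af W u t := by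
    rw [af]
    refine setInt_mono (int_upowWu hWmeas hW01 hbox hmeas hβ hderiv ht.le 2)
      (int_P hWmeas hW01 hbox hmeas hβ hderiv ht.le).aestronglyMeasurable
      (fun x hx => ?_) (fun x hx => ?_)
    · have h1 := hbox t ht.le x hx
      have h2 := wu_mem hWmeas hW01 hbox hmeas hβ ht.le hx
      exact mul_nonneg (mul_nonneg (sq_nonneg _) (by linarith [h1.2])) h2.1
    · have h1 := hbox t ht.le x hx
      have h2 := wu_mem hWmeas hW01 hbox hmeas hβ ht.le hx
      nlinarith [mul_nonneg (mul_nonneg (sq_nonneg (u t x)) h1.1) h2.1]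
  nlinarith [hPa]

lemma af_contOn : ContinuousOn (af W u) (Ici 0) := by
  have hL : LipschitzOnWith (Real.toNNReal (3*(1+β))) (af W u) (Ici 0) := by
    refine LipschitzOnWith.of_dist_le_mul fun t ht s hs => ?_
    rw [Real.dist_eq, Real.dist_eq, Real.coe_toNNReal _ (by positivity)]
    exact af_lip hWmeas hW01 hbox hmeas hβ hderiv hs ht
  exact hL.continuousOn

lemma af_contAt {τ : ℝ} (hτ : 0 < τ) : ContinuousAt (af W u) τ :=
  (af_contOn hWmeas hW01 hbox hmeas hβ hderiv).continuousAt (Ici_mem_nhds hτ)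

lemma af_ii {b c : ℝ} (hb : 0 < b) (hc : 0 < c) :
    IntervalIntegrable (af W u) volume b c := by
  refine ContinuousOn.intervalIntegrable ?_
  refine (af_contOn hWmeas hW01 hbox hmeas hβ hderiv).mono fun x hx => ?_
  exact le_trans (le_min hb.le hc.le) hx.1

lemma eaf_contOn : ContinuousOn (fun τ => Real.exp (3*τ) * af W u τ) (Ici 0) :=
  ((Real.continuous_exp.comp (continuous_const.mul continuous_id)).continuousOn).mul
    (af_contOn hWmeas hW01 hbox hmeas hβ hderiv)

lemma eaf_ii {b c : ℝ} (hb : 0 < b) (hc : 0 < c) :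
    IntervalIntegrable (fun τ => Real.exp (3*τ) * af W u τ) volume b c := by
  refine ContinuousOn.intervalIntegrable ?_
  refine (eaf_contOn hWmeas hW01 hbox hmeas hβ hderiv).mono fun x hx => ?_
  exact le_trans (le_min hb.le hc.le) hx.1

end

section
include hWmeas hW01 hbox hmeas hβ hderiv

lemma Ga_deriv {T : ℝ} (hT : 0 < T) : HasDerivAt (Ga W u) (af W u T) T := by
  refine intervalIntegral.integral_hasDerivAt_right
    (af_ii hWmeas hW01 hbox hmeas hβ hderiv one_pos hT) ?_
    (af_contAt hWmeas hW01 hbox hmeas hβ hderiv hT)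
  exact ContinuousOn.stronglyMeasurableAtFilter isOpen_Ioi
    ((af_contOn hWmeas hW01 hbox hmeas hβ hderiv).mono Ioi_subset_Ici_self) T hT

lemma Gb_deriv {T : ℝ} (hT : 0 < T) :
    HasDerivAt (Gb W u) (Real.exp (3*T) * af W u T) T := by
  refine intervalIntegral.integral_hasDerivAt_right
    (eaf_ii hWmeas hW01 hbox hmeas hβ hderiv one_pos hT) ?_ ?_
  · exact ContinuousOn.stronglyMeasurableAtFilter isOpen_Ioi
      ((eaf_contOn hWmeas hW01 hbox hmeas hβ hderiv).mono Ioi_subset_Ici_self) T hT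
  · exact ((Real.continuous_exp.comp (continuous_const.mul continuous_id)).continuousAt).mul
      (af_contAt hWmeas hW01 hbox hmeas hβ hderiv hT)

end


lemma Ef_nonneg (hbox : ∀ t : ℝ, 0 ≤ t → ∀ x ∈ Icc (0:ℝ) 1, u t x ∈ Icc (0:ℝ) 1)
    {t : ℝ} (ht : 0 ≤ t) : 0 ≤ Ef u t :=
  setInt_nonneg fun x hx => (hbox t ht x hx).1

section
include hWmeas hW01 hbox hmeas hβ hderiv

lemma Ga_nonneg_seg {R T : ℝ} (hR : 0 < R) (hRT : R ≤ T) :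
    0 ≤ ∫ τ in R..T, af W u τ :=
  intervalIntegral.integral_nonneg hRT fun τ hτ =>
    af_nonneg hWmeas hW01 hbox hmeas hβ (le_trans hR.le hτ.1)

lemma Ga_split {R T : ℝ} (hR : 0 < R) (hT : 0 < T) :
    Ga W u T = Ga W u R + ∫ τ in R..T, af W u τ := by
  rw [Ga, Ga]
  exact (intervalIntegral.integral_add_adjacent_intervals
    (af_ii hWmeas hW01 hbox hmeas hβ hderiv one_pos hR)
    (af_ii hWmeas hW01 hbox hmeas hβ hderiv hR hT)).symm

lemma Ga_le (hsub : β * opNorm2 W ≤ 1) {T : ℝ} (hT : 1 ≤ T) :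
    Ga W u T ≤ 1/(2*β) := by
  have hanti : AntitoneOn (fun T => Mf u T + (2*β) * Ga W u T) (Ici 1) := by
    refine antitoneOn_of_hasDerivAt_nonpos one_pos fun t ht => ?_
    obtain ⟨v, hv, hvle⟩ := M_deriv hWmeas hW01 hbox hmeas hβ hderiv hsub ht
    exact ⟨v + (2*β) * af W u t, hv.add ((Ga_deriv hWmeas hW01 hbox hmeas hβ hderiv
      ht).const_mul (2*β)), fun _ => by linarith⟩
  have h := hanti self_mem_Ici hT hT
  have hGa1 : Ga W u 1 = 0 := intervalIntegral.integral_same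
  simp only [hGa1, mul_zero, add_zero] at h
  have hM1 : Mf u 1 ≤ 1 := Mf_le_one hWmeas hW01 hbox hmeas hβ hderiv zero_le_one
  have hMT : (0:ℝ) ≤ Mf u T := Mf_nonneg
  rw [le_div_iff₀ (by positivity)]
  linarith

lemma Gb_bound {R T : ℝ} (hR : 1 ≤ R) (hRT : R ≤ T) :
    Gb W u T ≤ Real.exp (3*R) * Ga W u R
      + Real.exp (3*T) * (Ga W u T - Ga W u R) := by
  have h0R : (0:ℝ) < R := lt_of_lt_of_le one_pos hR
  have h0T : (0:ℝ) < T := lt_of_lt_of_le h0R hRT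
  have hsplit : Gb W u T = (∫ τ in (1:ℝ)..R, Real.exp (3*τ) * af W u τ)
      + ∫ τ in R..T, Real.exp (3*τ) * af W u τ := by
    rw [Gb]
    exact (intervalIntegral.integral_add_adjacent_intervals
      (eaf_ii hWmeas hW01 hbox hmeas hβ hderiv one_pos h0R)
      (eaf_ii hWmeas hW01 hbox hmeas hβ hderiv h0R h0T)).symm
  have hseg : (∫ τ in R..T, af W u τ) = Ga W u T - Ga W u R := by
    rw [Ga_split hWmeas hW01 hbox hmeas hβ hderiv h0R h0T]; ring
  have b1 : (∫ τ in (1:ℝ)..R, Real.exp (3*τ) * af W u τ)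
      ≤ Real.exp (3*R) * Ga W u R := by
    rw [Ga, ← intervalIntegral.integral_const_mul]
    refine intervalIntegral.integral_mono_on hR
      (eaf_ii hWmeas hW01 hbox hmeas hβ hderiv one_pos h0R)
      ((af_ii hWmeas hW01 hbox hmeas hβ hderiv one_pos h0R).const_mul _)
      fun τ hτ => ?_
    have ha := af_nonneg hWmeas hW01 hbox hmeas hβ (le_trans zero_le_one hτ.1)
    exact mul_le_mul_of_nonneg_right (Real.exp_le_exp.2 (by linarith [hτ.2])) ha
  have b2 : (∫ τ in R..T, Real.exp (3*τ) * af W u τ)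
      ≤ Real.exp (3*T) * (Ga W u T - Ga W u R) := by
    rw [← hseg, ← intervalIntegral.integral_const_mul]
    refine intervalIntegral.integral_mono_on hRT
      (eaf_ii hWmeas hW01 hbox hmeas hβ hderiv h0R h0T)
      ((af_ii hWmeas hW01 hbox hmeas hβ hderiv h0R h0T).const_mul _)
      fun τ hτ => ?_
    have ha := af_nonneg hWmeas hW01 hbox hmeas hβ (le_trans h0R.le hτ.1)
    exact mul_le_mul_of_nonneg_right (Real.exp_le_exp.2 (by linarith [hτ.2])) ha
  linarith

lemma Y_bound {T : ℝ} (hT : 1 ≤ T) :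
    Real.exp (3*T) * Yf u T ≤ Real.exp (3*1) * Yf u 1 + (3*β) * Gb W u T := by
  have hanti : AntitoneOn (fun s => Real.exp (3*s) * Yf u s - (3*β) * Gb W u s) (Ici 1) := by
    refine antitoneOn_of_hasDerivAt_nonpos one_pos fun t ht => ?_
    obtain ⟨v, hv, hvle⟩ := Y_deriv hWmeas hW01 hbox hmeas hβ hderiv ht
    have hexp : HasDerivAt (fun s : ℝ => Real.exp (3*s)) (Real.exp (3*t) * (3*1)) t :=
      HasDerivAt.exp ((hasDerivAt_id t).const_mul 3)
    have hmul : HasDerivAt (fun s => Real.exp (3*s) * Yf u s)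
        (Real.exp (3*t) * (3*1) * Yf u t + Real.exp (3*t) * v) t := hexp.mul hv
    have hGb : HasDerivAt (fun s => (3*β) * Gb W u s)
        ((3*β) * (Real.exp (3*t) * af W u t)) t :=
      (Gb_deriv hWmeas hW01 hbox hmeas hβ hderiv ht).const_mul (3*β)
    refine ⟨_, hmul.sub hGb, fun _ => ?_⟩
    have he : (0:ℝ) < Real.exp (3*t) := Real.exp_pos _
    have h2 : Real.exp (3*t) * v ≤ Real.exp (3*t) * (-3 * Yf u t + (3*β) * af W u t) :=
      mul_le_mul_of_nonneg_left hvle he.le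
    nlinarith [h2]
  have h := hanti self_mem_Ici hT hT
  have hGb1 : Gb W u 1 = 0 := intervalIntegral.integral_same
  simp only [hGb1, mul_zero, sub_zero] at h
  linarith

end

end main

/-- The kernel `W` is connected: `∫_{A × Aᶜ} W > 0` for every measurable `A ⊆ [0,1]`
with `0 < μ(A) < 1`. -/
def IsConnectedKernel (W : ℝ → ℝ → ℝ) : Prop :=
  ∀ A : Set ℝ, MeasurableSet A → A ⊆ Icc (0:ℝ) 1 →
    0 < volume A → volume A < 1 →
    0 < ∫ p in A ×ˢ (Icc (0:ℝ) 1 \ A), W p.1 p.2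

/-- `u` is a solution of the graphon SIS equation
`∂ₜ u(t,x) = −u(t,x) + β (1 − u(t,x)) (𝕎 u(t,·))(x)` on `[0,∞) × [0,1]`,
taking values in [0,1], measurable in `x` and differentiable in `t`. -/
def IsSISSolution (W : ℝ → ℝ → ℝ) (β : ℝ) (u : ℝ → ℝ → ℝ) : Prop :=
  (∀ t : ℝ, 0 ≤ t → ∀ x ∈ Icc (0:ℝ) 1, u t x ∈ Icc (0:ℝ) 1) ∧
  (∀ t : ℝ, 0 ≤ t → Measurable (u t)) ∧
  (∀ t : ℝ, 0 ≤ t → ∀ x ∈ Icc (0:ℝ) 1,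
    HasDerivAt (fun τ => u τ x)
      (-(u t x) + β * (1 - u t x) * ∫ y in Icc (0:ℝ) 1, W x y * u t y) t)

/-- subcritical graphon SIS. If `β ‖𝕎‖_{op,2} ≤ 1` then the epidemic dies
out: every solution tends pointwise to 0. -/
theorem stmt4 (W : ℝ → ℝ → ℝ) (β : ℝ)
    (hWmeas : Measurable (fun p : ℝ × ℝ => W p.1 p.2))
    (hWsymm : ∀ x ∈ Icc (0:ℝ) 1, ∀ y ∈ Icc (0:ℝ) 1, W x y = W y x)
    (hW01 : ∀ x ∈ Icc (0:ℝ) 1, ∀ y ∈ Icc (0:ℝ) 1, W x y ∈ Icc (0:ℝ) 1)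
    (hWconn : IsConnectedKernel W)
    (hβ : 0 < β)
    (hsub : β * opNorm2 W ≤ 1)
    (u : ℝ → ℝ → ℝ) (hu : IsSISSolution W β u) :
    ∀ x ∈ Icc (0:ℝ) 1, Tendsto (fun t => u t x) atTop (nhds 0) := by
  obtain ⟨hbox, hmeas, hderiv0⟩ := hu
  have hderiv : ∀ t : ℝ, 0 ≤ t → ∀ x ∈ Icc (0:ℝ) 1,
      HasDerivAt (fun τ => u τ x) (Dv W β u t x) t := hderiv0
  -- Step A : Yf u → 0
  have hbdd : BddAbove (Ga W u '' Ici 1) := by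
    refine ⟨1/(2*β), ?_⟩
    rintro _ ⟨T, hT, rfl⟩
    exact Ga_le hWmeas hW01 hbox hmeas hβ hderiv hsub hT
  have hne : (Ga W u '' Ici 1).Nonempty := ⟨Ga W u 1, 1, self_mem_Ici, rfl⟩
  have htail : ∀ δ : ℝ, 0 < δ → ∃ R, 1 ≤ R ∧ ∀ T, R ≤ T → Ga W u T - Ga W u R ≤ δ := by
    intro δ hδ
    obtain ⟨g, ⟨R, hR, rfl⟩, hgt⟩ := exists_lt_of_lt_csSup hne
      (show sSup (Ga W u '' Ici 1) - δ < sSup (Ga W u '' Ici 1) by linarith)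
    refine ⟨R, hR, fun T hT => ?_⟩
    have h1 : Ga W u T ≤ sSup (Ga W u '' Ici 1) := le_csSup hbdd ⟨T, le_trans hR hT, rfl⟩
    linarith
  have hYto : Tendsto (Yf u) atTop (nhds 0) := by
    refine Metric.tendsto_nhds.2 fun ε hε => ?_
    obtain ⟨R, hR1, hRtail⟩ := htail (ε/(12*β)) (by positivity)
    set C0 : ℝ := Real.exp (3*1) * Yf u 1 + (3*β) * (Real.exp (3*R) * (1/(2*β))) with hC0
    have hkey : ∀ T, R ≤ T → Yf u T ≤ C0 * Real.exp (-(3*T)) + ε/4 := by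
      intro T hT
      have hT1 : (1:ℝ) ≤ T := le_trans hR1 hT
      have hYb := Y_bound hWmeas hW01 hbox hmeas hβ hderiv hT1
      have hGb := Gb_bound hWmeas hW01 hbox hmeas hβ hderiv hR1 hT
      have hGaR := Ga_le hWmeas hW01 hbox hmeas hβ hderiv hsub hR1
      have htl := hRtail T hT
      have hexpT : (0:ℝ) < Real.exp (3*T) := Real.exp_pos _
      have hexpR : (0:ℝ) < Real.exp (3*R) := Real.exp_pos _
      have h1 : Real.exp (3*T) * Yf u T ≤ C0 + Real.exp (3*T) * (ε/4) := by
        have e1 : (3*β) * (ε/(12*β)) = ε/4 := by field_simp; ring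
        have hs1 : Real.exp (3*R) * Ga W u R ≤ Real.exp (3*R) * (1/(2*β)) :=
          mul_le_mul_of_nonneg_left hGaR hexpR.le
        have hs2 : Real.exp (3*T) * (Ga W u T - Ga W u R) ≤ Real.exp (3*T) * (ε/(12*β)) :=
          mul_le_mul_of_nonneg_left htl hexpT.le
        have h2 : Gb W u T ≤ Real.exp (3*R) * (1/(2*β)) + Real.exp (3*T) * (ε/(12*β)) := by
          linarith
        calc Real.exp (3*T) * Yf u T
            ≤ Real.exp (3*1) * Yf u 1 + (3*β) * Gb W u T := hYb
          _ ≤ Real.exp (3*1) * Yf u 1 + (3*β) * (Real.exp (3*R) * (1/(2*β))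
                + Real.exp (3*T) * (ε/(12*β))) := by nlinarith [h2]
          _ = C0 + Real.exp (3*T) * ((3*β) * (ε/(12*β))) := by rw [hC0]; ring
          _ = C0 + Real.exp (3*T) * (ε/4) := by rw [e1]
      have hinv : Real.exp (-(3*T)) * Real.exp (3*T) = 1 := by
        rw [← Real.exp_add]; simp
      have hmul := mul_le_mul_of_nonneg_left h1 (Real.exp_pos (-(3*T))).le
      calc Yf u T = Real.exp (-(3*T)) * Real.exp (3*T) * Yf u T := by rw [hinv, one_mul]
        _ = Real.exp (-(3*T)) * (Real.exp (3*T) * Yf u T) := by ring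
        _ ≤ Real.exp (-(3*T)) * (C0 + Real.exp (3*T) * (ε/4)) := hmul
        _ = C0 * Real.exp (-(3*T)) + (Real.exp (-(3*T)) * Real.exp (3*T)) * (ε/4) := by ring
        _ = C0 * Real.exp (-(3*T)) + ε/4 := by rw [hinv, one_mul]
    have hdecay : Tendsto (fun T : ℝ => C0 * Real.exp (-(3*T))) atTop (nhds 0) := by
      have h1 : Tendsto (fun T : ℝ => 3*T) atTop atTop :=
        Tendsto.const_mul_atTop (by norm_num) tendsto_id
      have h2 := Real.tendsto_exp_neg_atTop_nhds_zero.comp h1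
      have h3 := h2.const_mul C0
      simp only [mul_zero] at h3
      refine h3.congr fun T => ?_
      simp [Function.comp]
    have hev := hdecay.eventually_lt_const (show (0:ℝ) < ε/2 by linarith)
    filter_upwards [hev, eventually_ge_atTop R, eventually_ge_atTop (0:ℝ)] with T h1 h2 h3
    rw [Real.dist_eq, sub_zero, abs_of_nonneg (Yf_nonneg hbox h3)]
    have := hkey T h2
    linarith
  -- Step B : Ef u → 0
  have hEto : Tendsto (Ef u) atTop (nhds 0) := by
    refine Metric.tendsto_nhds.2 fun ε hε => ?_
    have hδ : (0:ℝ) < ε/2 := by linarith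
    have hbound : ∀ t, 0 ≤ t → Ef u t ≤ ε/2 + Yf u t / (ε/2)^2 := by
      intro t ht
      have hint3 : Integrable (fun x => u t x ^ 3 / (ε/2)^2) μ01 :=
        (int_upow hWmeas hW01 hbox hmeas hβ hderiv ht 3).div_const _
      have hint : Integrable (fun x => ε/2 + u t x ^ 3 / (ε/2)^2) μ01 :=
        (integrable_const _).add hint3
      have hmono : Ef u t ≤ ∫ x in Icc (0:ℝ) 1, (ε/2 + u t x ^ 3 / (ε/2)^2) := by
        refine setInt_mono hint (hmeas t ht).aestronglyMeasurable
          (fun x hx => (hbox t ht x hx).1) (fun x hx => ?_)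
        have h := hbox t ht x hx
        have hδ2 : (0:ℝ) < (ε/2)^2 := by positivity
        rw [← sub_nonneg]
        have e : ε/2 + u t x ^3/(ε/2)^2 - u t x
            = ((ε/2)*(ε/2)^2 + u t x^3 - u t x*(ε/2)^2)/(ε/2)^2 := by
          field_simp
        rw [e]
        apply div_nonneg _ hδ2.le
        nlinarith [mul_nonneg (sq_nonneg (u t x - ε/2))
          (by linarith [h.1] : (0:ℝ) ≤ u t x + ε/2),
          mul_nonneg (mul_nonneg h.1 h.1) hδ.le]
      have hdiv : (∫ x in Icc (0:ℝ) 1, u t x ^ 3 / (ε/2)^2)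
          = (∫ x in Icc (0:ℝ) 1, u t x ^ 3) / (ε/2)^2 := by
        simp only [div_eq_mul_inv]
        rw [integral_mul_const]
      have hcalc : (∫ x in Icc (0:ℝ) 1, (ε/2 + u t x ^ 3 / (ε/2)^2))
          = ε/2 + Yf u t / (ε/2)^2 := by
        rw [integral_add (integrable_const _) hint3, int_const01, hdiv]
        rfl
      rw [hcalc] at hmono
      exact hmono
    have hYev := hYto.eventually_lt_const (show (0:ℝ) < (ε/4)*(ε/2)^2 by positivity)
    filter_upwards [hYev, eventually_ge_atTop (0:ℝ)] with t h1 h2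
    rw [Real.dist_eq, sub_zero, abs_of_nonneg (Ef_nonneg hbox h2)]
    have hb := hbound t h2
    have hq : Yf u t / (ε/2)^2 < ε/4 := by
      rw [div_lt_iff₀ (by positivity)]
      nlinarith [h1]
    linarith
  -- Step C : pointwise convergence
  intro x hx
  refine Metric.tendsto_nhds.2 fun ε hε => ?_
  have hβE : Tendsto (fun t => β * Ef u t) atTop (nhds 0) := by
    have h := hEto.const_mul β
    simpa using h
  have hev1 := hβE.eventually_lt_const (show (0:ℝ) < ε/8 by linarith)
  obtain ⟨T₀, hT₀⟩ := eventually_atTop.1 (hev1.and (eventually_ge_atTop (1:ℝ)))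
  have hT₀1 : (1:ℝ) ≤ T₀ := (hT₀ T₀ le_rfl).2
  have hT₀0 : (0:ℝ) < T₀ := lt_of_lt_of_le one_pos hT₀1
  have hanti : AntitoneOn (fun t => Real.exp t * u t x - (ε/4) * Real.exp t) (Ici T₀) := by
    refine antitoneOn_of_hasDerivAt_nonpos hT₀0 fun t ht => ?_
    have hd1 : HasDerivAt (fun τ => Real.exp τ * u τ x)
        (Real.exp t * u t x + Real.exp t * Dv W β u t x) t :=
      (Real.hasDerivAt_exp t).mul (hderiv t ht.le x hx)
    have hd2 : HasDerivAt (fun τ => (ε/4) * Real.exp τ) ((ε/4) * Real.exp t) t :=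
      (Real.hasDerivAt_exp t).const_mul (ε/4)
    refine ⟨_, hd1.sub hd2, fun hct => ?_⟩
    have h1 := hbox t ht.le x hx
    have h2 := wu_mem hWmeas hW01 hbox hmeas hβ ht.le hx
    have h3 := wu_le_Ef hWmeas hW01 hbox hmeas hβ ht.le hx
    have h4 := (hT₀ t hct).1
    have he : (0:ℝ) < Real.exp t := Real.exp_pos t
    have h5 : u t x + Dv W β u t x ≤ ε/8 := by
      rw [Dv]
      have h6 : β * (1 - u t x) * Wuf W u t x ≤ β * Wuf W u t x := by
        have := mul_le_mul_of_nonneg_right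
          (mul_le_mul_of_nonneg_left (by linarith [h1.1] : 1 - u t x ≤ 1) hβ.le) h2.1
        simpa using this
      have h7 : β * Wuf W u t x ≤ β * Ef u t := mul_le_mul_of_nonneg_left h3 hβ.le
      linarith
    nlinarith [mul_le_mul_of_nonneg_left h5 he.le]
  have hdec : Tendsto (fun t : ℝ => Real.exp (T₀ - t)) atTop (nhds 0) := by
    have h := Real.tendsto_exp_neg_atTop_nhds_zero.const_mul (Real.exp T₀)
    rw [mul_zero] at h
    refine h.congr fun t => ?_
    rw [← Real.exp_add]
    congr 1
  filter_upwards [eventually_ge_atTop T₀, hdec.eventually_lt_const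
    (show (0:ℝ) < ε/2 by linarith)] with t h1t h2t
  have ht0 : (0:ℝ) ≤ t := le_trans hT₀0.le h1t
  have he : (0:ℝ) < Real.exp t := Real.exp_pos t
  rw [Real.dist_eq, sub_zero, abs_of_nonneg (hbox t ht0 x hx).1]
  have hh := hanti self_mem_Ici h1t h1t
  have hu1 := hbox T₀ hT₀0.le x hx
  have hb1 : Real.exp T₀ * u T₀ x ≤ Real.exp T₀ * 1 :=
    mul_le_mul_of_nonneg_left hu1.2 (Real.exp_pos T₀).le
  have hb2 : (0:ℝ) ≤ (ε/4) * Real.exp T₀ := by positivity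
  have h2 : Real.exp t * u t x ≤ Real.exp T₀ + (ε/4) * Real.exp t := by
    nlinarith [hh]
  have heq : Real.exp T₀ = Real.exp (T₀ - t) * Real.exp t := by
    rw [← Real.exp_add]; congr 1; ring
  have hA : Real.exp T₀ < (ε/2) * Real.exp t := by
    rw [heq]
    exact mul_lt_mul_of_pos_right h2t he
  have hlt : Real.exp t * u t x < Real.exp t * ε := by
    nlinarith [mul_pos (show (0:ℝ) < ε/4 by linarith) he]
  exact (mul_lt_mul_iff_right₀ he).1 hlt
end

section
/- Fix λ > 0. For each N > λ, consider the Erdős–Rényi graph G(N, λ/N): independent Bernoulli(λ/N) edge indicators a_{ij} for 1 ≤ i < j ≤ N, symmetrized, with degrees d^N(i) = ∑_{j} a_{ij}, and define the random step function ξ^N(x) = ∑_{i=1}^N 1{d^N(i) = 0} · 1_{I_i^N}(x) on [0,1]. Then sup_{0 ≤ a ≤ b ≤ 1} | ∫_a^b ( ξ^N(x) − e^{−λ} ) dx | → 0 in probability as N → ∞. -/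
open MeasureTheory Set Filter

/-- The index `k ∈ {1,…,N}` of the cell `I_k^N = [(k−1)/N, k/N)` (last cell closed)
containing `x ∈ [0,1]`. -/
noncomputable def cellIdx (N : ℕ) (x : ℝ) : ℕ :=
  min N (⌊x * N⌋.toNat + 1)

/-- The degree of vertex `i` in the graph on vertices `{1,…,N}` with edge
indicators `a`. -/
def degree (N : ℕ) (a : ℕ → ℕ → Bool) (i : ℕ) : ℕ :=
  ∑ j ∈ Finset.Icc 1 N, if a i j = true then 1 else 0

set_option maxHeartbeats 1000000


lemma cellIdx_eq {N i : ℕ} (hi1 : 1 ≤ i) (hiN : i ≤ N) {x : ℝ}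
    (h1 : ((i:ℝ) - 1)/N ≤ x) (h2 : x < (i:ℝ)/N) : cellIdx N x = i := by
  have hN : (0:ℝ) < N := by exact_mod_cast Nat.lt_of_lt_of_le (by omega) hiN
  have hl : ((i:ℝ) - 1) ≤ x * N := by
    calc ((i:ℝ) - 1) = ((i:ℝ)-1)/N * N := by field_simp
      _ ≤ x * N := mul_le_mul_of_nonneg_right h1 hN.le
  have hu : x * N < i := by
    calc x * N < (i:ℝ)/N * N := mul_lt_mul_of_pos_right h2 hN
      _ = i := by field_simp
  have hf : ⌊x * N⌋ = (i:ℤ) - 1 := by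
    rw [Int.floor_eq_iff] <;> push_cast <;> constructor <;> linarith
  unfold cellIdx
  rw [hf]
  omega


lemma intervalIntegrable_of_bdd {g : ℝ → ℝ} (hg : Measurable g) (C : ℝ)
    (h : ∀ x, |g x| ≤ C) (u v : ℝ) : IntervalIntegrable g volume u v := by
  rw [intervalIntegrable_iff]
  exact (integrableOn_const (C := C) measure_Ioc_lt_top.ne ENNReal.coe_ne_top).mono'
    hg.aestronglyMeasurable (ae_of_all _ fun x => by simpa using h x)

lemma measurable_cellIdx (N : ℕ) : Measurable (fun x : ℝ => cellIdx N x) := by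
  unfold cellIdx
  have h1 : Measurable fun x : ℝ => ⌊x * (N:ℝ)⌋ := (measurable_id.mul_const _).floor
  exact (measurable_from_top (f := fun z : ℤ => min N (z.toNat + 1))).comp h1

lemma integral_cell {N : ℕ} (f : ℕ → ℝ) {i : ℕ} (hi1 : 1 ≤ i) (hiN : i ≤ N) :
    ∫ x in (((i:ℝ)-1)/N)..((i:ℝ)/N), f (cellIdx N x) = f i / N := by
  have hN : (0:ℝ) < N := by exact_mod_cast Nat.lt_of_lt_of_le (by omega) hiN
  have hab : ((i:ℝ)-1)/N ≤ (i:ℝ)/N := by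
    exact (div_le_div_iff_of_pos_right hN).mpr (by linarith)
  have hcong : ∫ x in (((i:ℝ)-1)/N)..((i:ℝ)/N), f (cellIdx N x)
      = ∫ _x in (((i:ℝ)-1)/N)..((i:ℝ)/N), f i := by
    apply intervalIntegral.integral_congr_ae
    have hsub : {x : ℝ | ¬ (x ∈ Set.uIoc (((i:ℝ)-1)/N) ((i:ℝ)/N) → f (cellIdx N x) = f i)}
        ⊆ {(i:ℝ)/N} := by
      intro x hx
      simp only [mem_setOf_eq] at hx
      rw [Classical.not_imp] at hx
      obtain ⟨hmem, hne⟩ := hx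
      rw [uIoc_of_le hab, mem_Ioc] at hmem
      by_contra hxb
      have hxlt : x < (i:ℝ)/N := lt_of_le_of_ne hmem.2 (by simpa using hxb)
      exact hne (by rw [cellIdx_eq hi1 hiN (le_of_lt hmem.1) hxlt])
    rw [ae_iff]
    exact measure_mono_null hsub (measure_singleton _)
  rw [hcong, intervalIntegral.integral_const, smul_eq_mul]
  have : (i:ℝ)/N - ((i:ℝ)-1)/N = 1/N := by field_simp; ring
  rw [this]; ring

lemma integral_partial {N : ℕ} (f : ℕ → ℝ) (C : ℝ) (hC : ∀ i, |f i| ≤ C)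
    {k : ℕ} (hk : k ≤ N) (hN : 1 ≤ N) :
    ∫ x in (0:ℝ)..((k:ℝ)/N), f (cellIdx N x) = (∑ i ∈ Finset.Icc 1 k, f i) / N := by
  have hint : ∀ i : ℕ, i < k → IntervalIntegrable (fun x => f (cellIdx N x)) volume
      ((i:ℝ)/N) (((i:ℝ)+1)/N) := fun i _ =>
    intervalIntegrable_of_bdd ((measurable_from_top).comp (measurable_cellIdx N)) C
      (fun x => hC _) _ _
  have := intervalIntegral.sum_integral_adjacent_intervals
    (a := fun i : ℕ => (i:ℝ)/N) (n := k) (by intro i hi; push_cast; exact hint i hi)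
  simp only [Nat.cast_zero, zero_div] at this
  rw [← this]
  have heach : ∀ i ∈ Finset.range k,
      ∫ x in ((i:ℝ)/N)..(((i+1:ℕ):ℝ)/N), f (cellIdx N x) = f (i+1) / N := by
    intro i hi
    have hi1 : 1 ≤ i + 1 := by omega
    have hiN : i + 1 ≤ N := by
      have := Finset.mem_range.mp hi; omega
    have := integral_cell f hi1 hiN
    push_cast at this ⊢
    convert this using 2
    ring
  rw [Finset.sum_congr rfl heach]
  have h2 : ∑ i ∈ Finset.Icc 1 k, f i = ∑ i ∈ Finset.range k, f (i+1) := by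
    rw [← Finset.Ico_add_one_right_eq_Icc, Finset.sum_Ico_eq_sum_range]
    simp [add_comm]
  rw [h2, Finset.sum_div]

lemma tendsto_qN {lam : ℝ} (hlam : 0 < lam) :
    Tendsto (fun N : ℕ => (1 - lam/(N:ℝ))^(N-1)) atTop (nhds (Real.exp (-lam))) := by
  have h2 : Tendsto (fun n : ℕ => 1 - lam/(n:ℝ)) atTop (nhds 1) := by
    have := tendsto_const_div_atTop_nhds_zero_nat lam
    have h := tendsto_const_nhds (α := ℕ) (f := atTop) (x := (1:ℝ)) |>.sub this
    simpa using h
  have h1 : Tendsto (fun n : ℕ => (1 - lam/(n:ℝ))^n) atTop (nhds (Real.exp (-lam))) := by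
    have h := Real.tendsto_one_add_div_pow_exp (-lam)
    apply h.congr
    intro n
    rw [neg_div, ← sub_eq_add_neg]
  have h3 := h1.div h2 one_ne_zero
  rw [div_one] at h3
  apply h3.congr'
  filter_upwards [eventually_gt_atTop ⌈lam⌉₊] with n hn
  have hlt : lam < (n:ℝ) := lt_of_le_of_lt (Nat.le_ceil lam) (by exact_mod_cast hn)
  have hnpos : (0:ℝ) < n := lt_trans hlam hlt
  have hne : 1 - lam/(n:ℝ) ≠ 0 := by
    have : lam/(n:ℝ) < 1 := (div_lt_one hnpos).mpr hlt
    linarith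
  have hn1 : n - 1 + 1 = n := by
    have : 1 ≤ n := by omega
    omega
  simp only [Pi.div_apply]
  set q := 1 - lam/(n:ℝ) with hq
  rw [← hn1, pow_succ, mul_div_assoc, div_self hne, mul_one]
  congr 1

lemma cheb {Ωt : Type} [MeasurableSpace Ωt] (μ : Measure Ωt) [IsProbabilityMeasure μ]
    {f : Ωt → ℝ} (hmeas : Measurable f) {B v δ : ℝ} (hB : ∀ ω, |f ω| ≤ B)
    (hv : ∫ ω, (f ω)^2 ∂μ ≤ v) (hδ : 0 < δ) :
    μ {ω | δ ≤ |f ω|} ≤ ENNReal.ofReal (v / δ^2) := by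
  have hint : Integrable (fun ω => (f ω)^2) μ := by
    refine ⟨(hmeas.pow_const 2).aestronglyMeasurable,
      HasFiniteIntegral.of_bounded (C := B^2) (ae_of_all _ fun ω => ?_)⟩
    rw [Real.norm_eq_abs, abs_of_nonneg (sq_nonneg _), ← sq_abs]
    exact pow_le_pow_left₀ (abs_nonneg _) (hB ω) 2
  have hμsub : {ω | δ ≤ |f ω|} ⊆ {ω | δ^2 ≤ (f ω)^2} := fun ω h => by
    have h2 : δ^2 ≤ |f ω|^2 := pow_le_pow_left₀ hδ.le h 2
    simpa [sq_abs] using h2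
  have hmar := mul_meas_ge_le_integral_of_nonneg (μ := μ) (f := fun ω => (f ω)^2)
      (ae_of_all _ fun ω => sq_nonneg _) hint (δ^2)
  have hfin : μ {ω | δ^2 ≤ (f ω)^2} ≠ ⊤ := measure_ne_top _ _
  have h2 : (μ {ω | δ^2 ≤ (f ω)^2}).toReal ≤ v/δ^2 := by
    rw [le_div_iff₀ (by positivity)]
    have : ∫ ω, (f ω)^2 ∂μ ≤ v := hv
    calc (μ {ω | δ^2 ≤ (f ω)^2}).toReal * δ^2 = δ^2 * (μ {ω | δ^2 ≤ (f ω)^2}).toReal := by ring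
      _ ≤ ∫ ω, (f ω)^2 ∂μ := hmar
      _ ≤ v := hv
  calc μ {ω | δ ≤ |f ω|} ≤ μ {ω | δ^2 ≤ (f ω)^2} := measure_mono hμsub
    _ ≤ ENNReal.ofReal (v/δ^2) := by
        rw [← ENNReal.ofReal_toReal hfin]
        exact ENNReal.ofReal_le_ofReal h2


/-- pairs (min i j, max i j) for j ranging over [1,N]\{i} -/
def edgPairs (N i : ℕ) : Finset (ℕ × ℕ) :=
  ((Finset.Icc 1 N).erase i).image (fun j => (min i j, max i j))

def edgSet (N i : ℕ) : Finset {p : ℕ × ℕ // 1 ≤ p.1 ∧ p.1 < p.2 ∧ p.2 ≤ N} :=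
  (edgPairs N i).subtype _

lemma mem_edgPairs {N i : ℕ} (hi1 : 1 ≤ i) (hiN : i ≤ N) {p : ℕ × ℕ} :
    p ∈ edgPairs N i ↔ (1 ≤ p.1 ∧ p.1 < p.2 ∧ p.2 ≤ N) ∧ (p.1 = i ∨ p.2 = i) := by
  unfold edgPairs
  simp only [Finset.mem_image, Finset.mem_erase, Finset.mem_Icc]
  constructor
  · rintro ⟨j, ⟨hji, hj1, hjN⟩, rfl⟩
    simp only
    omega
  · rintro ⟨⟨h1, h2, h3⟩, h4 | h4⟩
    · exact ⟨p.2, by omega, by simp only [Prod.ext_iff]; omega⟩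
    · exact ⟨p.1, by omega, by simp only [Prod.ext_iff]; omega⟩

lemma mem_edgSet {N i : ℕ} (hi1 : 1 ≤ i) (hiN : i ≤ N)
    {e : {p : ℕ × ℕ // 1 ≤ p.1 ∧ p.1 < p.2 ∧ p.2 ≤ N}} :
    e ∈ edgSet N i ↔ (e.val.1 = i ∨ e.val.2 = i) := by
  unfold edgSet
  rw [Finset.mem_subtype, mem_edgPairs hi1 hiN]
  have := e.2
  tauto

lemma card_edgSet {N i : ℕ} (hi1 : 1 ≤ i) (hiN : i ≤ N) :
    (edgSet N i).card = N - 1 := by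
  unfold edgSet
  rw [Finset.card_subtype]
  have hfil : (edgPairs N i).filter (fun p => 1 ≤ p.1 ∧ p.1 < p.2 ∧ p.2 ≤ N) = edgPairs N i := by
    apply Finset.filter_true_of_mem
    intro p hp
    exact ((mem_edgPairs hi1 hiN).mp hp).1
  rw [hfil]
  unfold edgPairs
  have hinj : Set.InjOn (fun j => (min i j, max i j)) ↑((Finset.Icc 1 N).erase i) := by
    intro j₁ h₁ j₂ h₂ heq
    simp only [Finset.coe_erase, Set.mem_diff, Finset.coe_Icc, Set.mem_Icc,
      Set.mem_singleton_iff] at h₁ h₂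
    simp only [Prod.ext_iff] at heq
    omega
  rw [Finset.card_image_of_injOn hinj,
    Finset.card_erase_of_mem (by simp [Finset.mem_Icc]; omega), Nat.card_Icc]
  omega

lemma degree_eq_zero_iff {N : ℕ} {a : ℕ → ℕ → Bool} (hsymm : ∀ i j, a i j = a j i)
    (hdiag : ∀ i, a i i = false) {i : ℕ} (hi1 : 1 ≤ i) (hiN : i ≤ N) :
    degree N a i = 0 ↔ ∀ e ∈ edgSet N i, a e.val.1 e.val.2 = false := by
  unfold degree
  rw [Finset.sum_eq_zero_iff]
  constructor
  · intro h e he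
    rw [mem_edgSet hi1 hiN] at he
    have hb := e.2
    rcases he with h1 | h2
    · have := h e.val.2 (by simp [Finset.mem_Icc]; omega)
      rw [← h1] at this
      simpa using this
    · have := h e.val.1 (by simp [Finset.mem_Icc]; omega)
      rw [← h2] at this
      rw [hsymm]
      simpa using this
  · intro h j hj
    simp only [Finset.mem_Icc] at hj
    by_cases hij : j = i
    · simp [hij, hdiag]
    · rcases Nat.lt_or_ge i j with hlt | hge
      · have he : (⟨(i, j), by omega⟩ : {p : ℕ × ℕ // 1 ≤ p.1 ∧ p.1 < p.2 ∧ p.2 ≤ N})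
            ∈ edgSet N i := by rw [mem_edgSet hi1 hiN]; left; rfl
        have := h _ he
        simp only at this
        simp [this]
      · have hlt2 : j < i := by omega
        have he : (⟨(j, i), by omega⟩ : {p : ℕ × ℕ // 1 ≤ p.1 ∧ p.1 < p.2 ∧ p.2 ≤ N})
            ∈ edgSet N i := by rw [mem_edgSet hi1 hiN]; right; rfl
        have := h _ he
        simp only at this
        rw [hsymm]
        simp [this]

lemma meas_biInter_false {Ωt : Type} [MeasurableSpace Ωt] {μ : Measure Ωt}
    [IsProbabilityMeasure μ]
    {N : ℕ} {a : Ωt → ℕ → ℕ → Bool} {lam : ℝ} (hlam : 0 < lam) (hlamN : lam < N)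
    (hameas : ∀ i j, Measurable (fun ω => a ω i j))
    (hindep : ProbabilityTheory.iIndepFun
      (fun (p : {p : ℕ × ℕ // 1 ≤ p.1 ∧ p.1 < p.2 ∧ p.2 ≤ N}) (ω : Ωt) => a ω p.1.1 p.1.2) μ)
    (hmarg : ∀ i j : ℕ, 1 ≤ i → i < j → j ≤ N →
      μ {ω | a ω i j = true} = ENNReal.ofReal (lam / N))
    (T : Finset {p : ℕ × ℕ // 1 ≤ p.1 ∧ p.1 < p.2 ∧ p.2 ≤ N}) :
    μ (⋂ e ∈ T, {ω | a ω e.val.1 e.val.2 = false})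
      = ENNReal.ofReal ((1 - lam/N)^T.card) := by
  have hNpos : (0:ℝ) < N := lt_trans hlam hlamN
  have key := hindep.measure_inter_preimage_eq_mul (μ := μ) T
    (sets := fun _ => {false}) (fun _ _ => trivial)
  have hpre : ∀ e : {p : ℕ × ℕ // 1 ≤ p.1 ∧ p.1 < p.2 ∧ p.2 ≤ N},
      (fun ω => a ω e.val.1 e.val.2) ⁻¹' {false} = {ω | a ω e.val.1 e.val.2 = false} := by
    intro e; ext ω; simp
  have hsingle : ∀ e : {p : ℕ × ℕ // 1 ≤ p.1 ∧ p.1 < p.2 ∧ p.2 ≤ N},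
      μ {ω | a ω e.val.1 e.val.2 = false} = ENNReal.ofReal (1 - lam/N) := by
    intro e
    have hcompl : {ω | a ω e.val.1 e.val.2 = false} = {ω | a ω e.val.1 e.val.2 = true}ᶜ := by
      ext ω; simp
    have hms : MeasurableSet {ω | a ω e.val.1 e.val.2 = true} := by
      have := (hameas e.val.1 e.val.2) (measurableSet_singleton true)
      exact this
    rw [hcompl, measure_compl hms (measure_ne_top _ _),
      hmarg e.val.1 e.val.2 e.2.1 e.2.2.1 e.2.2.2, measure_univ]
    rw [← ENNReal.ofReal_one, ← ENNReal.ofReal_sub _ (by positivity)]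
  have hd1 : lam / N ≤ 1 := by
    rw [div_le_one hNpos]; linarith
  have h0 : μ (⋂ e ∈ T, {ω | a ω e.val.1 e.val.2 = false})
      = ∏ e ∈ T, μ {ω | a ω e.val.1 e.val.2 = false} := by
    simp only [← hpre]
    exact key
  rw [h0, Finset.prod_congr rfl (fun e _ => hsingle e), Finset.prod_const,
    ← ENNReal.ofReal_pow (by linarith)]

lemma prob_deg_zero {Ωt : Type} [MeasurableSpace Ωt] {μ : Measure Ωt}
    [IsProbabilityMeasure μ]
    {N : ℕ} {a : Ωt → ℕ → ℕ → Bool} {lam : ℝ} (hlam : 0 < lam) (hlamN : lam < N)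
    (hameas : ∀ i j, Measurable (fun ω => a ω i j))
    (hsymm : ∀ ω i j, a ω i j = a ω j i) (hdiag : ∀ ω i, a ω i i = false)
    (hindep : ProbabilityTheory.iIndepFun
      (fun (p : {p : ℕ × ℕ // 1 ≤ p.1 ∧ p.1 < p.2 ∧ p.2 ≤ N}) (ω : Ωt) => a ω p.1.1 p.1.2) μ)
    (hmarg : ∀ i j : ℕ, 1 ≤ i → i < j → j ≤ N →
      μ {ω | a ω i j = true} = ENNReal.ofReal (lam / N))
    {i : ℕ} (hi1 : 1 ≤ i) (hiN : i ≤ N) :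
    μ {ω | degree N (a ω) i = 0} = ENNReal.ofReal ((1 - lam/N)^(N-1)) := by
  have hset : {ω | degree N (a ω) i = 0}
      = ⋂ e ∈ edgSet N i, {ω | a ω e.val.1 e.val.2 = false} := by
    ext ω
    simp only [mem_setOf_eq, Set.mem_iInter]
    rw [degree_eq_zero_iff (fun u v => hsymm ω u v) (fun u => hdiag ω u) hi1 hiN]
  rw [hset, meas_biInter_false hlam hlamN hameas hindep hmarg, card_edgSet hi1 hiN]

lemma edgSet_inter {N i j : ℕ} (hi1 : 1 ≤ i) (hij : i < j) (hjN : j ≤ N) :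
    edgSet N i ∩ edgSet N j
      = {(⟨(i,j), by omega⟩ : {p : ℕ × ℕ // 1 ≤ p.1 ∧ p.1 < p.2 ∧ p.2 ≤ N})} := by
  ext e
  rw [Finset.mem_inter, mem_edgSet hi1 (by omega), mem_edgSet (by omega) hjN,
    Finset.mem_singleton, Subtype.ext_iff, Prod.ext_iff]
  have := e.2
  show _ ↔ ((e : ℕ × ℕ).1 = i ∧ (e : ℕ × ℕ).2 = j)
  constructor
  · rintro ⟨h1 | h1, h2 | h2⟩ <;> omega
  · rintro ⟨h1, h2⟩; omega

lemma prob_deg_zero_pair {Ωt : Type} [MeasurableSpace Ωt] {μ : Measure Ωt}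
    [IsProbabilityMeasure μ]
    {N : ℕ} {a : Ωt → ℕ → ℕ → Bool} {lam : ℝ} (hlam : 0 < lam) (hlamN : lam < N)
    (hameas : ∀ i j, Measurable (fun ω => a ω i j))
    (hsymm : ∀ ω i j, a ω i j = a ω j i) (hdiag : ∀ ω i, a ω i i = false)
    (hindep : ProbabilityTheory.iIndepFun
      (fun (p : {p : ℕ × ℕ // 1 ≤ p.1 ∧ p.1 < p.2 ∧ p.2 ≤ N}) (ω : Ωt) => a ω p.1.1 p.1.2) μ)
    (hmarg : ∀ i j : ℕ, 1 ≤ i → i < j → j ≤ N →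
      μ {ω | a ω i j = true} = ENNReal.ofReal (lam / N))
    {i j : ℕ} (hi1 : 1 ≤ i) (hij : i < j) (hjN : j ≤ N) :
    μ ({ω | degree N (a ω) i = 0} ∩ {ω | degree N (a ω) j = 0})
      = ENNReal.ofReal ((1 - lam/N)^(2*N-3)) := by
  have hcard : (edgSet N i ∪ edgSet N j).card = 2*N - 3 := by
    have h1 := Finset.card_union_add_card_inter (edgSet N i) (edgSet N j)
    rw [edgSet_inter hi1 hij hjN, Finset.card_singleton,
      card_edgSet hi1 (by omega), card_edgSet (by omega) hjN] at h1
    omega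
  have hset : {ω | degree N (a ω) i = 0} ∩ {ω | degree N (a ω) j = 0}
      = ⋂ e ∈ edgSet N i ∪ edgSet N j, {ω | a ω e.val.1 e.val.2 = false} := by
    ext ω
    simp only [Set.mem_inter_iff, mem_setOf_eq, Set.mem_iInter, Finset.mem_union]
    rw [degree_eq_zero_iff (fun u v => hsymm ω u v) (fun u => hdiag ω u) hi1 (by omega),
      degree_eq_zero_iff (fun u v => hsymm ω u v) (fun u => hdiag ω u) (by omega) hjN]
    constructor
    · rintro ⟨h1, h2⟩ e he
      rcases he with he | he
      exacts [h1 e he, h2 e he]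
    · intro h
      exact ⟨fun e he => h e (Or.inl he), fun e he => h e (Or.inr he)⟩
  rw [hset, meas_biInter_false hlam hlamN hameas hindep hmarg, hcard]

lemma integrable_bdd {Ωt : Type} [MeasurableSpace Ωt] {μ : Measure Ωt} [IsFiniteMeasure μ]
    {f : Ωt → ℝ} (hf : Measurable f) (C : ℝ) (hb : ∀ ω, |f ω| ≤ C) : Integrable f μ :=
  ⟨hf.aestronglyMeasurable,
    HasFiniteIntegral.of_bounded (C := C) (ae_of_all _ fun ω => by
      simpa [Real.norm_eq_abs] using hb ω)⟩

lemma moment_bound {Ωt : Type} [MeasurableSpace Ωt] {μ : Measure Ωt}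
    [IsProbabilityMeasure μ]
    {N : ℕ} {a : Ωt → ℕ → ℕ → Bool} {lam : ℝ} (hlam : 0 < lam) (hlamN : lam < N)
    (hameas : ∀ i j, Measurable (fun ω => a ω i j))
    (hsymm : ∀ ω i j, a ω i j = a ω j i) (hdiag : ∀ ω i, a ω i i = false)
    (hindep : ProbabilityTheory.iIndepFun
      (fun (p : {p : ℕ × ℕ // 1 ≤ p.1 ∧ p.1 < p.2 ∧ p.2 ≤ N}) (ω : Ωt) => a ω p.1.1 p.1.2) μ)
    (hmarg : ∀ i j : ℕ, 1 ≤ i → i < j → j ≤ N →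
      μ {ω | a ω i j = true} = ENNReal.ofReal (lam / N))
    {k : ℕ} (hk : k ≤ N) :
    ∫ ω, (∑ i ∈ Finset.Icc 1 k,
        ((if degree N (a ω) i = 0 then (1:ℝ) else 0) - (1-lam/(N:ℝ))^(N-1)))^2 ∂μ
      ≤ N * (1 + lam) := by
  have hNpos : (0:ℝ) < N := lt_trans hlam hlamN
  set p : ℝ := lam/(N:ℝ) with hp
  have hp0 : 0 ≤ p := by positivity
  have hp1 : p ≤ 1 := by rw [hp, div_le_one hNpos]; linarith
  set X : ℕ → Ωt → ℝ := fun i ω => if degree N (a ω) i = 0 then 1 else 0 with hX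
  set q : ℝ := (1 - p)^(N-1) with hq
  have hq0 : 0 ≤ q := pow_nonneg (by linarith) _
  have hq1 : q ≤ 1 := pow_le_one₀ (by linarith) (by linarith)
  have hDset : ∀ i, MeasurableSet {ω | degree N (a ω) i = 0} := by
    intro i
    have hdm : Measurable fun ω => degree N (a ω) i := by
      unfold degree
      apply Finset.measurable_sum
      intro j _
      have hms : MeasurableSet {ω | a ω i j = true} :=
        (hameas i j) (measurableSet_singleton true)
      exact Measurable.ite hms measurable_const measurable_const
    exact hdm (measurableSet_singleton 0)
  have hXmeas : ∀ i, Measurable (X i) := by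
    intro i
    exact Measurable.ite (hDset i) measurable_const measurable_const
  have hXbd : ∀ i ω, |X i ω| ≤ 1 := by
    intro i ω; rw [hX]; dsimp only; split <;> simp
  have hXint : ∀ i, Integrable (X i) μ := fun i => integrable_bdd (hXmeas i) 1 (hXbd i)
  have hXXint : ∀ i j, Integrable (fun ω => X i ω * X j ω) μ := fun i j =>
    integrable_bdd ((hXmeas i).mul (hXmeas j)) 1 (fun ω => by
      rw [abs_mul]
      calc |X i ω| * |X j ω| ≤ 1 * 1 := by
            apply mul_le_mul (hXbd i ω) (hXbd j ω) (abs_nonneg _) zero_le_one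
        _ = 1 := by ring)
  have hXsq : ∀ i ω, X i ω * X i ω = X i ω := by
    intro i ω; rw [hX]; dsimp only; split <;> simp
  have hE1 : ∀ i, 1 ≤ i → i ≤ N → ∫ ω, X i ω ∂μ = q := by
    intro i hi1 hiN
    have hind : X i = Set.indicator {ω | degree N (a ω) i = 0} (fun _ => (1:ℝ)) := by
      funext ω
      rw [hX]; dsimp only
      rw [Set.indicator_apply]
      rfl
    rw [hind]
    rw [MeasureTheory.integral_indicator (hDset i)]
    simp only [integral_const, Measure.real, Measure.restrict_apply_univ, smul_eq_mul, mul_one]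
    rw [prob_deg_zero hlam hlamN hameas hsymm hdiag hindep hmarg hi1 hiN,
      ENNReal.toReal_ofReal (pow_nonneg (by linarith) _)]
  have hE2 : ∀ i j, 1 ≤ i → i < j → j ≤ N →
      ∫ ω, X i ω * X j ω ∂μ = (1-p)^(2*N-3) := by
    intro i j hi1 hij hjN
    have hind : (fun ω => X i ω * X j ω) = Set.indicator
        ({ω | degree N (a ω) i = 0} ∩ {ω | degree N (a ω) j = 0}) (fun _ => (1:ℝ)) := by
      funext ω
      rw [hX]; dsimp only
      rw [Set.indicator_apply]
      by_cases h1 : degree N (a ω) i = 0 <;> by_cases h2 : degree N (a ω) j = 0 <;>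
        simp [h1, h2, Set.mem_inter_iff]
    rw [hind, MeasureTheory.integral_indicator ((hDset i).inter (hDset j))]
    simp only [integral_const, Measure.real, Measure.restrict_apply_univ, smul_eq_mul, mul_one]
    rw [prob_deg_zero_pair hlam hlamN hameas hsymm hdiag hindep hmarg hi1 hij hjN,
      ENNReal.toReal_ofReal (pow_nonneg (by linarith) _)]
  -- covariance formula
  have hcovform : ∀ i j : ℕ, ∫ ω, (X i ω - q) * (X j ω - q) ∂μ
      = (∫ ω, X i ω * X j ω ∂μ) - q * (∫ ω, X j ω ∂μ) - q * (∫ ω, X i ω ∂μ) + q * q := by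
    intro i j
    have hfun : (fun ω => (X i ω - q) * (X j ω - q))
        = fun ω => X i ω * X j ω - q * X j ω - q * X i ω + q * q := by
      funext ω; ring
    have hA : Integrable (fun ω => X i ω * X j ω - q * X j ω) μ :=
      (hXXint i j).sub ((hXint j).const_mul q)
    have hB : Integrable (fun ω => X i ω * X j ω - q * X j ω - q * X i ω) μ :=
      hA.sub ((hXint i).const_mul q)
    calc ∫ ω, (X i ω - q) * (X j ω - q) ∂μ
        = ∫ ω, (X i ω * X j ω - q * X j ω - q * X i ω) + q * q ∂μ := by rw [hfun]
      _ = (∫ ω, X i ω * X j ω - q * X j ω - q * X i ω ∂μ) + ∫ _ω, q * q ∂μ :=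
          integral_add hB (integrable_const _)
      _ = ((∫ ω, X i ω * X j ω - q * X j ω ∂μ) - ∫ ω, q * X i ω ∂μ) + ∫ _ω, q * q ∂μ := by
          rw [integral_sub hA ((hXint i).const_mul q)]
      _ = (((∫ ω, X i ω * X j ω ∂μ) - ∫ ω, q * X j ω ∂μ) - ∫ ω, q * X i ω ∂μ)
            + ∫ _ω, q * q ∂μ := by
          rw [integral_sub (hXXint i j) ((hXint j).const_mul q)]
      _ = (∫ ω, X i ω * X j ω ∂μ) - q * (∫ ω, X j ω ∂μ) - q * (∫ ω, X i ω ∂μ) + q * q := by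
          rw [MeasureTheory.integral_const_mul, MeasureTheory.integral_const_mul]
          simp [measure_univ]
  have hterm : ∀ i ∈ Finset.Icc 1 k, ∀ j ∈ Finset.Icc 1 k,
      ∫ ω, (X i ω - q) * (X j ω - q) ∂μ ≤ (if i = j then (1:ℝ) else 0) + p := by
    intro i hi j hj
    simp only [Finset.mem_Icc] at hi hj
    rcases eq_or_ne i j with rfl | hne
    · rw [hcovform]
      have hXX : ∫ ω, X i ω * X i ω ∂μ = q := by
        rw [show (fun ω => X i ω * X i ω) = X i from funext fun ω => hXsq i ω]
        exact hE1 i hi.1 (le_trans hi.2 hk)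
      rw [hXX, hE1 i hi.1 (le_trans hi.2 hk)]
      rw [if_pos rfl]
      nlinarith [hq0, hq1, hp0]
    · have hN2 : 2 ≤ N := by omega
      have hq2 : ∫ ω, X i ω * X j ω ∂μ = (1-p)^(2*N-3) := by
        rcases Nat.lt_or_ge i j with hij | hij
        · exact hE2 i j hi.1 hij (le_trans hj.2 hk)
        · have hji : j < i := by omega
          rw [show (fun ω => X i ω * X j ω) = (fun ω => X j ω * X i ω) from
            funext fun ω => by ring]
          exact hE2 j i hj.1 hji (le_trans hi.2 hk)
      rw [hcovform, hq2, hE1 i hi.1 (le_trans hi.2 hk), hE1 j hj.1 (le_trans hj.2 hk)]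
      simp only [if_neg hne]
      have hqq : q * q = (1-p)^(2*N-3) * (1-p) := by
        rw [hq, ← pow_add]
        rw [← pow_succ]
        congr 1
        omega
      have hple : (1-p)^(2*N-3) ≤ 1 := pow_le_one₀ (by linarith) (by linarith)
      have hpge : 0 ≤ (1-p)^(2*N-3) := pow_nonneg (by linarith) _
      nlinarith
  -- expand the square of the sum
  have hYint : ∀ i j : ℕ, Integrable (fun ω => (X i ω - q) * (X j ω - q)) μ := by
    intro i j
    apply integrable_bdd (((hXmeas i).sub measurable_const).mul ((hXmeas j).sub measurable_const))
      ((1+q)*(1+q))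
    intro ω
    show |(X i ω - q) * (X j ω - q)| ≤ (1+q)*(1+q)
    rw [abs_mul]
    have h1 : |X i ω - q| ≤ 1 + q := by
      have := hXbd i ω
      rw [abs_le] at this ⊢
      constructor <;> linarith
    have h2 : |X j ω - q| ≤ 1 + q := by
      have := hXbd j ω
      rw [abs_le] at this ⊢
      constructor <;> linarith
    exact mul_le_mul h1 h2 (abs_nonneg _) (by linarith)
  have hexpand : ∫ ω, (∑ i ∈ Finset.Icc 1 k, (X i ω - q))^2 ∂μ
      = ∑ i ∈ Finset.Icc 1 k, ∑ j ∈ Finset.Icc 1 k,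
          ∫ ω, (X i ω - q) * (X j ω - q) ∂μ := by
    have h1 : ∀ ω, (∑ i ∈ Finset.Icc 1 k, (X i ω - q))^2
        = ∑ i ∈ Finset.Icc 1 k, ∑ j ∈ Finset.Icc 1 k, (X i ω - q) * (X j ω - q) := by
      intro ω
      rw [pow_two, Finset.sum_mul_sum]
    simp only [h1]
    rw [MeasureTheory.integral_finset_sum _ (fun i _ =>
      integrable_finset_sum _ (fun j _ => hYint i j))]
    exact Finset.sum_congr rfl fun i _ =>
      MeasureTheory.integral_finset_sum _ (fun j _ => hYint i j)
  rw [hexpand]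
  calc ∑ i ∈ Finset.Icc 1 k, ∑ j ∈ Finset.Icc 1 k, ∫ ω, (X i ω - q) * (X j ω - q) ∂μ
      ≤ ∑ i ∈ Finset.Icc 1 k, ∑ j ∈ Finset.Icc 1 k, ((if i = j then (1:ℝ) else 0) + p) := by
        apply Finset.sum_le_sum
        intro i hi
        apply Finset.sum_le_sum
        intro j hj
        exact hterm i hi j hj
    _ = ∑ i ∈ Finset.Icc 1 k, (1 + k * p) := by
        apply Finset.sum_congr rfl
        intro i hi
        rw [Finset.sum_add_distrib, Finset.sum_const, Finset.sum_ite_eq (Finset.Icc 1 k) i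
          (fun _ => (1:ℝ)), if_pos hi, Nat.card_Icc]
        simp [nsmul_eq_mul, Nat.add_sub_cancel]
    _ = k * (1 + k * p) := by rw [Finset.sum_const]; simp [Nat.card_Icc]; ring
    _ ≤ N * (1 + lam) := by
        have hkN : (k:ℝ) ≤ N := by exact_mod_cast hk
        have hk0 : (0:ℝ) ≤ k := by positivity
        have hkp : (k:ℝ) * p ≤ lam := by
          rw [hp]
          have h1 : (k:ℝ) * (lam/N) ≤ (N:ℝ) * (lam/N) :=
            mul_le_mul_of_nonneg_right hkN (by positivity)
          have h2 : (N:ℝ) * (lam/N) = lam := by field_simp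
          linarith
        have h3 : (k:ℝ) * ((k:ℝ) * p) ≤ (k:ℝ) * lam := mul_le_mul_of_nonneg_left hkp hk0
        have h4 : (k:ℝ) * lam ≤ (N:ℝ) * lam := mul_le_mul_of_nonneg_right hkN hlam.le
        nlinarith


lemma measurable_degSet {Ωt : Type} [MeasurableSpace Ωt] {N : ℕ} {a : Ωt → ℕ → ℕ → Bool}
    (hameas : ∀ i j, Measurable (fun ω => a ω i j)) (i : ℕ) :
    MeasurableSet {ω | degree N (a ω) i = 0} := by
  have hdm : Measurable fun ω => degree N (a ω) i := by
    unfold degree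
    apply Finset.measurable_sum
    intro j _
    have hms : MeasurableSet {ω | a ω i j = true} :=
      (hameas i j) (measurableSet_singleton true)
    exact Measurable.ite hms measurable_const measurable_const
  exact hdm (measurableSet_singleton 0)

lemma det_incl {n M : ℕ} (hn1 : 1 ≤ n) (hM0 : 0 < M) {ε c qn : ℝ} (hε : 0 < ε)
    (hc0 : 0 < c) (hc1 : c < 1) (hq8 : |qn - c| ≤ ε/8)
    (h1n : 1/(n:ℝ) ≤ ε/8) (hMε : 1/(M:ℝ) ≤ ε/8)
    (d : ℕ → ℕ) {P Q : ℝ} (hP0 : 0 ≤ P) (hPQ : P ≤ Q) (hQ1 : Q ≤ 1)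
    (hgt : ε < |∫ x in P..Q, ((if d (cellIdx n x) = 0 then (1:ℝ) else 0) - c)|) :
    ∃ j ≤ M, ε/8 ≤ |(∑ i ∈ Finset.Icc 1 ((j*n)/M),
      ((if d i = 0 then (1:ℝ) else 0) - qn)) / (n:ℝ)| := by
  have hnr : (0:ℝ) < n := by exact_mod_cast hn1
  have hMr : (0:ℝ) < M := by exact_mod_cast hM0
  set f : ℕ → ℝ := fun i => if d i = 0 then 1 else 0 with hf
  have hfbd : ∀ i, |f i| ≤ 1 := by
    intro i; rw [hf]; dsimp only; split <;> simp
  have hfrange : ∀ i, 0 ≤ f i ∧ f i ≤ 1 := by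
    intro i; rw [hf]; dsimp only; split <;> norm_num
  set g : ℝ → ℝ := fun x => f (cellIdx n x) - c with hg
  have hgmeas : Measurable g :=
    ((measurable_from_top (f := f)).comp (measurable_cellIdx n)).sub measurable_const
  have hgbd : ∀ x, |g x| ≤ 1 := by
    intro x
    rw [hg]; dsimp only
    have := hfrange (cellIdx n x)
    rw [abs_le]
    constructor <;> linarith [this.1, this.2]
  have hgint : ∀ u v : ℝ, IntervalIntegrable g volume u v := fun u v =>
    intervalIntegrable_of_bdd hgmeas 1 hgbd u v
  set F : ℝ → ℝ := fun t => ∫ x in (0:ℝ)..t, g x with hF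
  have hFsub : ∀ p q : ℝ, (∫ x in p..q, g x) = F q - F p := by
    intro p q
    rw [hF]
    exact (intervalIntegral.integral_interval_sub_left (hgint 0 q) (hgint 0 p)).symm
  have hFlip : ∀ s t : ℝ, |F t - F s| ≤ |t - s| := by
    intro s t
    rw [← hFsub s t]
    have h := intervalIntegral.norm_integral_le_of_norm_le_const (C := 1)
      (f := g) (a := s) (b := t) (fun x _ => by simpa [Real.norm_eq_abs] using hgbd x)
    rw [Real.norm_eq_abs] at h
    linarith [h]
  have hFval : ∀ k : ℕ, k ≤ n → F ((k:ℝ)/n)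
      = (∑ i ∈ Finset.Icc 1 k, f i)/n - ((k:ℝ)/n) * c := by
    intro k hk
    have hsplit : F ((k:ℝ)/n) = (∫ x in (0:ℝ)..((k:ℝ)/n), f (cellIdx n x))
        - ∫ _x in (0:ℝ)..((k:ℝ)/n), c := by
      rw [hF]
      exact intervalIntegral.integral_sub
        (intervalIntegrable_of_bdd ((measurable_from_top (f := f)).comp
          (measurable_cellIdx n)) 1 (fun x => hfbd _) _ _)
        (intervalIntegrable_const)
    rw [hsplit, integral_partial f 1 hfbd hk hn1, intervalIntegral.integral_const,
      smul_eq_mul]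
    ring
  rw [hFsub P Q] at hgt
  have hex : ∃ t, 0 ≤ t ∧ t ≤ 1 ∧ ε/2 < |F t| := by
    by_contra hcon
    push_neg at hcon
    have h1 := hcon P hP0 (le_trans hPQ hQ1)
    have h2 := hcon Q (le_trans hP0 hPQ) hQ1
    have h3 : |F Q - F P| ≤ |F Q| + |F P| := by
      calc |F Q - F P| = |F Q + -(F P)| := by ring_nf
        _ ≤ |F Q| + |-(F P)| := abs_add_le _ _
        _ = |F Q| + |F P| := by rw [abs_neg]
    linarith
  obtain ⟨t, ht0, ht1, htF⟩ := hex
  set j := ⌊t * M⌋₊ with hj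
  have hjM : j ≤ M := by
    calc j ≤ ⌊(M:ℝ)⌋₊ := Nat.floor_mono (by nlinarith)
      _ = M := Nat.floor_natCast M
  set k := (j * n)/M with hk
  have hkn : k ≤ n := by
    rw [hk]
    calc (j*n)/M ≤ (M*n)/M := Nat.div_le_div_right (Nat.mul_le_mul_right _ hjM)
      _ = n := Nat.mul_div_cancel_left n hM0
  have hjt : (j:ℝ)/M ≤ t := by
    rw [div_le_iff₀ hMr]
    exact Nat.floor_le (by positivity)
  have hjt2 : t - (j:ℝ)/M ≤ 1/M := by
    have h := Nat.lt_floor_add_one (t * M)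
    rw [sub_le_iff_le_add', ← add_div, le_div_iff₀ hMr]
    push_cast
    linarith
  have e1 : k * M ≤ j * n := by rw [hk]; exact Nat.div_mul_le_self _ _
  have e2 : j * n < k * M + M := by
    have h := Nat.div_add_mod (j*n) M
    have hm := Nat.mod_lt (j*n) hM0
    calc j*n = M*((j*n)/M) + (j*n)%M := h.symm
      _ < M*((j*n)/M) + M := Nat.add_lt_add_left hm _
      _ = k*M + M := by rw [hk, Nat.mul_comm]
  have er1 : (k:ℝ)*M ≤ (j:ℝ)*n := by exact_mod_cast e1
  have er2 : (j:ℝ)*n < (k:ℝ)*M + M := by exact_mod_cast e2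
  have hjk : |(j:ℝ)/M - (k:ℝ)/n| ≤ 1/n := by
    rw [abs_sub_le_iff]
    constructor
    · rw [div_sub_div _ _ hMr.ne' hnr.ne', div_le_div_iff₀ (by positivity) hnr]
      nlinarith
    · have hkj : (k:ℝ)/n ≤ (j:ℝ)/M := by
        rw [div_le_div_iff₀ hnr hMr]; nlinarith
      have hpos : (0:ℝ) < 1/n := by positivity
      linarith
  have hF1 : |F t - F ((j:ℝ)/M)| ≤ ε/8 := by
    refine le_trans (hFlip _ _) ?_
    rw [abs_of_nonneg (by linarith)]
    linarith
  have hF2 : |F ((j:ℝ)/M) - F ((k:ℝ)/n)| ≤ ε/8 := le_trans (hFlip _ _) (le_trans hjk h1n)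
  have hFk : ε/4 < |F ((k:ℝ)/n)| := by
    have hchain : |F t| ≤ |F t - F ((j:ℝ)/M)| + |F ((j:ℝ)/M) - F ((k:ℝ)/n)|
        + |F ((k:ℝ)/n)| := by
      calc |F t| = |(F t - F ((j:ℝ)/M)) + (F ((j:ℝ)/M) - F ((k:ℝ)/n)) + F ((k:ℝ)/n)| := by
            ring_nf
        _ ≤ _ := by
            refine le_trans (abs_add_le _ _) ?_
            have := abs_add_le (F t - F ((j:ℝ)/M)) (F ((j:ℝ)/M) - F ((k:ℝ)/n))
            linarith
    linarith
  refine ⟨j, hjM, ?_⟩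
  have hsum : (∑ i ∈ Finset.Icc 1 k, (f i - qn))
      = (∑ i ∈ Finset.Icc 1 k, f i) - (k:ℝ) * qn := by
    rw [Finset.sum_sub_distrib, Finset.sum_const, Nat.card_Icc]
    simp [nsmul_eq_mul, Nat.add_sub_cancel]
  have hkn1 : (k:ℝ)/n ≤ 1 := by
    rw [div_le_one hnr]; exact_mod_cast hkn
  have hkn0 : (0:ℝ) ≤ (k:ℝ)/n := by positivity
  have hEq : (∑ i ∈ Finset.Icc 1 k, (f i - qn))/(n:ℝ)
      = F ((k:ℝ)/n) + ((k:ℝ)/n)*(c - qn) := by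
    rw [hsum, hFval k hkn]
    field_simp
    ring
  show ε/8 ≤ |(∑ i ∈ Finset.Icc 1 k, (f i - qn)) / (n:ℝ)|
  rw [hEq]
  have habs : |((k:ℝ)/n)*(c - qn)| ≤ ε/8 := by
    rw [abs_mul, abs_of_nonneg hkn0]
    have h1 : |c - qn| ≤ ε/8 := by rw [abs_sub_comm]; exact hq8
    calc ((k:ℝ)/n)*|c - qn| ≤ 1 * |c - qn| :=
          mul_le_mul_of_nonneg_right hkn1 (abs_nonneg _)
      _ ≤ ε/8 := by linarith
  have htri : |F ((k:ℝ)/n)| ≤ |F ((k:ℝ)/n) + ((k:ℝ)/n)*(c - qn)| + |((k:ℝ)/n)*(c - qn)| := by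
    calc |F ((k:ℝ)/n)| = |(F ((k:ℝ)/n) + ((k:ℝ)/n)*(c - qn)) + -(((k:ℝ)/n)*(c - qn))| := by
          ring_nf
      _ ≤ _ := by
          refine le_trans (abs_add_le _ _) ?_
          rw [abs_neg]
  linarith

/-- in the sparse Erdős–Rényi graph `G(N, λ/N)`, the step function
indicating vertices of degree 0 converges in the interval norm, in probability, to the
constant `e^{−λ}`. -/
theorem stmt13 (lam : ℝ) (hlam : 0 < lam)
    (Ω : ℕ → Type) (mΩ : ∀ N, MeasurableSpace (Ω N))
    (μ : ∀ N, Measure (Ω N)) (hμ : ∀ N, IsProbabilityMeasure (μ N))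
    (a : ∀ N : ℕ, Ω N → ℕ → ℕ → Bool)
    (ha_meas : ∀ N i j, Measurable (fun ω => a N ω i j))
    (ha_symm : ∀ N ω i j, a N ω i j = a N ω j i)
    (ha_diag : ∀ N ω i, a N ω i i = false)
    (ha_indep : ∀ N : ℕ, ProbabilityTheory.iIndepFun
      (fun (p : {p : ℕ × ℕ // 1 ≤ p.1 ∧ p.1 < p.2 ∧ p.2 ≤ N}) (ω : Ω N) =>
        a N ω p.1.1 p.1.2) (μ N))
    (ha_marg : ∀ N : ℕ, ∀ i j : ℕ, lam < N → 1 ≤ i → i < j → j ≤ N →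
      μ N {ω | a N ω i j = true} = ENNReal.ofReal (lam / N)) :
    ∀ ε : ℝ, 0 < ε →
      Tendsto (fun N : ℕ =>
        μ N {ω | ∃ p q : ℝ, 0 ≤ p ∧ p ≤ q ∧ q ≤ 1 ∧
          ε < |∫ x in p..q,
            ((if degree N (a N ω) (cellIdx N x) = 0 then (1:ℝ) else 0)
              - Real.exp (-lam))|}) atTop (nhds 0) := by
  intro ε hε
  have hc0 : (0:ℝ) < Real.exp (-lam) := Real.exp_pos _
  have hc1 : Real.exp (-lam) < 1 := by
    rw [show (1:ℝ) = Real.exp 0 from (Real.exp_zero).symm]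
    exact Real.exp_lt_exp.mpr (by linarith)
  set M : ℕ := ⌈8/ε⌉₊ + 1 with hM
  have hM0 : 0 < M := Nat.succ_pos _
  have hMr : (0:ℝ) < M := by exact_mod_cast hM0
  have hMε : 1/(M:ℝ) ≤ ε/8 := by
    have h8M : 8/ε ≤ (M:ℝ) := by
      refine le_trans (Nat.le_ceil _) ?_
      exact_mod_cast Nat.le_succ _
    rw [div_le_div_iff₀ hMr (by norm_num : (0:ℝ) < 8)]
    have h := (div_le_iff₀ hε).mp h8M
    linarith
  rw [ENNReal.tendsto_nhds_zero]
  intro δ hδ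
  obtain ⟨r, hr0, hrδ⟩ : ∃ r : ℝ, 0 < r ∧ ENNReal.ofReal r ≤ δ := by
    rcases eq_or_ne δ ⊤ with rfl | hne
    · exact ⟨1, one_pos, le_top⟩
    · exact ⟨δ.toReal, ENNReal.toReal_pos hδ.ne' hne,
        le_of_eq (ENNReal.ofReal_toReal hne)⟩
  have hqconv := tendsto_qN hlam
  rw [Metric.tendsto_atTop] at hqconv
  obtain ⟨N₁, hN₁⟩ := hqconv (ε/8) (by positivity)
  have hbconv : Tendsto (fun n : ℕ => ((M:ℝ)+1) * (((1+lam)/(n:ℝ)) / (ε/8)^2))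
      atTop (nhds 0) := by
    have h0 := tendsto_const_div_atTop_nhds_zero_nat (((M:ℝ)+1) * (1+lam) / (ε/8)^2)
    apply h0.congr
    intro n
    rcases eq_or_ne (n:ℝ) 0 with h | h
    · simp [h]
    · field_simp
  rw [Metric.tendsto_atTop] at hbconv
  obtain ⟨N₂, hN₂⟩ := hbconv r hr0
  filter_upwards [eventually_ge_atTop N₁, eventually_ge_atTop N₂,
    eventually_gt_atTop ⌈lam⌉₊, eventually_gt_atTop ⌈8/ε⌉₊, eventually_ge_atTop 1]
    with n hn1 hn2 hnlam hnε hn1'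
  have hlamN : lam < (n:ℝ) := lt_of_le_of_lt (Nat.le_ceil lam) (by exact_mod_cast hnlam)
  have hnr : (0:ℝ) < n := lt_trans hlam hlamN
  have h1n : 1/(n:ℝ) ≤ ε/8 := by
    have h8n : 8/ε ≤ (n:ℝ) := le_trans (Nat.le_ceil _) (by exact_mod_cast hnε.le)
    rw [div_le_div_iff₀ hnr (by norm_num : (0:ℝ) < 8)]
    have h := (div_le_iff₀ hε).mp h8n
    linarith
  set qn : ℝ := (1 - lam/(n:ℝ))^(n-1) with hqn
  have hq8 : |qn - Real.exp (-lam)| ≤ ε/8 := by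
    have h := hN₁ n hn1
    rw [Real.dist_eq] at h
    exact h.le
  haveI := hμ n
  have hp0 : (0:ℝ) ≤ lam/(n:ℝ) := by positivity
  have hp1 : lam/(n:ℝ) ≤ 1 := by rw [div_le_one hnr]; linarith
  have hqn0 : 0 ≤ qn := pow_nonneg (by linarith) _
  have hqn1 : qn ≤ 1 := pow_le_one₀ (by linarith) (by linarith)
  set Ab : ℕ → Set (Ω n) := fun j => {ω | ε/8 ≤ |(∑ i ∈ Finset.Icc 1 ((j*n)/M),
    ((if degree n (a n ω) i = 0 then (1:ℝ) else 0) - qn)) / (n:ℝ)|} with hAb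
  have hincl : {ω | ∃ p q : ℝ, 0 ≤ p ∧ p ≤ q ∧ q ≤ 1 ∧
      ε < |∫ x in p..q, ((if degree n (a n ω) (cellIdx n x) = 0 then (1:ℝ) else 0)
        - Real.exp (-lam))|} ⊆ ⋃ j ∈ Finset.range (M+1), Ab j := by
    intro ω hω
    obtain ⟨P, Q, hP0, hPQ, hQ1, hgt⟩ := hω
    obtain ⟨j, hjM, hj⟩ := det_incl hn1' hM0 hε hc0 hc1 hq8 h1n hMε
      (degree n (a n ω)) hP0 hPQ hQ1 hgt
    exact Set.mem_biUnion (Finset.mem_range.mpr (by omega)) hj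
  have hAbound : ∀ j ≤ M, μ n (Ab j)
      ≤ ENNReal.ofReal (((1+lam)/(n:ℝ)) / (ε/8)^2) := by
    intro j hjM
    set k := (j*n)/M with hk
    have hkn : k ≤ n := by
      rw [hk]
      calc (j*n)/M ≤ (M*n)/M := Nat.div_le_div_right (Nat.mul_le_mul_right _ hjM)
        _ = n := Nat.mul_div_cancel_left n hM0
    have hXmeas : ∀ i : ℕ, Measurable (fun ω =>
        (if degree n (a n ω) i = 0 then (1:ℝ) else 0) - qn) := fun i =>
      (Measurable.ite (measurable_degSet (ha_meas n) i) measurable_const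
        measurable_const).sub measurable_const
    have hfmeas : Measurable (fun ω => (∑ i ∈ Finset.Icc 1 k,
        ((if degree n (a n ω) i = 0 then (1:ℝ) else 0) - qn)) / (n:ℝ)) :=
      (Finset.measurable_sum _ (fun i _ => hXmeas i)).div_const _
    have hfB : ∀ ω, |(∑ i ∈ Finset.Icc 1 k,
        ((if degree n (a n ω) i = 0 then (1:ℝ) else 0) - qn)) / (n:ℝ)| ≤ 2*k/n := by
      intro ω
      rw [abs_div, abs_of_pos hnr]
      gcongr
      calc |∑ i ∈ Finset.Icc 1 k, ((if degree n (a n ω) i = 0 then (1:ℝ) else 0) - qn)|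
          ≤ ∑ i ∈ Finset.Icc 1 k, |(if degree n (a n ω) i = 0 then (1:ℝ) else 0) - qn| :=
            Finset.abs_sum_le_sum_abs _ _
        _ ≤ ∑ _i ∈ Finset.Icc 1 k, 2 := by
            apply Finset.sum_le_sum
            intro i _
            have h1 : |(if degree n (a n ω) i = 0 then (1:ℝ) else 0)| ≤ 1 := by
              split <;> simp
            have h2 : |(if degree n (a n ω) i = 0 then (1:ℝ) else 0) - qn|
                ≤ |(if degree n (a n ω) i = 0 then (1:ℝ) else 0)| + |qn| := abs_sub _ _
            rw [abs_of_nonneg hqn0] at h2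
            linarith
        _ = 2*k := by rw [Finset.sum_const, Nat.card_Icc]; simp [nsmul_eq_mul,
              Nat.add_sub_cancel]; ring
    have hmom := moment_bound hlam hlamN (ha_meas n) (ha_symm n) (ha_diag n)
      (ha_indep n) (fun i j h1 h2 h3 => ha_marg n i j hlamN h1 h2 h3) hkn
    have hv : ∫ ω, ((∑ i ∈ Finset.Icc 1 k,
        ((if degree n (a n ω) i = 0 then (1:ℝ) else 0) - qn)) / (n:ℝ))^2 ∂(μ n)
        ≤ (1+lam)/(n:ℝ) := by
      simp only [div_pow]
      rw [integral_div]
      calc (∫ ω, (∑ i ∈ Finset.Icc 1 k,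
            ((if degree n (a n ω) i = 0 then (1:ℝ) else 0) - qn))^2 ∂(μ n)) / (n:ℝ)^2
          ≤ ((n:ℝ) * (1+lam)) / (n:ℝ)^2 := by
            gcongr
        _ = (1+lam)/(n:ℝ) := by
            rw [pow_two]
            rw [mul_div_mul_left _ _ hnr.ne']
    exact cheb (μ n) hfmeas hfB hv (by positivity)
  calc μ n {ω | ∃ p q : ℝ, 0 ≤ p ∧ p ≤ q ∧ q ≤ 1 ∧
        ε < |∫ x in p..q, ((if degree n (a n ω) (cellIdx n x) = 0 then (1:ℝ) else 0)
          - Real.exp (-lam))|}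
      ≤ μ n (⋃ j ∈ Finset.range (M+1), Ab j) := measure_mono hincl
    _ ≤ ∑ j ∈ Finset.range (M+1), μ n (Ab j) := measure_biUnion_finset_le _ _
    _ ≤ ∑ _j ∈ Finset.range (M+1), ENNReal.ofReal (((1+lam)/(n:ℝ)) / (ε/8)^2) := by
        apply Finset.sum_le_sum
        intro j hj
        exact hAbound j (by simpa using Nat.lt_succ_iff.mp (Finset.mem_range.mp hj))
    _ = (M+1 : ℕ) * ENNReal.ofReal (((1+lam)/(n:ℝ)) / (ε/8)^2) := by
        rw [Finset.sum_const, Finset.card_range, nsmul_eq_mul]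
    _ = ENNReal.ofReal (((M:ℝ)+1) * (((1+lam)/(n:ℝ)) / (ε/8)^2)) := by
        rw [ENNReal.ofReal_mul (by positivity)]
        congr 1
        rw [← ENNReal.ofReal_natCast (M+1)]
        congr 1
        push_cast
        ring
    _ ≤ ENNReal.ofReal r := by
        apply ENNReal.ofReal_le_ofReal
        have h := hN₂ n hn2
        rw [Real.dist_eq, sub_zero] at h
        exact le_trans (le_abs_self _) h.le
    _ ≤ δ := hrδ
end
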